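/- arXiv:1003.3471 — 7 statements merged into one kernel-verified Lean document; each statement's English description precedes it below -/
import Mathlib

section
/- Let I be a monomial ideal of S = K[x_1,…,x_n]. Then sdepth(S/I) ≤ sdepth(S/√I). -/
open MvPolynomial

variable {K : Type*} [Field K]

/-- The Stanley space `u·K[Z]`: the `K`-linear span of all `u * v` where `v` is a
monomial in the variables of `Z`. -/
noncomputable def stanleySpace {n : ℕ} (u : MvPolynomial (Fin n) K) (Z : Finset (Fin n)) :
    Submodule K (MvPolynomial (Fin n) K) :=
  Submodule.span K { w | ∃ d : Fin n →₀ ℕ, ↑d.support ⊆ (Z : Set (Fin n)) ∧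
    w = u * MvPolynomial.monomial d 1 }

/-- `u` is a monomial. -/
def IsMonomial {n : ℕ} (u : MvPolynomial (Fin n) K) : Prop :=
  ∃ d : Fin n →₀ ℕ, u = MvPolynomial.monomial d 1

/-- A monomial ideal: an ideal generated by monomials. -/
def IsMonomialIdeal {n : ℕ} (I : Ideal (MvPolynomial (Fin n) K)) : Prop :=
  ∃ G : Set (MvPolynomial (Fin n) K), (∀ u ∈ G, IsMonomial u) ∧ I = Ideal.span G

/-- `(u i, Z i)` is a Stanley decomposition of the ideal `I`:
`I = ⊕ᵢ uᵢ K[Zᵢ]` as `K`-vector spaces, with each `uᵢ` a monomial. -/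
def IsStanleyDecomp {n : ℕ} (I : Ideal (MvPolynomial (Fin n) K)) {s : ℕ}
    (u : Fin s → MvPolynomial (Fin n) K) (Z : Fin s → Finset (Fin n)) : Prop :=
  (∀ i, IsMonomial (u i)) ∧
  iSupIndep (fun i => stanleySpace (u i) (Z i)) ∧
  (⨆ i, stanleySpace (u i) (Z i)) = Submodule.restrictScalars K I

/-- The Stanley depth of a monomial ideal: the largest `k` such that there is a
Stanley decomposition all of whose Stanley spaces have dimension at least `k`. -/
noncomputable def sdepth {n : ℕ} (I : Ideal (MvPolynomial (Fin n) K)) : ℕ :=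
  sSup { k | ∃ (s : ℕ) (u : Fin s → MvPolynomial (Fin n) K) (Z : Fin s → Finset (Fin n)),
    IsStanleyDecomp I u Z ∧ ∀ i, k ≤ (Z i).card }

/-- `(u i, Z i)` is a Stanley decomposition of the quotient `J/I`:
`J/I = ⊕ᵢ u̅ᵢ K[Zᵢ]` as `K`-vector spaces, with each `uᵢ` a monomial of `J` and each space
`uᵢK[Zᵢ]` meeting `I` trivially (so that its image in `S/I` is a free `K[Zᵢ]`-module). -/
def IsStanleyDecompQuot {n : ℕ} (I J : Ideal (MvPolynomial (Fin n) K)) {s : ℕ}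
    (u : Fin s → MvPolynomial (Fin n) K) (Z : Fin s → Finset (Fin n)) : Prop :=
  (∀ i, IsMonomial (u i)) ∧ (∀ i, u i ∈ J) ∧
  (∀ i, Disjoint (stanleySpace (u i) (Z i)) (Submodule.restrictScalars K I)) ∧
  iSupIndep (fun i =>
    (stanleySpace (u i) (Z i)).map (Ideal.Quotient.mkₐ K I).toLinearMap) ∧
  (⨆ i, (stanleySpace (u i) (Z i)).map (Ideal.Quotient.mkₐ K I).toLinearMap)
    = (Submodule.restrictScalars K J).map (Ideal.Quotient.mkₐ K I).toLinearMap

/-- The Stanley depth of the quotient `J/I` of two monomial ideals `I ⊆ J`. -/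
noncomputable def sdepthQuot {n : ℕ} (I J : Ideal (MvPolynomial (Fin n) K)) : ℕ :=
  sSup { k | ∃ (s : ℕ) (u : Fin s → MvPolynomial (Fin n) K) (Z : Fin s → Finset (Fin n)),
    IsStanleyDecompQuot I J u Z ∧ ∀ i, k ≤ (Z i).card }
namespace SdepthAux

variable {n : ℕ}

/-- The normalized monomial `x^a`. -/
noncomputable def Mn (K : Type*) [Field K] {n : ℕ} (a : Fin n →₀ ℕ) :
    MvPolynomial (Fin n) K := monomial a 1

variable {K : Type*} [Field K]

lemma Mn_ne_zero (a : Fin n →₀ ℕ) : Mn K a ≠ 0 := by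
  simp [Mn, monomial_eq_zero]

lemma Mn_mul (a b : Fin n →₀ ℕ) : Mn K a * Mn K b = Mn K (a + b) := by
  simp [Mn, monomial_mul]

lemma Mn_pow (a : Fin n →₀ ℕ) (t : ℕ) : Mn K a ^ t = Mn K (t • a) := by
  simp [Mn, monomial_pow]

lemma Mn_support (a : Fin n →₀ ℕ) : (Mn K a).support = {a} := by
  classical
  rw [Mn, support_monomial, if_neg one_ne_zero]

lemma Mn_coeff (a b : Fin n →₀ ℕ) : coeff b (Mn K a) = if a = b then 1 else 0 := by
  rw [Mn, coeff_monomial]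

lemma Mn_mem_of_le {J : Ideal (MvPolynomial (Fin n) K)} {a b : Fin n →₀ ℕ}
    (h : Mn K a ∈ J) (hab : a ≤ b) : Mn K b ∈ J := by
  have : Mn K b = Mn K (b - a) * Mn K a := by
    rw [Mn_mul, tsub_add_cancel_of_le hab]
  rw [this]
  exact Ideal.mul_mem_left _ _ h

lemma monomial_eq_C_mul_Mn (a : Fin n →₀ ℕ) (c : K) :
    monomial a c = C c * Mn K a := by
  rw [Mn, C_mul_monomial, mul_one]

/-- every monomial of an element of a monomial ideal lies in the ideal -/
lemma monomialIdeal_support_mem {I : Ideal (MvPolynomial (Fin n) K)} (hI : IsMonomialIdeal I)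
    {f : MvPolynomial (Fin n) K} (hf : f ∈ I) {a : Fin n →₀ ℕ} (ha : a ∈ f.support) :
    Mn K a ∈ I := by
  classical
  obtain ⟨G, hG, rfl⟩ := hI
  refine Submodule.span_induction
    (p := fun x _ => ∀ a ∈ x.support, Mn K a ∈ Ideal.span G) ?_ ?_ ?_ ?_ hf a ha
  · intro x hx a ha
    obtain ⟨d, rfl⟩ := hG x hx
    rw [support_monomial, if_neg one_ne_zero, Finset.mem_singleton] at ha
    subst ha
    exact Ideal.subset_span hx
  · intro a ha
    simp at ha
  · intro x y _ _ hx hy a ha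
    rcases Finset.mem_union.1 (MvPolynomial.support_add ha) with h | h
    · exact hx _ h
    · exact hy _ h
  · intro r x _ hx a ha
    rw [smul_eq_mul] at ha
    have := MvPolynomial.support_mul r x ha
    obtain ⟨c, hc, d, hd, rfl⟩ := Finset.mem_add.1 this
    have : Mn K (c + d) = Mn K c * Mn K d := (Mn_mul c d).symm
    rw [this]
    exact Ideal.mul_mem_left _ _ (hx _ hd)

/-- any polynomial whose monomials lie in an ideal lies in the ideal -/
lemma mem_of_support_mem {J : Ideal (MvPolynomial (Fin n) K)}
    {f : MvPolynomial (Fin n) K} (h : ∀ a ∈ f.support, Mn K a ∈ J) : f ∈ J := by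
  rw [f.as_sum]
  refine Submodule.sum_mem _ fun a ha => ?_
  rw [monomial_eq_C_mul_Mn]
  exact Ideal.mul_mem_left _ _ (h a ha)

section Lex

lemma coeff_mul_of_max {f g : MvPolynomial (Fin n) K} {a b : Fin n →₀ ℕ}
    (hfa : ∀ c ∈ f.support, toLex c ≤ toLex a) (hgb : ∀ d ∈ g.support, toLex d ≤ toLex b) :
    coeff (a + b) (f * g) = coeff a f * coeff b g := by
  classical
  rw [MvPolynomial.coeff_mul]
  refine Finset.sum_eq_single (a, b) ?_ ?_
  · rintro ⟨c, d⟩ hcd hne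
    rw [Finset.HasAntidiagonal.mem_antidiagonal] at hcd
    by_cases hc : c ∈ f.support
    · by_cases hd : d ∈ g.support
      · exfalso
        rcases eq_or_lt_of_le (hfa c hc) with hca | hca
        · have hc' : c = a := toLex.injective hca
          subst hc'
          have hdb : d = b := add_left_cancel hcd
          exact hne (by simp [hdb])
        · have h1 : toLex (c + d) < toLex (a + b) := by
            rw [toLex_add, toLex_add]
            calc toLex c + toLex d < toLex a + toLex d := add_lt_add_of_lt_of_le hca le_rfl
              _ ≤ toLex a + toLex b := add_le_add le_rfl (hgb d hd)
          rw [hcd] at h1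
          exact lt_irrefl _ h1
      · rw [MvPolynomial.notMem_support_iff.1 hd, mul_zero]
    · rw [MvPolynomial.notMem_support_iff.1 hc, zero_mul]
  · intro h
    exfalso
    apply h
    rw [Finset.HasAntidiagonal.mem_antidiagonal]

lemma pow_max {f : MvPolynomial (Fin n) K} {a : Fin n →₀ ℕ}
    (hfa : ∀ c ∈ f.support, toLex c ≤ toLex a) (t : ℕ) :
    coeff (t • a) (f ^ t) = (coeff a f) ^ t ∧
      ∀ e ∈ (f ^ t).support, toLex e ≤ toLex (t • a) := by
  classical
  induction t with
  | zero =>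
      constructor
      · simp
      · intro e he
        rw [pow_zero] at he
        rw [MvPolynomial.mem_support_iff, MvPolynomial.coeff_one] at he
        have : e = 0 := by
          by_contra h
          exact he (if_neg (fun hh => h hh.symm))
        simp [this]
  | succ t ih =>
      have hsupp : ∀ e ∈ (f ^ (t + 1)).support, toLex e ≤ toLex ((t + 1) • a) := by
        intro e he
        rw [pow_succ'] at he
        have := MvPolynomial.support_mul f (f ^ t) he
        obtain ⟨c, hc, d, hd, rfl⟩ := Finset.mem_add.1 this
        rw [succ_nsmul', toLex_add, toLex_add]
        exact add_le_add (hfa c hc) (ih.2 d hd)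
      refine ⟨?_, hsupp⟩
      rw [pow_succ', succ_nsmul']
      rw [coeff_mul_of_max hfa ih.2, ih.1, pow_succ']

end Lex

/-- every monomial of an element of the radical of a monomial ideal lies in the radical -/
lemma radical_support_mem {I : Ideal (MvPolynomial (Fin n) K)} (hI : IsMonomialIdeal I)
    {f : MvPolynomial (Fin n) K} (hf : f ∈ I.radical) {a : Fin n →₀ ℕ} (ha : a ∈ f.support) :
    Mn K a ∈ I.radical := by
  classical
  revert f a
  suffices H : ∀ (m : ℕ) (f : MvPolynomial (Fin n) K), f.support.card ≤ m → f ∈ I.radical →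
      ∀ a ∈ f.support, Mn K a ∈ I.radical by
    intro f hf a ha
    exact H f.support.card f le_rfl hf a ha
  intro m
  induction m with
  | zero =>
      intro f hcard _ a ha
      rw [Nat.le_zero, Finset.card_eq_zero] at hcard
      rw [hcard] at ha
      simp at ha
  | succ m ih =>
      intro f hcard hf a ha
      have hfne : f ≠ 0 := by
        intro h
        rw [h] at ha
        simp at ha
      obtain ⟨a₀, ha₀, hmax⟩ := Finset.exists_max_image f.support toLex
        (MvPolynomial.support_nonempty.2 hfne)
      have hm0 : Mn K a₀ ∈ I.radical := by
        obtain ⟨t, hft⟩ := Ideal.mem_radical_iff.1 hf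
        have hc : coeff (t • a₀) (f ^ t) = (coeff a₀ f) ^ t := (pow_max hmax t).1
        have hne : coeff (t • a₀) (f ^ t) ≠ 0 := by
          rw [hc]
          exact pow_ne_zero _ (MvPolynomial.mem_support_iff.1 ha₀)
        have : Mn K (t • a₀) ∈ I :=
          monomialIdeal_support_mem hI hft (MvPolynomial.mem_support_iff.2 hne)
        exact Ideal.mem_radical_iff.2 ⟨t, by rwa [Mn_pow]⟩
      by_cases haa : a = a₀
      · rwa [haa]
      · set f' := f - monomial a₀ (coeff a₀ f) with hf'
        have hf'rad : f' ∈ I.radical := by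
          refine Submodule.sub_mem _ hf ?_
          rw [monomial_eq_C_mul_Mn]
          exact Ideal.mul_mem_left _ _ hm0
        have hsupp' : f'.support = f.support.erase a₀ := by
          ext b
          rw [Finset.mem_erase, MvPolynomial.mem_support_iff, MvPolynomial.mem_support_iff,
            hf', MvPolynomial.coeff_sub, MvPolynomial.coeff_monomial]
          by_cases hb : b = a₀
          · subst hb
            simp
          · rw [if_neg (fun h => hb h.symm), sub_zero]
            exact ⟨fun h => ⟨hb, h⟩, fun h => h.2⟩
        have hcard' : f'.support.card ≤ m := by
          rw [hsupp']
          have := Finset.card_erase_of_mem ha₀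
          omega
        refine ih f' hcard' hf'rad a ?_
        rw [hsupp', Finset.mem_erase]
        exact ⟨haa, ha⟩


/-- `K`-span of the monomials with exponents in `A`. -/
noncomputable def spanM (K : Type*) [Field K] {n : ℕ} (A : Set (Fin n →₀ ℕ)) :
    Submodule K (MvPolynomial (Fin n) K) :=
  Submodule.span K (Mn K '' A)

lemma support_subset_of_mem_spanM {A : Set (Fin n →₀ ℕ)} {f : MvPolynomial (Fin n) K}
    (hf : f ∈ spanM K A) : ↑f.support ⊆ A := by
  refine Submodule.span_induction (p := fun x _ => ↑x.support ⊆ A) ?_ ?_ ?_ ?_ hf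
  · rintro x ⟨a, ha, rfl⟩
    rw [Mn_support]
    intro b hb
    rw [Finset.coe_singleton, Set.mem_singleton_iff] at hb
    exact hb ▸ ha
  · simp
  · intro x y _ _ hx hy b hb
    rw [Finset.mem_coe] at hb
    rcases Finset.mem_union.1 (MvPolynomial.support_add hb) with h | h
    · exact hx (Finset.mem_coe.2 h)
    · exact hy (Finset.mem_coe.2 h)
  · intro c x _ hx b hb
    rw [Finset.mem_coe] at hb
    exact hx (Finset.mem_coe.2 (MvPolynomial.support_smul hb))

lemma spanM_disjoint {J : Ideal (MvPolynomial (Fin n) K)}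
    (hJ : ∀ f ∈ J, ∀ a ∈ f.support, Mn K a ∈ J)
    {A : Set (Fin n →₀ ℕ)} (hA : ∀ a ∈ A, Mn K a ∉ J) :
    Disjoint (spanM K A) (Submodule.restrictScalars K J) := by
  rw [Submodule.disjoint_def]
  intro f hfA hfJ
  rw [Submodule.restrictScalars_mem] at hfJ
  by_contra hf0
  obtain ⟨a, ha⟩ := MvPolynomial.support_nonempty.2 hf0
  exact hA a (support_subset_of_mem_spanM hfA (Finset.mem_coe.2 ha)) (hJ f hfJ a ha)

lemma linIndep_classes {J : Ideal (MvPolynomial (Fin n) K)}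
    (hJ : ∀ f ∈ J, ∀ a ∈ f.support, Mn K a ∈ J) :
    LinearIndependent K (fun a : {a : Fin n →₀ ℕ // Mn K a ∉ J} =>
      Ideal.Quotient.mk J (Mn K a.1)) := by
  classical
  rw [linearIndependent_iff]
  intro l hl
  set p : MvPolynomial (Fin n) K := l.sum fun a c => c • Mn K a.1 with hp
  have hmk : ∀ (c : K) (x : MvPolynomial (Fin n) K),
      Ideal.Quotient.mk J (c • x) = c • Ideal.Quotient.mk J x := by
    intro c x
    calc Ideal.Quotient.mk J (c • x) = (Ideal.Quotient.mkₐ K J) (c • x) := by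
          rw [Ideal.Quotient.mkₐ_eq_mk]
      _ = c • (Ideal.Quotient.mkₐ K J) x := map_smul _ c x
      _ = c • Ideal.Quotient.mk J x := by rw [Ideal.Quotient.mkₐ_eq_mk]
  have hmem : p ∈ J := by
    rw [Finsupp.linearCombination_apply, Finsupp.sum] at hl
    rw [← Ideal.Quotient.eq_zero_iff_mem, hp, Finsupp.sum, map_sum, ← hl]
    exact Finset.sum_congr rfl fun a _ => hmk (l a) (Mn K a.1)
  have hcoeff : ∀ a : {a : Fin n →₀ ℕ // Mn K a ∉ J}, coeff a.1 p = l a := by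
    intro a
    rw [hp, Finsupp.sum, MvPolynomial.coeff_sum]
    rw [Finset.sum_eq_single a]
    · rw [MvPolynomial.coeff_smul, Mn_coeff, if_pos rfl, smul_eq_mul, mul_one]
    · intro b _ hba
      rw [MvPolynomial.coeff_smul, Mn_coeff, if_neg (fun h => hba (Subtype.ext h)),
        smul_eq_mul, mul_zero]
    · intro ha
      rw [Finsupp.notMem_support_iff.1 ha, MvPolynomial.coeff_smul, zero_smul]
  ext a
  by_contra hla
  have ha : a.1 ∈ p.support := by
    rw [MvPolynomial.mem_support_iff, hcoeff a]
    exact hla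
  exact a.2 (hJ p hmem a.1 ha)

/-- The exponent set of a Stanley space. -/
def cone (e : Fin n →₀ ℕ) (Z : Finset (Fin n)) : Set (Fin n →₀ ℕ) :=
  {a | ∃ d : Fin n →₀ ℕ, ↑d.support ⊆ (Z : Set (Fin n)) ∧ a = e + d}

lemma mem_cone {e : Fin n →₀ ℕ} {Z : Finset (Fin n)} {a : Fin n →₀ ℕ} :
    a ∈ cone e Z ↔ e ≤ a ∧ ↑(a - e).support ⊆ (Z : Set (Fin n)) := by
  constructor
  · rintro ⟨d, hd, rfl⟩
    refine ⟨le_add_of_nonneg_right (show (0 : Fin n →₀ ℕ) ≤ d from zero_le), ?_⟩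
    rwa [add_tsub_cancel_left]
  · rintro ⟨h1, h2⟩
    exact ⟨a - e, h2, (add_tsub_cancel_of_le h1).symm⟩

lemma stanleySpace_eq_spanM (e : Fin n →₀ ℕ) (Z : Finset (Fin n)) :
    stanleySpace (monomial e (1 : K)) Z = spanM K (cone e Z) := by
  rw [stanleySpace, spanM]
  congr 1
  ext w
  constructor
  · rintro ⟨d, hd, rfl⟩
    exact ⟨e + d, ⟨d, hd, rfl⟩, (Mn_mul e d).symm⟩
  · rintro ⟨x, ⟨d, hd, rfl⟩, rfl⟩
    exact ⟨d, hd, (Mn_mul e d).symm⟩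

lemma map_spanM (J : Ideal (MvPolynomial (Fin n) K)) (A : Set (Fin n →₀ ℕ)) :
    (spanM K A).map (Ideal.Quotient.mkₐ K J).toLinearMap
      = Submodule.span K ((fun a => Ideal.Quotient.mk J (Mn K a)) '' A) := by
  rw [spanM, Submodule.map_span, ← Set.image_comp]
  congr 1

lemma image_subtype {J : Ideal (MvPolynomial (Fin n) K)} {A : Set (Fin n →₀ ℕ)}
    (hA : ∀ a ∈ A, Mn K a ∉ J) :
    (fun a : {a : Fin n →₀ ℕ // Mn K a ∉ J} => Ideal.Quotient.mk J (Mn K a.1)) ''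
        (Subtype.val ⁻¹' A)
      = (fun a => Ideal.Quotient.mk J (Mn K a)) '' A := by
  ext x
  constructor
  · rintro ⟨⟨a, hna⟩, haA, rfl⟩
    exact ⟨a, haA, rfl⟩
  · rintro ⟨a, haA, rfl⟩
    exact ⟨⟨a, hA a haA⟩, haA, rfl⟩


/-- indicator exponent vector of a set of variables -/
noncomputable def chi (T : Finset (Fin n)) : Fin n →₀ ℕ :=
  Finsupp.indicator T fun _ _ => 1

lemma chi_apply_mem {T : Finset (Fin n)} {x : Fin n} (hx : x ∈ T) : chi T x = 1 := by
  classical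
  rw [chi, Finsupp.indicator_apply, dif_pos hx]

lemma chi_apply_not_mem {T : Finset (Fin n)} {x : Fin n} (hx : x ∉ T) : chi T x = 0 := by
  classical
  rw [chi, Finsupp.indicator_apply, dif_neg hx]

lemma smul_chi_apply_mem {T : Finset (Fin n)} {x : Fin n} (hx : x ∈ T) (t : ℕ) :
    (t • chi T) x = t := by
  rw [Finsupp.smul_apply, chi_apply_mem hx, smul_eq_mul, mul_one]

lemma smul_chi_apply_not_mem {T : Finset (Fin n)} {x : Fin n} (hx : x ∉ T) (t : ℕ) :
    (t • chi T) x = 0 := by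
  rw [Finsupp.smul_apply, chi_apply_not_mem hx, smul_eq_mul, mul_zero]

lemma support_smul_chi {T : Finset (Fin n)} {t : ℕ} (ht : t ≠ 0) :
    (t • chi T).support = T := by
  classical
  ext x
  rw [Finsupp.mem_support_iff]
  by_cases hx : x ∈ T
  · rw [smul_chi_apply_mem hx]
    simp [hx, ht]
  · rw [smul_chi_apply_not_mem hx]
    simp [hx]

lemma chi_le_iff {T : Finset (Fin n)} {a : Fin n →₀ ℕ} :
    chi T ≤ a ↔ ↑T ⊆ (a.support : Set (Fin n)) := by
  classical
  rw [Finsupp.le_def]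
  constructor
  · intro h x hx
    rw [Finset.mem_coe] at hx ⊢
    have := h x
    rw [chi_apply_mem hx] at this
    rw [Finsupp.mem_support_iff]
    omega
  · intro h x
    by_cases hx : x ∈ T
    · rw [chi_apply_mem hx]
      have := h (Finset.mem_coe.2 hx)
      rw [Finset.mem_coe, Finsupp.mem_support_iff] at this
      omega
    · rw [chi_apply_not_mem hx]
      exact Nat.zero_le _

lemma key {I : Ideal (MvPolynomial (Fin n) K)} (hI : IsMonomialIdeal I) {k : ℕ}
    (hk : ∃ (s : ℕ) (u : Fin s → MvPolynomial (Fin n) K) (Z : Fin s → Finset (Fin n)),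
      IsStanleyDecompQuot I ⊤ u Z ∧ ∀ i, k ≤ (Z i).card) :
    ∃ (s : ℕ) (u : Fin s → MvPolynomial (Fin n) K) (Z : Fin s → Finset (Fin n)),
      IsStanleyDecompQuot I.radical ⊤ u Z ∧ ∀ i, k ≤ (Z i).card := by
  classical
  obtain ⟨s, u, Z, ⟨hmon, _, hdisj, hind, hsup⟩, hcard⟩ := hk
  choose d hud using hmon
  have hspace : ∀ i, stanleySpace (u i) (Z i) = spanM K (cone (d i) (Z i)) := fun i => by
    rw [hud i, stanleySpace_eq_spanM]
  have hJm : ∀ f ∈ I, ∀ a ∈ f.support, Mn K a ∈ I :=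
    fun f hf a ha => monomialIdeal_support_mem hI hf ha
  have hJr : ∀ f ∈ I.radical, ∀ a ∈ f.support, Mn K a ∈ I.radical :=
    fun f hf a ha => radical_support_mem hI hf ha
  -- the cones of the given decomposition avoid I
  have hconeNI : ∀ i, ∀ a ∈ cone (d i) (Z i), Mn K a ∉ I := by
    intro i a hamem haI
    have h1 : Mn K a ∈ spanM K (cone (d i) (Z i)) := Submodule.subset_span ⟨a, hamem, rfl⟩
    have h2 := hdisj i
    rw [hspace i] at h2
    exact Mn_ne_zero a (Submodule.disjoint_def.1 h2 (Mn K a) h1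
      (by rwa [Submodule.restrictScalars_mem]))
  have hli := linIndep_classes (J := I) hJm
  -- the images of the stanley spaces as spans in the quotient
  have himg : ∀ i, (stanleySpace (u i) (Z i)).map (Ideal.Quotient.mkₐ K I).toLinearMap
      = Submodule.span K ((fun a : {a : Fin n →₀ ℕ // Mn K a ∉ I} =>
          Ideal.Quotient.mk I (Mn K a.1)) '' (Subtype.val ⁻¹' cone (d i) (Z i))) := by
    intro i
    rw [hspace i, map_spanM, image_subtype (hconeNI i)]
  -- the cones cover the complement of I
  have hcover : ∀ a, Mn K a ∉ I → ∃ i, a ∈ cone (d i) (Z i) := by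
    intro a haI
    by_contra hno
    push_neg at hno
    have hmem : Ideal.Quotient.mk I (Mn K a) ∈
        ⨆ i, (stanleySpace (u i) (Z i)).map (Ideal.Quotient.mkₐ K I).toLinearMap := by
      rw [hsup]
      exact ⟨Mn K a, by simp, by simp [Ideal.Quotient.mkₐ_eq_mk]⟩
    have hsup2 : (⨆ i, (stanleySpace (u i) (Z i)).map (Ideal.Quotient.mkₐ K I).toLinearMap)
        = Submodule.span K ((fun a : {a : Fin n →₀ ℕ // Mn K a ∉ I} =>
            Ideal.Quotient.mk I (Mn K a.1)) '' (⋃ i, Subtype.val ⁻¹' cone (d i) (Z i))) := by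
      rw [Set.image_iUnion, Submodule.span_iUnion]
      exact iSup_congr himg
    rw [hsup2] at hmem
    have hnotin : (⟨a, haI⟩ : {a : Fin n →₀ ℕ // Mn K a ∉ I}) ∉
        ⋃ i, Subtype.val ⁻¹' cone (d i) (Z i) := by
      intro hmem2
      obtain ⟨si, ⟨i, rfl⟩, hsi⟩ := hmem2
      exact hno i hsi
    exact hli.notMem_span_image hnotin hmem
  -- the cones are pairwise disjoint
  have hdisjcone : ∀ i j, i ≠ j → ∀ a, a ∈ cone (d i) (Z i) → a ∈ cone (d j) (Z j) → False := by
    intro i j hij a hai haj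
    have h1 : Ideal.Quotient.mk I (Mn K a) ∈
        (stanleySpace (u i) (Z i)).map (Ideal.Quotient.mkₐ K I).toLinearMap := by
      rw [himg i]
      exact Submodule.subset_span ⟨⟨a, hconeNI i a hai⟩, hai, rfl⟩
    have h2 : Ideal.Quotient.mk I (Mn K a) ∈
        (stanleySpace (u j) (Z j)).map (Ideal.Quotient.mkₐ K I).toLinearMap := by
      rw [himg j]
      exact Submodule.subset_span ⟨⟨a, hconeNI j a haj⟩, haj, rfl⟩
    have h0 := Submodule.disjoint_def.1 (hind.pairwiseDisjoint hij) _ h1 h2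
    rw [Ideal.Quotient.eq_zero_iff_mem] at h0
    exact hconeNI i a hai h0
  -- the combinatorial data
  set g : ℕ := (Finset.univ.sup fun i => (d i).degree) + 1 with hgdef
  have hg : ∀ i x, (d i) x < g := by
    intro i x
    have h1 : (d i) x ≤ (d i).degree := Finsupp.le_degree x (d i)
    have h2 : (d i).degree ≤ Finset.univ.sup fun i => (d i).degree :=
      Finset.le_sup (f := fun i => (d i).degree) (Finset.mem_univ i)
    omega
  have hg1 : g ≠ 0 := by omega
  set F : Set (Finset (Fin n)) := {T | ∀ t : ℕ, Mn K (t • chi T) ∉ I} with hF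
  -- intervals are inside F
  have hFdZ : ∀ (i : Fin s) (T' : Finset (Fin n)),
      (d i).support ⊆ T' → T' ⊆ Z i → T' ∈ F := by
    intro i T' _ hT'Z t hmemI
    have hle : t • chi T' ≤ d i + t • chi (Z i) := by
      rw [Finsupp.le_def]
      intro x
      rw [Finsupp.add_apply]
      by_cases hx : x ∈ T'
      · rw [smul_chi_apply_mem hx, smul_chi_apply_mem (hT'Z hx)]
        omega
      · rw [smul_chi_apply_not_mem hx]
        exact Nat.zero_le _
    have hbig : d i + t • chi (Z i) ∈ cone (d i) (Z i) := by
      refine ⟨t • chi (Z i), ?_, rfl⟩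
      rcases Nat.eq_zero_or_pos t with rfl | ht
      · simp
      · rw [support_smul_chi (by omega)]
    exact hconeNI i _ hbig (Mn_mem_of_le hmemI hle)
  -- scaled indicators of intervals lie in the cone
  have hbetween_cone : ∀ (i : Fin s) (T : Finset (Fin n)),
      (d i).support ⊆ T → T ⊆ Z i → g • chi T ∈ cone (d i) (Z i) := by
    intro i T hDT hTZ
    rw [mem_cone]
    constructor
    · rw [Finsupp.le_def]
      intro x
      by_cases hx : x ∈ T
      · rw [smul_chi_apply_mem hx]
        exact le_of_lt (hg i x)
      · rw [smul_chi_apply_not_mem hx]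
        have : x ∉ (d i).support := fun h => hx (hDT h)
        rw [Finsupp.notMem_support_iff] at this
        omega
    · intro x hx
      rw [Finset.mem_coe, Finsupp.mem_support_iff, Finsupp.tsub_apply] at hx
      have hxT : x ∈ T := by
        by_contra hxT
        rw [smul_chi_apply_not_mem hxT] at hx
        omega
      exact Finset.mem_coe.2 (hTZ hxT)
  -- members of the cone give intervals
  have hTZmem : ∀ (T : Finset (Fin n)) (i : Fin s),
      g • chi T ∈ cone (d i) (Z i) → (d i).support ⊆ T ∧ T ⊆ Z i := by
    intro T i hmem
    rw [mem_cone] at hmem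
    obtain ⟨hle, hsupp⟩ := hmem
    rw [Finsupp.le_def] at hle
    constructor
    · intro x hx
      rw [Finsupp.mem_support_iff] at hx
      have := hle x
      by_contra hxT
      rw [smul_chi_apply_not_mem hxT] at this
      omega
    · intro x hx
      have h1 : (g • chi T - d i) x = g - d i x := by
        rw [Finsupp.tsub_apply, smul_chi_apply_mem hx]
      have h2 : x ∈ (g • chi T - d i).support := by
        rw [Finsupp.mem_support_iff, h1]
        have := hg i x
        omega
      exact Finset.mem_coe.1 (hsupp (Finset.mem_coe.2 h2))
  -- choose a cone for each face in F
  have hFchoice : ∀ T : {T : Finset (Fin n) // T ∈ F}, ∃ i, g • chi T.1 ∈ cone (d i) (Z i) :=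
    fun T => hcover _ (T.2 g)
  choose φ hφ using hFchoice
  letI : Fintype {T : Finset (Fin n) // T ∈ F} := Fintype.ofFinite _
  set R : Finset (Fin s) := Finset.image φ Finset.univ with hR
  have hRprop : ∀ i ∈ R, (d i).support ⊆ Z i := by
    intro i hi
    obtain ⟨T, _, rfl⟩ := Finset.mem_image.1 hi
    have := hTZmem T.1 (φ T) (hφ T)
    exact this.1.trans this.2
  set e : Fin R.card ≃ {i // i ∈ R} := R.equivFin.symm with he
  set D : Fin s → Finset (Fin n) := fun i => (d i).support with hD
  set u' : Fin R.card → MvPolynomial (Fin n) K := fun j => monomial (chi (D (e j).1)) 1 with hu'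
  set Z' : Fin R.card → Finset (Fin n) := fun j => Z (e j).1 with hZ'
  set C' : Fin R.card → Set (Fin n →₀ ℕ) := fun j => cone (chi (D (e j).1)) (Z' j) with hC'
  have hspace' : ∀ j, stanleySpace (u' j) (Z' j) = spanM K (C' j) := fun j =>
    stanleySpace_eq_spanM _ _
  -- membership in the new cones
  have hC'mem : ∀ (j) (a : Fin n →₀ ℕ),
      a ∈ C' j ↔ (D (e j).1 ⊆ a.support ∧ a.support ⊆ Z' j) := by
    intro j a
    rw [hC', mem_cone, chi_le_iff]
    constructor
    · rintro ⟨h1, h2⟩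
      constructor
      · intro x hx
        exact Finset.mem_coe.1 (h1 (Finset.mem_coe.2 hx))
      · intro x hx
        by_cases hxD : x ∈ D (e j).1
        · exact hRprop (e j).1 (e j).2 hxD
        · have h3 : (a - chi (D (e j).1)) x = a x := by
            rw [Finsupp.tsub_apply, chi_apply_not_mem hxD, Nat.sub_zero]
          have hax : a x ≠ 0 := Finsupp.mem_support_iff.1 hx
          have h4 : x ∈ (a - chi (D (e j).1)).support := by
            rw [Finsupp.mem_support_iff, h3]
            exact hax
          exact Finset.mem_coe.1 (h2 (Finset.mem_coe.2 h4))
    · rintro ⟨h1, h2⟩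
      constructor
      · intro x hx
        exact Finset.mem_coe.2 (h1 (Finset.mem_coe.1 hx))
      · intro x hx
        rw [Finset.mem_coe, Finsupp.mem_support_iff, Finsupp.tsub_apply] at hx
        have hax : a x ≠ 0 := by omega
        exact Finset.mem_coe.2 (h2 (Finsupp.mem_support_iff.2 hax))
  -- supports of elements not in the radical are in F
  have hNF : ∀ a : Fin n →₀ ℕ, Mn K a ∉ I.radical → a.support ∈ F := by
    intro a har t hmemI
    apply har
    rw [Ideal.mem_radical_iff]
    refine ⟨t, ?_⟩
    rw [Mn_pow]
    refine Mn_mem_of_le hmemI ?_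
    rw [Finsupp.le_def]
    intro x
    by_cases hx : x ∈ a.support
    · rw [smul_chi_apply_mem hx, Finsupp.smul_apply, smul_eq_mul]
      have : a x ≠ 0 := Finsupp.mem_support_iff.1 hx
      exact Nat.le_mul_of_pos_right t (by omega)
    · rw [smul_chi_apply_not_mem hx]
      exact Nat.zero_le _
  -- elements of the new cones are not in the radical
  have hC'NI : ∀ j, ∀ a ∈ C' j, Mn K a ∉ I.radical := by
    intro j a ha har
    obtain ⟨h1, h2⟩ := (hC'mem j a).1 ha
    have hTF : a.support ∈ F := hFdZ (e j).1 a.support h1 h2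
    obtain ⟨t, ht⟩ := Ideal.mem_radical_iff.1 har
    rw [Mn_pow] at ht
    have hle : t • a ≤ (t * a.degree) • chi a.support := by
      rw [Finsupp.le_def]
      intro x
      rw [Finsupp.smul_apply, smul_eq_mul]
      by_cases hx : x ∈ a.support
      · rw [smul_chi_apply_mem hx]
        exact Nat.mul_le_mul_left t (Finsupp.le_degree x a)
      · rw [Finsupp.notMem_support_iff] at hx
        rw [hx, mul_zero]
        exact Nat.zero_le _
    exact hTF (t * a.degree) (Mn_mem_of_le ht hle)
  have hli' := linIndep_classes (J := I.radical) hJr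
  have himg' : ∀ j, (stanleySpace (u' j) (Z' j)).map
        (Ideal.Quotient.mkₐ K I.radical).toLinearMap
      = Submodule.span K ((fun a : {a : Fin n →₀ ℕ // Mn K a ∉ I.radical} =>
          Ideal.Quotient.mk I.radical (Mn K a.1)) '' (Subtype.val ⁻¹' C' j)) := by
    intro j
    rw [hspace' j, map_spanM, image_subtype (hC'NI j)]
  -- the new cones are pairwise disjoint
  have hC'disj : ∀ j l, j ≠ l → ∀ a, a ∈ C' j → a ∈ C' l → False := by
    intro j l hjl a haj hal
    obtain ⟨hj1, hj2⟩ := (hC'mem j a).1 haj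
    obtain ⟨hl1, hl2⟩ := (hC'mem l a).1 hal
    have h1 := hbetween_cone (e j).1 a.support hj1 hj2
    have h2 := hbetween_cone (e l).1 a.support hl1 hl2
    have hne : ((e j).1 : Fin s) ≠ (e l).1 := by
      intro h
      exact hjl (e.injective (Subtype.ext h))
    exact hdisjcone (e j).1 (e l).1 hne _ h1 h2
  refine ⟨R.card, u', Z', ⟨fun j => ⟨chi (D (e j).1), rfl⟩, fun j => trivial, ?_, ?_, ?_⟩,
    fun j => hcard (e j).1⟩
  · -- disjointness from the radical
    intro j
    rw [hspace' j]
    exact spanM_disjoint hJr (hC'NI j)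
  · -- independence
    intro j
    have hrest : (⨆ l, ⨆ (_ : l ≠ j), (stanleySpace (u' l) (Z' l)).map
          (Ideal.Quotient.mkₐ K I.radical).toLinearMap)
        = Submodule.span K ((fun a : {a : Fin n →₀ ℕ // Mn K a ∉ I.radical} =>
            Ideal.Quotient.mk I.radical (Mn K a.1)) ''
          (⋃ l, ⋃ (_ : l ≠ j), Subtype.val ⁻¹' C' l)) := by
      rw [Set.image_iUnion, Submodule.span_iUnion]
      refine iSup_congr fun l => ?_
      rw [Set.image_iUnion, Submodule.span_iUnion]
      exact iSup_congr fun hl => himg' l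
    refine Disjoint.mono (le_of_eq (himg' j)) (le_of_eq hrest) ?_
    refine hli'.disjoint_span_image ?_
    rw [Set.disjoint_left]
    intro a haj hal
    obtain ⟨sl, ⟨l, rfl⟩, hsl⟩ := hal
    obtain ⟨sl', ⟨hl, rfl⟩, hsl'⟩ := hsl
    exact hC'disj j l (Ne.symm hl) a.1 haj hsl'
  · -- the sup is everything
    have hmap_top : (Submodule.restrictScalars K (⊤ : Ideal (MvPolynomial (Fin n) K))).map
        (Ideal.Quotient.mkₐ K I.radical).toLinearMap = ⊤ := by
      rw [show Submodule.restrictScalars K (⊤ : Ideal (MvPolynomial (Fin n) K)) = ⊤ from rfl,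
        Submodule.map_top, LinearMap.range_eq_top]
      intro q
      obtain ⟨f, hf⟩ := Ideal.Quotient.mkₐ_surjective K I.radical q
      exact ⟨f, hf⟩
    rw [hmap_top, eq_top_iff]
    intro q _
    obtain ⟨f, rfl⟩ := Ideal.Quotient.mkₐ_surjective K I.radical q
    have hstep : ∀ a : Fin n →₀ ℕ, (Ideal.Quotient.mkₐ K I.radical) (Mn K a) ∈
        ⨆ j, (stanleySpace (u' j) (Z' j)).map
          (Ideal.Quotient.mkₐ K I.radical).toLinearMap := by
      intro a
      by_cases hrad : Mn K a ∈ I.radical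
      · have : (Ideal.Quotient.mkₐ K I.radical) (Mn K a) = 0 := by
          rw [Ideal.Quotient.mkₐ_eq_mk, Ideal.Quotient.eq_zero_iff_mem]
          exact hrad
        rw [this]
        exact Submodule.zero_mem _
      · have hTF : a.support ∈ F := hNF a hrad
        have hmemR : φ ⟨a.support, hTF⟩ ∈ R := Finset.mem_image_of_mem φ (Finset.mem_univ _)
        set j : Fin R.card := e.symm ⟨φ ⟨a.support, hTF⟩, hmemR⟩ with hj
        have hej : (e j).1 = φ ⟨a.support, hTF⟩ := by rw [hj, Equiv.apply_symm_apply]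
        have hint := hTZmem a.support (φ ⟨a.support, hTF⟩) (hφ ⟨a.support, hTF⟩)
        have haC' : a ∈ C' j := by
          rw [hC'mem]
          constructor
          · rw [hej]
            exact hint.1
          · show a.support ⊆ Z (e j).1
            rw [hej]
            exact hint.2
        have h1 : Mn K a ∈ spanM K (C' j) := Submodule.subset_span ⟨a, haC', rfl⟩
        have h2 : (Ideal.Quotient.mkₐ K I.radical) (Mn K a) ∈
            (stanleySpace (u' j) (Z' j)).map
              (Ideal.Quotient.mkₐ K I.radical).toLinearMap := by
          rw [hspace' j]
          exact ⟨Mn K a, h1, rfl⟩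
        exact Submodule.mem_iSup_of_mem j h2
    rw [f.as_sum, map_sum]
    refine Submodule.sum_mem _ fun a _ => ?_
    have hmono : monomial a (coeff a f) = (coeff a f) • Mn K a := by
      rw [Mn, smul_monomial, smul_eq_mul, mul_one]
    rw [hmono, map_smul]
    exact Submodule.smul_mem _ _ (hstep a)

end SdepthAux

/-- For a monomial ideal `I` of `S = K[x_1,…,x_n]`,
`sdepth(S/I) ≤ sdepth(S/√I)`. -/
theorem sdepthQuot_top_le_sdepthQuot_top_radical {n : ℕ} (I : Ideal (MvPolynomial (Fin n) K))
    (hI : IsMonomialIdeal I) :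
    sdepthQuot I ⊤ ≤ sdepthQuot I.radical ⊤ := by
  classical
  rw [sdepthQuot, sdepthQuot]
  set A : Set ℕ := { k | ∃ (s : ℕ) (u : Fin s → MvPolynomial (Fin n) K)
    (Z : Fin s → Finset (Fin n)),
    IsStanleyDecompQuot I ⊤ u Z ∧ ∀ i, k ≤ (Z i).card } with hA
  set B : Set ℕ := { k | ∃ (s : ℕ) (u : Fin s → MvPolynomial (Fin n) K)
    (Z : Fin s → Finset (Fin n)),
    IsStanleyDecompQuot I.radical ⊤ u Z ∧ ∀ i, k ≤ (Z i).card } with hB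
  have hsub : A ⊆ B := fun k hk => SdepthAux.key hI hk
  by_cases hBdd : BddAbove B
  · rcases Set.eq_empty_or_nonempty A with hAe | hAne
    · rw [hAe, csSup_empty]
      exact bot_le
    · exact csSup_le_csSup hBdd hAne hsub
  · obtain ⟨k, hkB, hnk⟩ := not_bddAbove_iff.1 hBdd n
    obtain ⟨s, u, Z, hdec, hc⟩ := hkB
    have hs0 : s = 0 := by
      by_contra hs
      have h1 : k ≤ (Z ⟨0, Nat.pos_of_ne_zero hs⟩).card := hc _
      have h2 : (Z ⟨0, Nat.pos_of_ne_zero hs⟩).card ≤ n := by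
        have := Finset.card_le_univ (Z ⟨0, Nat.pos_of_ne_zero hs⟩)
        simpa [Fintype.card_fin] using this
      omega
    subst hs0
    have hsup := hdec.2.2.2.2
    rw [iSup_of_empty] at hsup
    have htop : I.radical = ⊤ := by
      have hmem : Ideal.Quotient.mk I.radical 1 ∈ (⊥ : Submodule K _) := by
        rw [hsup]
        exact ⟨1, trivial, by simp [Ideal.Quotient.mkₐ_eq_mk]⟩
      rw [Submodule.mem_bot, Ideal.Quotient.eq_zero_iff_mem] at hmem
      exact (Ideal.eq_top_iff_one _).2 hmem
    have hItop : I = ⊤ := Ideal.radical_eq_top.1 htop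
    have hAall : ∀ m : ℕ, m ∈ A := by
      intro m
      haveI : Subsingleton (MvPolynomial (Fin n) K ⧸ I) :=
        Ideal.Quotient.subsingleton_iff.2 hItop
      refine ⟨0, Fin.elim0, Fin.elim0, ⟨fun i => i.elim0, fun i => i.elim0,
        fun i => i.elim0, ?_, ?_⟩, fun i => i.elim0⟩
      · intro i
        exact i.elim0
      · exact Subsingleton.elim _ _
    have hnotA : ¬BddAbove A := by
      rintro ⟨b, hb⟩
      have := hb (hAall (b + 1))
      omega
    rw [csSup_of_not_bddAbove hnotA, csSup_empty]
    exact bot_le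
end

section
/- Let I be a monomial ideal of S = K[x_1,…,x_n]. Then sdepth(I) ≤ sdepth(√I). -/
open MvPolynomial

variable {K : Type*} [Field K]

variable {n : ℕ}

def mimage (K : Type*) [Field K] {n : ℕ} (E : Set (Fin n →₀ ℕ)) :
    Set (MvPolynomial (Fin n) K) := (fun d => (monomial d (1 : K))) '' E

def suppSub (E : Set (Fin n →₀ ℕ)) : Submodule K (MvPolynomial (Fin n) K) where
  carrier := { p | ∀ c ∈ p.support, c ∈ E }
  add_mem' := by
    intro p q hp hq c hc
    rcases Finset.mem_union.1 (MvPolynomial.support_add hc) with h | h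
    · exact hp c h
    · exact hq c h
  zero_mem' := by intro c hc; simp at hc
  smul_mem' := by
    intro r p hp c hc
    exact hp c (Finsupp.support_smul hc)

lemma mem_span_monomials {E : Set (Fin n →₀ ℕ)} {p : MvPolynomial (Fin n) K} :
    p ∈ Submodule.span K (mimage K E) ↔ ∀ c ∈ p.support, c ∈ E := by
  constructor
  · intro hp c hc
    have : Submodule.span K (mimage K E) ≤ suppSub E := by
      rw [Submodule.span_le]
      rintro w ⟨d, hd, rfl⟩ c hc
      classical
      rw [MvPolynomial.support_monomial, if_neg (one_ne_zero)] at hc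
      exact (Finset.mem_singleton.1 hc) ▸ hd
    exact this hp c hc
  · intro h
    have hp : p = ∑ c ∈ p.support, (MvPolynomial.coeff c p) • (monomial c (1 : K)) := by
      conv_lhs => rw [← MvPolynomial.support_sum_monomial_coeff p]
      refine Finset.sum_congr rfl fun c _ => ?_
      rw [MvPolynomial.smul_monomial, smul_eq_mul, mul_one]
    rw [hp]
    exact Submodule.sum_mem _ fun c hc =>
      Submodule.smul_mem _ _ (Submodule.subset_span ⟨c, h c hc, rfl⟩)

/-- the exponent set of the Stanley space `x^a K[Z]`. -/
def Sset (a : Fin n →₀ ℕ) (Z : Finset (Fin n)) : Set (Fin n →₀ ℕ) :=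
  { b | ∃ d : Fin n →₀ ℕ, ↑d.support ⊆ (Z : Set (Fin n)) ∧ b = a + d }

lemma stanleySpace_monomial (a : Fin n →₀ ℕ) (Z : Finset (Fin n)) :
    stanleySpace (monomial a (1 : K)) Z = Submodule.span K (mimage K (Sset a Z)) := by
  unfold stanleySpace
  congr 1
  ext w
  constructor
  · rintro ⟨d, hd, rfl⟩
    exact ⟨a + d, ⟨d, hd, rfl⟩, by rw [MvPolynomial.monomial_mul, one_mul]⟩
  · rintro ⟨b, ⟨d, hd, rfl⟩, rfl⟩
    exact ⟨d, hd, by rw [MvPolynomial.monomial_mul, one_mul]⟩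

lemma iSup_span_monomials {s : ℕ} (S : Fin s → Set (Fin n →₀ ℕ)) :
    (⨆ i, Submodule.span K (mimage K (S i))) = Submodule.span K (mimage K (⋃ i, S i)) := by
  rw [show mimage K (⋃ i, S i) = ⋃ i, mimage K (S i) from Set.image_iUnion,
    Submodule.span_iUnion]

/-- exponent set of the whole decomposition -/
def Mset {s : ℕ} (a : Fin s → (Fin n →₀ ℕ)) (Z : Fin s → Finset (Fin n)) :
    Set (Fin n →₀ ℕ) := ⋃ i, Sset (a i) (Z i)

section decomp

variable {s : ℕ} {I : Ideal (MvPolynomial (Fin n) K)} {a : Fin s → (Fin n →₀ ℕ)}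
  {Z : Fin s → Finset (Fin n)}

lemma poly_mem_I_iff (hspan : Submodule.restrictScalars K I
      = Submodule.span K (mimage K (Mset a Z))) (p : MvPolynomial (Fin n) K) :
    p ∈ I ↔ ∀ c ∈ p.support, c ∈ Mset a Z := by
  have h1 : p ∈ I ↔ p ∈ Submodule.restrictScalars K I := Iff.rfl
  rw [h1, hspan, mem_span_monomials]

lemma mono_mem_I_iff (hspan : Submodule.restrictScalars K I
      = Submodule.span K (mimage K (Mset a Z))) (b : Fin n →₀ ℕ) :
    (monomial b (1 : K)) ∈ I ↔ b ∈ Mset a Z := by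
  classical
  rw [poly_mem_I_iff hspan]
  constructor
  · intro h
    apply h
    rw [MvPolynomial.support_monomial, if_neg (one_ne_zero)]
    exact Finset.mem_singleton_self b
  · intro hb c hc
    rw [MvPolynomial.support_monomial, if_neg (one_ne_zero)] at hc
    exact (Finset.mem_singleton.1 hc) ▸ hb

lemma a_mem_Sset (i : Fin s) : a i ∈ Sset (a i) (Z i) :=
  ⟨0, by simp, by simp⟩

lemma mono_a_mem (hspan : Submodule.restrictScalars K I
      = Submodule.span K (mimage K (Mset a Z))) (i : Fin s) :
    (monomial (a i) (1 : K)) ∈ I :=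
  (mono_mem_I_iff hspan (a i)).2 (Set.mem_iUnion.2 ⟨i, a_mem_Sset i⟩)

lemma support_le_of_mem_Sset {b : Fin n →₀ ℕ} {i : Fin s} (hb : b ∈ Sset (a i) (Z i)) :
    (a i).support ⊆ b.support := by
  rcases hb with ⟨d, _, rfl⟩
  exact Finsupp.support_mono le_self_add

lemma mono_mem_radical_iff (hspan : Submodule.restrictScalars K I
      = Submodule.span K (mimage K (Mset a Z))) (b : Fin n →₀ ℕ) :
    (monomial b (1 : K)) ∈ I.radical ↔ ∃ i, (a i).support ⊆ b.support := by
  constructor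
  · rintro ⟨m, hm⟩
    rw [MvPolynomial.monomial_pow, one_pow, mono_mem_I_iff hspan] at hm
    rcases Set.mem_iUnion.1 hm with ⟨i, hi⟩
    refine ⟨i, (support_le_of_mem_Sset hi).trans ?_⟩
    intro j hj
    rw [Finsupp.mem_support_iff] at hj ⊢
    intro h
    apply hj
    rw [Finsupp.smul_apply, h, smul_eq_mul, mul_zero]
  · rintro ⟨i, hi⟩
    set N : ℕ := (Finset.univ.sup fun j => a i j) + 1 with hN
    refine ⟨N, ?_⟩
    rw [MvPolynomial.monomial_pow, one_pow]
    have hle : a i ≤ N • b := by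
      rw [Finsupp.le_iff]
      intro j hj
      have hbj : 1 ≤ b j := Nat.one_le_iff_ne_zero.2 (Finsupp.mem_support_iff.1 (hi hj))
      refine le_of_lt ?_
      calc a i j ≤ Finset.univ.sup fun j => a i j := Finset.le_sup (Finset.mem_univ j)
        _ < N := Nat.lt_succ_self _
        _ = N * 1 := (mul_one N).symm
        _ ≤ N * b j := Nat.mul_le_mul_left N hbj
        _ = (N • b) j := by rw [Finsupp.smul_apply, smul_eq_mul]
    have : (monomial (N • b) (1 : K)) = (monomial (a i) (1 : K)) * (monomial (N • b - a i) (1 : K)) := by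
      rw [MvPolynomial.monomial_mul, one_mul, add_tsub_cancel_of_le hle]
    rw [this]
    exact Ideal.mul_mem_right _ _ (mono_a_mem hspan i)

end decomp
section decomp2
open MvPolynomial
variable {K : Type*} [Field K] {n : ℕ} {s : ℕ} {I : Ideal (MvPolynomial (Fin n) K)}
  {a : Fin s → (Fin n →₀ ℕ)} {Z : Fin s → Finset (Fin n)}

lemma poly_mem_radical_iff (hspan : Submodule.restrictScalars K I
      = Submodule.span K (mimage K (Mset a Z))) (p : MvPolynomial (Fin n) K) :
    p ∈ I.radical ↔ ∀ c ∈ p.support, ∃ i, (a i).support ⊆ c.support := by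
  classical
  constructor
  · intro hp c hc
    by_contra hcon
    -- substitution killing variables outside supp c
    set φ : MvPolynomial (Fin n) K →ₐ[K] MvPolynomial (Fin n) K :=
      aeval (fun j => if j ∈ c.support then (X j : MvPolynomial (Fin n) K) else 0) with hφ
    have hφmono : ∀ (e : Fin n →₀ ℕ) (r : K),
        φ (monomial e r) = if e.support ⊆ c.support then monomial e r else 0 := by
      intro e r
      rw [hφ, aeval_monomial]
      by_cases he : e.support ⊆ c.support
      · rw [if_pos he]
        have : (e.prod fun j k => (if j ∈ c.support then (X j : MvPolynomial (Fin n) K) else 0) ^ k)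
            = e.prod fun j k => (X j : MvPolynomial (Fin n) K) ^ k := by
          apply Finset.prod_congr rfl
          intro j hj
          show (if j ∈ c.support then (X j : MvPolynomial (Fin n) K) else 0) ^ e j
              = (X j : MvPolynomial (Fin n) K) ^ e j
          rw [if_pos (he hj)]
        rw [this, MvPolynomial.algebraMap_eq, ← MvPolynomial.monomial_eq]
      · rw [if_neg he]
        obtain ⟨j, hje, hjc⟩ := Finset.not_subset.1 he
        have : (e.prod fun j k => (if j ∈ c.support then (X j : MvPolynomial (Fin n) K) else 0) ^ k) = 0 := by
          apply Finset.prod_eq_zero hje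
          show (if j ∈ c.support then (X j : MvPolynomial (Fin n) K) else 0) ^ e j = 0
          rw [if_neg hjc, zero_pow (Finsupp.mem_support_iff.1 hje)]
        rw [this, mul_zero]
    -- φ kills every element of I
    have hker : ∀ q ∈ I, φ q = 0 := by
      intro q hq
      rw [poly_mem_I_iff hspan] at hq
      have hq2 : q = ∑ e ∈ q.support, monomial e (MvPolynomial.coeff e q) :=
        (MvPolynomial.support_sum_monomial_coeff q).symm
      rw [hq2, map_sum]
      apply Finset.sum_eq_zero
      intro e he
      rw [hφmono]
      rcases Set.mem_iUnion.1 (hq e he) with ⟨i, hi⟩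
      have hsub : (a i).support ⊆ e.support := support_le_of_mem_Sset hi
      have : ¬ (e.support ⊆ c.support) := fun h => hcon ⟨i, hsub.trans h⟩
      rw [if_neg this]
    -- φ p has nonzero coefficient at c
    have hcoeff : MvPolynomial.coeff c (φ p) = MvPolynomial.coeff c p := by
      have hp2 : p = ∑ e ∈ p.support, monomial e (MvPolynomial.coeff e p) :=
        (MvPolynomial.support_sum_monomial_coeff p).symm
      conv_lhs => rw [hp2]
      rw [map_sum, MvPolynomial.coeff_sum]
      rw [Finset.sum_eq_single_of_mem c hc]
      · rw [hφmono, if_pos (subset_refl _), MvPolynomial.coeff_monomial, if_pos rfl]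
      · intro e he hec
        rw [hφmono]
        by_cases h : e.support ⊆ c.support
        · rw [if_pos h, MvPolynomial.coeff_monomial, if_neg hec]
        · rw [if_neg h, MvPolynomial.coeff_zero]
    have hφp : φ p ≠ 0 := by
      intro h0
      rw [h0, MvPolynomial.coeff_zero] at hcoeff
      exact (MvPolynomial.mem_support_iff.1 hc) hcoeff.symm
    rcases hp with ⟨m, hm⟩
    have : (φ p) ^ m = 0 := by rw [← map_pow]; exact hker _ hm
    rcases Nat.eq_zero_or_pos m with rfl | hmpos
    · rw [pow_zero] at this; exact one_ne_zero this
    · exact hφp (pow_eq_zero_iff (Nat.pos_iff_ne_zero.1 hmpos) |>.1 this)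
  · intro h
    have hp2 : p = ∑ e ∈ p.support, monomial e (MvPolynomial.coeff e p) :=
      (MvPolynomial.support_sum_monomial_coeff p).symm
    rw [hp2]
    apply Ideal.sum_mem
    intro e he
    have : (monomial e (MvPolynomial.coeff e p) : MvPolynomial (Fin n) K)
        = C (MvPolynomial.coeff e p) * monomial e 1 := by
      rw [MvPolynomial.C_mul_monomial, mul_one]
    rw [this]
    exact Ideal.mul_mem_left _ _ ((mono_mem_radical_iff hspan e).2 (h e he))

end decomp2
section construct
open MvPolynomial
variable {K : Type*} [Field K] {n : ℕ}

/-- indicator finsupp with constant value N -/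
noncomputable def indC (T : Finset (Fin n)) (N : ℕ) : Fin n →₀ ℕ := Finsupp.indicator T (fun _ _ => N)

lemma indC_apply_mem {T : Finset (Fin n)} {N : ℕ} {j : Fin n} (hj : j ∈ T) : indC T N j = N :=
  Finsupp.indicator_of_mem hj _

lemma indC_apply_not_mem {T : Finset (Fin n)} {N : ℕ} {j : Fin n} (hj : j ∉ T) : indC T N j = 0 :=
  Finsupp.indicator_of_notMem hj _

lemma indC_support {T : Finset (Fin n)} {N : ℕ} (hN : N ≠ 0) : (indC T N).support = T := by
  ext j
  rw [Finsupp.mem_support_iff]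
  constructor
  · intro h
    by_contra hj
    exact h (indC_apply_not_mem hj)
  · intro hj
    rw [indC_apply_mem hj]
    exact hN

variable {s : ℕ} {I : Ideal (MvPolynomial (Fin n) K)} {a : Fin s → (Fin n →₀ ℕ)}
  {Z : Fin s → Finset (Fin n)}

/-- disjointness of exponent sets from independence of the spans -/
lemma Sset_disjoint
    (hind : iSupIndep (fun i => Submodule.span K (mimage K (Sset (a i) (Z i)))))
    {i j : Fin s} (hij : i ≠ j) {b : Fin n →₀ ℕ}
    (hbi : b ∈ Sset (a i) (Z i)) (hbj : b ∈ Sset (a j) (Z j)) : False := by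
  have h1 : (monomial b (1 : K)) ∈ Submodule.span K (mimage K (Sset (a i) (Z i))) :=
    Submodule.subset_span ⟨b, hbi, rfl⟩
  have h2 : (monomial b (1 : K)) ∈ ⨆ (l) (_ : l ≠ i), Submodule.span K (mimage K (Sset (a l) (Z l))) := by
    refine Submodule.mem_iSup_of_mem j (Submodule.mem_iSup_of_mem (Ne.symm hij) ?_)
    exact Submodule.subset_span ⟨b, hbj, rfl⟩
  have := Submodule.disjoint_def.1 (iSupIndep_def.1 hind i) _ h1 h2
  rw [MvPolynomial.monomial_eq_zero] at this
  exact one_ne_zero this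

/-- characterization of the new exponent sets -/
lemma mem_Sset_indC {i : Fin s} (hgood : (a i).support ⊆ Z i) {b : Fin n →₀ ℕ} :
    b ∈ Sset (indC (a i).support 1) (Z i) ↔ (a i).support ⊆ b.support ∧ b.support ⊆ Z i := by
  classical
  constructor
  · rintro ⟨d, hd, rfl⟩
    constructor
    · intro j hj
      rw [Finsupp.mem_support_iff, Finsupp.add_apply]
      have h1 : indC (a i).support 1 j = 1 := indC_apply_mem hj
      omega
    · refine (Finsupp.support_add).trans ?_
      rw [indC_support one_ne_zero]
      intro j hj
      rcases Finset.mem_union.1 hj with h | h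
      · exact hgood h
      · exact hd h
  · rintro ⟨h1, h2⟩
    have hle : indC (a i).support 1 ≤ b := by
      rw [Finsupp.le_iff]
      intro j hj
      rw [indC_support one_ne_zero] at hj
      rw [indC_apply_mem hj]
      exact Nat.one_le_iff_ne_zero.2 (Finsupp.mem_support_iff.1 (h1 hj))
    refine ⟨b - indC (a i).support 1, ?_, ?_⟩
    · exact (Finset.coe_subset.2 ((Finsupp.support_tsub).trans h2))
    · rw [add_tsub_cancel_of_le hle]

/-- the saturation `N·1_T` belongs to the same old piece -/
lemma indC_mem_Sset_of {N : ℕ} (hN0 : N ≠ 0) (hN : ∀ i j, a i j < N) {i : Fin s} {T : Finset (Fin n)}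
    (hA : (a i).support ⊆ T) (hT : T ⊆ Z i) : indC T N ∈ Sset (a i) (Z i) := by
  have hle : a i ≤ indC T N := by
    rw [Finsupp.le_iff]
    intro j hj
    rw [indC_apply_mem (hA hj)]
    exact le_of_lt (hN i j)
  refine ⟨indC T N - a i, ?_, (add_tsub_cancel_of_le hle).symm⟩
  refine Finset.coe_subset.2 ((Finsupp.support_tsub).trans ?_)
  rw [indC_support hN0]
  exact hT

/-- uniqueness: each monomial of the radical lies in only one new piece -/
lemma new_disjoint {N : ℕ} (hN0 : N ≠ 0) (hN : ∀ i j, a i j < N)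
    (hind : iSupIndep (fun i => Submodule.span K (mimage K (Sset (a i) (Z i)))))
    {i j : Fin s} {b : Fin n →₀ ℕ}
    (hi : (a i).support ⊆ b.support ∧ b.support ⊆ Z i)
    (hj : (a j).support ⊆ b.support ∧ b.support ⊆ Z j) : i = j := by
  by_contra hij
  exact Sset_disjoint hind hij (indC_mem_Sset_of hN0 hN hi.1 hi.2)
    (indC_mem_Sset_of hN0 hN hj.1 hj.2)

/-- coverage: every monomial of the radical lies in some good new piece -/
lemma new_cover {N : ℕ} (hN0 : N ≠ 0) (hN : ∀ i j, a i j < N)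
    (hspan : Submodule.restrictScalars K I = Submodule.span K (mimage K (Mset a Z)))
    {b : Fin n →₀ ℕ} (hb : ∃ i, (a i).support ⊆ b.support) :
    ∃ i, ((a i).support ⊆ Z i) ∧ (a i).support ⊆ b.support ∧ b.support ⊆ Z i := by
  obtain ⟨i₀, hi₀⟩ := hb
  have hNne : N ≠ 0 := hN0
  set W : Fin n →₀ ℕ := indC b.support N with hW
  have hle : a i₀ ≤ W := by
    rw [Finsupp.le_iff]
    intro j hj
    rw [hW, indC_apply_mem (hi₀ hj)]
    exact le_of_lt (hN i₀ j)
  have hWI : (monomial W (1 : K)) ∈ I := by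
    have : (monomial W (1 : K)) = (monomial (a i₀) (1 : K)) * (monomial (W - a i₀) (1 : K)) := by
      rw [MvPolynomial.monomial_mul, one_mul, add_tsub_cancel_of_le hle]
    rw [this]
    exact Ideal.mul_mem_right _ _ (mono_a_mem hspan i₀)
  rw [mono_mem_I_iff hspan] at hWI
  rcases Set.mem_iUnion.1 hWI with ⟨i, d, hd, hWad⟩
  have hsuppW : W.support = b.support := indC_support hNne
  have hA : (a i).support ⊆ b.support := by
    rw [← hsuppW, hWad]
    exact Finsupp.support_mono le_self_add
  have hTZ : b.support ⊆ Z i := by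
    intro j hj
    have hWj : W j = N := indC_apply_mem hj
    have : d j ≠ 0 := by
      have : a i j + d j = N := by rw [← hWj, hWad]; rfl
      have haij := hN i j
      omega
    exact hd (Finsupp.mem_support_iff.2 this)
  exact ⟨i, hA.trans hTZ, hA, hTZ⟩

end construct
section assemble
open MvPolynomial
variable {K : Type*} [Field K] {n : ℕ}

theorem exists_decomp_radical {I : Ideal (MvPolynomial (Fin n) K)} {k : ℕ} {s : ℕ}
    {u : Fin s → MvPolynomial (Fin n) K} {Z : Fin s → Finset (Fin n)}
    (hd : IsStanleyDecomp I u Z) (hk : ∀ i, k ≤ (Z i).card) :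
    ∃ (s' : ℕ) (u' : Fin s' → MvPolynomial (Fin n) K) (Z' : Fin s' → Finset (Fin n)),
      IsStanleyDecomp I.radical u' Z' ∧ ∀ i, k ≤ (Z' i).card := by
  classical
  obtain ⟨hmono, hindep, hsup⟩ := hd
  choose a ha using hmono
  have hss : ∀ i, stanleySpace (u i) (Z i)
      = Submodule.span K (mimage K (Sset (a i) (Z i))) := fun i => by
    rw [ha i, stanleySpace_monomial]
  have hfun : (fun i => stanleySpace (u i) (Z i))
      = fun i => Submodule.span K (mimage K (Sset (a i) (Z i))) := funext hss
  rw [hfun] at hindep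
  have hspan : Submodule.restrictScalars K I = Submodule.span K (mimage K (Mset a Z)) := by
    rw [← hsup, hfun, iSup_span_monomials]
    rfl
  set N : ℕ := (Finset.univ.sup fun i => Finset.univ.sup fun j => a i j) + 1 with hNdef
  have hN0 : N ≠ 0 := Nat.succ_ne_zero _
  have hN : ∀ i j, a i j < N := by
    intro i j
    apply Nat.lt_succ_of_le
    exact (Finset.le_sup (f := fun j => a i j) (Finset.mem_univ j)).trans
      (Finset.le_sup (f := fun i => Finset.univ.sup fun j => a i j) (Finset.mem_univ i))
  set P : Fin s → Prop := fun i => (a i).support ⊆ Z i with hP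
  set s' := Fintype.card {i // P i} with hs'
  set e : Fin s' ≃ {i // P i} := (Fintype.equivFin {i // P i}).symm with he
  refine ⟨s', fun l => monomial (indC (a (e l).1).support 1) 1, fun l => Z (e l).1,
    ⟨fun l => ⟨_, rfl⟩, ?_, ?_⟩, fun l => hk _⟩
  · -- independence
    rw [iSupIndep_def]
    intro l
    rw [Submodule.disjoint_def]
    intro p hp1 hp2
    rw [stanleySpace_monomial, mem_span_monomials] at hp1
    have hle : (⨆ (m) (_ : m ≠ l),
        stanleySpace (monomial (indC (a (e m).1).support 1) (1 : K)) (Z (e m).1))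
        ≤ Submodule.span K (mimage K
          (⋃ (m) (_ : m ≠ l), Sset (indC (a (e m).1).support 1) (Z (e m).1))) := by
      refine iSup_le fun m => iSup_le fun hm => ?_
      rw [stanleySpace_monomial]
      refine Submodule.span_mono (Set.image_mono ?_)
      intro x hx
      exact Set.mem_iUnion₂.2 ⟨m, hm, hx⟩
    have hp2' := hle hp2
    rw [mem_span_monomials] at hp2'
    rw [← MvPolynomial.support_eq_empty]
    by_contra hne
    obtain ⟨c, hc⟩ := Finset.nonempty_iff_ne_empty.2 hne
    have h1 := (mem_Sset_indC (e l).2).1 (hp1 c hc)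
    obtain ⟨m, hm, hc2⟩ := Set.mem_iUnion₂.1 (hp2' c hc)
    have h2 := (mem_Sset_indC (e m).2).1 hc2
    have : (e m).1 = (e l).1 := new_disjoint hN0 hN hindep h2 h1
    exact hm (e.injective (Subtype.ext this))
  · -- iSup = radical
    apply le_antisymm
    · refine iSup_le fun l => ?_
      rw [stanleySpace_monomial, Submodule.span_le]
      rintro w ⟨b, hb, rfl⟩
      have hb' := (mem_Sset_indC (e l).2).1 hb
      exact (mono_mem_radical_iff hspan b).2 ⟨(e l).1, hb'.1⟩
    · intro p hp
      have hp' : ∀ c ∈ p.support, ∃ i, (a i).support ⊆ c.support :=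
        (poly_mem_radical_iff hspan p).1 hp
      have hmem : p ∈ Submodule.span K
          (mimage K (⋃ l, Sset (indC (a (e l).1).support 1) (Z (e l).1))) := by
        rw [mem_span_monomials]
        intro c hc
        obtain ⟨i, hgood, hA, hZ⟩ := new_cover hN0 hN hspan (hp' c hc)
        refine Set.mem_iUnion.2 ⟨e.symm ⟨i, hgood⟩, ?_⟩
        have hei : (e (e.symm ⟨i, hgood⟩)).1 = i := by rw [e.apply_symm_apply]
        rw [hei]
        exact (mem_Sset_indC hgood).2 ⟨hA, hZ⟩
      rw [← iSup_span_monomials] at hmem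
      have heq : (⨆ l, stanleySpace (monomial (indC (a (e l).1).support 1) (1 : K)) (Z (e l).1))
          = ⨆ l, Submodule.span K (mimage K (Sset (indC (a (e l).1).support 1) (Z (e l).1))) := by
        exact iSup_congr fun l => stanleySpace_monomial _ _
      rw [heq]
      exact hmem

end assemble
open MvPolynomial in
theorem sdepth_le_sdepth_radical' {K : Type*} [Field K] {n : ℕ}
    (I : Ideal (MvPolynomial (Fin n) K)) (hI : IsMonomialIdeal I) :
    sdepth I ≤ sdepth I.radical := by
  classical
  by_cases hbot : I = ⊥
  · subst hbot
    have hrad : (⊥ : Ideal (MvPolynomial (Fin n) K)).radical = ⊥ := by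
      refine le_antisymm ?_ bot_le
      rintro x ⟨m, hm⟩
      rw [Ideal.mem_bot] at hm ⊢
      rcases Nat.eq_zero_or_pos m with rfl | hm0
      · rw [pow_zero] at hm; exact absurd hm one_ne_zero
      · exact (pow_eq_zero_iff (Nat.pos_iff_ne_zero.1 hm0)).1 hm
    rw [hrad]
  · have hIrad : I.radical ≠ ⊥ := fun h => hbot (le_antisymm (h ▸ Ideal.le_radical) bot_le)
    have hBdd : BddAbove {k | ∃ (s : ℕ) (u : Fin s → MvPolynomial (Fin n) K)
        (Z : Fin s → Finset (Fin n)), IsStanleyDecomp I.radical u Z ∧ ∀ i, k ≤ (Z i).card} := by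
      refine ⟨n, ?_⟩
      rintro k ⟨s, u, Z, hd, hk⟩
      rcases Nat.eq_zero_or_pos s with rfl | hs
      · exfalso
        have h22 := hd.2.2
        have h0 : (⨆ i : Fin 0, stanleySpace (u i) (Z i)) = ⊥ := iSup_of_empty _
        rw [h0] at h22
        apply hIrad
        refine (eq_bot_iff).2 ?_
        intro x hx
        have hx' : x ∈ Submodule.restrictScalars K I.radical := hx
        rw [← h22] at hx'
        exact (Submodule.mem_bot _).2 ((Submodule.mem_bot K).1 hx')
      · refine (hk ⟨0, hs⟩).trans ?_
        calc (Z ⟨0, hs⟩).card ≤ (Finset.univ : Finset (Fin n)).card := Finset.card_le_univ _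
          _ = n := by rw [Finset.card_univ, Fintype.card_fin]
    have key : {k | ∃ (s : ℕ) (u : Fin s → MvPolynomial (Fin n) K)
          (Z : Fin s → Finset (Fin n)), IsStanleyDecomp I u Z ∧ ∀ i, k ≤ (Z i).card}
        ⊆ {k | ∃ (s : ℕ) (u : Fin s → MvPolynomial (Fin n) K)
          (Z : Fin s → Finset (Fin n)), IsStanleyDecomp I.radical u Z ∧ ∀ i, k ≤ (Z i).card} := by
      rintro k ⟨s, u, Z, hd, hk⟩
      exact exists_decomp_radical hd hk
    by_cases hA : ({k | ∃ (s : ℕ) (u : Fin s → MvPolynomial (Fin n) K)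
        (Z : Fin s → Finset (Fin n)), IsStanleyDecomp I u Z ∧ ∀ i, k ≤ (Z i).card}).Nonempty
    · exact csSup_le_csSup hBdd hA key
    · rw [Set.not_nonempty_iff_eq_empty] at hA
      unfold sdepth
      rw [hA, csSup_empty]
      exact bot_le

/-- For a monomial ideal `I` of `S = K[x_1,…,x_n]`, `sdepth(I) ≤ sdepth(√I)`. -/
theorem sdepth_le_sdepth_radical {n : ℕ} (I : Ideal (MvPolynomial (Fin n) K))
    (hI : IsMonomialIdeal I) :
    sdepth I ≤ sdepth I.radical := by
  exact sdepth_le_sdepth_radical' I hI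
end

section
/- Let S = K[x_1,x_2] and I = (x_1^2, x_1x_2). Then sdepth(I) = 1 while sdepth(√I) = 2; in particular the inequality sdepth(I) ≤ sdepth(√I) can be strict. -/
open MvPolynomial

variable {K : Type*} [Field K]

namespace SdepthProof

variable {K : Type*} [Field K]

noncomputable def lcoeff {n : ℕ} (c : Fin n →₀ ℕ) : MvPolynomial (Fin n) K →ₗ[K] K where
  toFun p := coeff c p
  map_add' p q := coeff_add c p q
  map_smul' r p := coeff_smul c r p

lemma mem_stanleySpace_self {n : ℕ} (u : MvPolynomial (Fin n) K) (Z : Finset (Fin n)) :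
    u ∈ stanleySpace u Z :=
  Submodule.subset_span ⟨0, by simp, by simp⟩

lemma coeff_stanley {n : ℕ} {d c : Fin n →₀ ℕ} {Z : Finset (Fin n)} {p : MvPolynomial (Fin n) K}
    (hp : p ∈ stanleySpace (monomial d (1:K)) Z) (hc : coeff c p ≠ 0) :
    ∃ e : Fin n →₀ ℕ, ↑e.support ⊆ (Z : Set (Fin n)) ∧ c = d + e := by
  by_contra h
  push_neg at h
  apply hc
  have hle : stanleySpace (monomial d (1:K)) Z ≤ LinearMap.ker (lcoeff c) := by
    rw [stanleySpace, Submodule.span_le]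
    rintro w ⟨e, he, rfl⟩
    simp only [SetLike.mem_coe, LinearMap.mem_ker]
    show coeff c ((monomial d 1 : MvPolynomial (Fin n) K) * monomial e 1) = 0
    rw [monomial_mul, coeff_monomial, if_neg]
    exact fun hde => (h e he) hde.symm
  exact hle hp

lemma stanleySpace_le {n : ℕ} {u : MvPolynomial (Fin n) K} {I : Ideal (MvPolynomial (Fin n) K)}
    (hu : u ∈ I) (Z : Finset (Fin n)) :
    stanleySpace u Z ≤ Submodule.restrictScalars K I := by
  rw [stanleySpace, Submodule.span_le]
  rintro w ⟨e, -, rfl⟩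
  exact Ideal.mul_mem_right _ _ hu

lemma stanleySpace_univ {n : ℕ} (u : MvPolynomial (Fin n) K) :
    stanleySpace u (Finset.univ : Finset (Fin n)) =
      Submodule.restrictScalars K (Ideal.span {u}) := by
  apply le_antisymm
  · exact stanleySpace_le (I := Ideal.span {u}) (Ideal.subset_span rfl) _
  · intro p hp
    obtain ⟨f, rfl⟩ := Ideal.mem_span_singleton.1 hp
    have hrw : u * f = ∑ e ∈ f.support, (coeff e f) • (u * monomial e 1) := by
      conv_lhs => rw [f.as_sum, Finset.mul_sum]
      refine Finset.sum_congr rfl fun e _ => ?_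
      rw [smul_eq_C_mul, mul_left_comm, C_mul_monomial, mul_one]
    rw [hrw]
    exact Submodule.sum_mem _ fun e _ => Submodule.smul_mem _ _
      (Submodule.subset_span ⟨e, by simp, rfl⟩)

local notation "I2" => Ideal.span {(X 0 : MvPolynomial (Fin 2) K) ^ 2, X 0 * X 1}

/-- exponent of x² -/
noncomputable def d1 : Fin 2 →₀ ℕ := Finsupp.single 0 2
/-- exponent of xy -/
noncomputable def d2 : Fin 2 →₀ ℕ := Finsupp.single 0 1 + Finsupp.single 1 1

lemma x2_eq : (X 0 : MvPolynomial (Fin 2) K) ^ 2 = monomial d1 1 :=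
  X_pow_eq_monomial

lemma X_eq {n : ℕ} (i : Fin n) : (X i : MvPolynomial (Fin n) K) = monomial (Finsupp.single i 1) 1 := by
  rw [← pow_one (X i), X_pow_eq_monomial]

lemma xy_eq : (X 0 : MvPolynomial (Fin 2) K) * X 1 = monomial d2 1 := by
  rw [X_eq, X_eq, monomial_mul, mul_one]; rfl

lemma x2_mem : (X 0 : MvPolynomial (Fin 2) K) ^ 2 ∈ I2 :=
  Ideal.subset_span (by simp)

lemma xy_mem : (X 0 : MvPolynomial (Fin 2) K) * X 1 ∈ I2 :=
  Ideal.subset_span (by simp)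

lemma one_not_mem : (1 : MvPolynomial (Fin 2) K) ∉ I2 := by
  intro h
  obtain ⟨f, g, hfg⟩ := Ideal.mem_span_pair.1 h
  have := congrArg (eval (fun _ => (0:K))) hfg
  simp at this

lemma X1_not_mem : (X 1 : MvPolynomial (Fin 2) K) ∉ I2 := by
  intro h
  obtain ⟨f, g, hfg⟩ := Ideal.mem_span_pair.1 h
  have := congrArg (eval (fun i : Fin 2 => if i = 0 then (0:K) else 1)) hfg
  simp at this

lemma X0_not_mem : (X 0 : MvPolynomial (Fin 2) K) ∉ I2 := by
  intro h
  obtain ⟨f, g, hfg⟩ := Ideal.mem_span_pair.1 h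
  have h2 : (X 0 : MvPolynomial (Fin 2) K) * (f * X 0 + g * X 1) = X 0 * 1 := by
    linear_combination hfg
  have h3 := mul_left_cancel₀ (X_ne_zero (0 : Fin 2)) h2
  have := congrArg (eval (fun _ => (0:K))) h3
  simp at this

lemma prime_X0 : Prime (X 0 : MvPolynomial (Fin 2) K) := by
  rw [← MulEquiv.prime_iff (MvPolynomial.finSuccEquiv K 1).toMulEquiv]
  show Prime (MvPolynomial.finSuccEquiv K 1 (X 0))
  rw [MvPolynomial.finSuccEquiv_X_zero]
  exact Polynomial.prime_X

lemma radical_eq : (I2).radical = Ideal.span {(X 0 : MvPolynomial (Fin 2) K)} := by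
  apply le_antisymm
  · rw [Ideal.IsPrime.radical_le_iff
      ((Ideal.span_singleton_prime (X_ne_zero (0 : Fin 2))).2 prime_X0)]
    rw [Ideal.span_le]
    rintro w hw
    simp only [Set.mem_insert_iff, Set.mem_singleton_iff] at hw
    rcases hw with rfl | rfl
    · exact Ideal.mem_span_singleton.2 (dvd_pow_self _ two_ne_zero)
    · exact Ideal.mem_span_singleton.2 (dvd_mul_right _ _)
  · rw [Ideal.span_le]
    rintro w hw
    simp only [Set.mem_singleton_iff] at hw
    subst hw
    exact Ideal.mem_radical_iff.2 ⟨2, x2_mem⟩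

/-- If an ideal has a Stanley decomposition (in the sdepth sense) witnessing `k`, and the
ideal is nonzero, then `k ≤ 2`. -/
lemma k_le_two {I : Ideal (MvPolynomial (Fin 2) K)} (hI : I ≠ ⊥) {k s : ℕ}
    {u : Fin s → MvPolynomial (Fin 2) K} {Z : Fin s → Finset (Fin 2)}
    (hd : IsStanleyDecomp I u Z) (hk : ∀ i, k ≤ (Z i).card) : k ≤ 2 := by
  obtain ⟨-, -, hsup⟩ := hd
  cases s with
  | zero =>
      exfalso
      apply hI
      have : (⨆ i : Fin 0, stanleySpace (u i) (Z i)) = ⊥ := by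
        exact iSup_of_empty _
      rw [this] at hsup
      ext x
      rw [← Submodule.restrictScalars_mem K, ← hsup]
      simp
  | succ m =>
      refine (hk 0).trans ?_
      have := Finset.card_le_univ (Z 0)
      simpa using this

lemma biSup_ne {M : Type*} [AddCommMonoid M] [Module K M] (f : Fin 2 → Submodule K M) :
    ((⨆ j, ⨆ (_ : j ≠ 0), f j) = f 1) ∧ ((⨆ j, ⨆ (_ : j ≠ 1), f j) = f 0) := by
  constructor
  · apply le_antisymm
    · refine iSup_le fun j => iSup_le fun hj => ?_
      fin_cases j
      · exact absurd rfl hj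
      · exact le_rfl
    · exact le_iSup_of_le 1 (le_iSup_of_le (by decide) le_rfl)
  · apply le_antisymm
    · refine iSup_le fun j => iSup_le fun hj => ?_
      fin_cases j
      · exact le_rfl
      · exact absurd rfl hj
    · exact le_iSup_of_le 0 (le_iSup_of_le (by decide) le_rfl)

lemma indep_two {M : Type*} [AddCommMonoid M] [Module K M] {f : Fin 2 → Submodule K M}
    (h01 : Disjoint (f 0) (f 1)) : iSupIndep f := by
  rw [iSupIndep_def]
  intro i
  rcases (by omega : i = 0 ∨ i = 1) with rfl | rfl
  · rw [(biSup_ne f).1]; exact h01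
  · rw [(biSup_ne f).2]; exact h01.symm

lemma iSup_fin_two {M : Type*} [AddCommMonoid M] [Module K M] (f : Fin 2 → Submodule K M) :
    (⨆ i, f i) = f 0 ⊔ f 1 := by
  apply le_antisymm
  · refine iSup_le fun i => ?_
    fin_cases i
    · exact le_sup_left
    · exact le_sup_right
  · exact sup_le (le_iSup f 0) (le_iSup f 1)

/-- The Stanley decomposition `I = x²K[x₁] ⊕ xyK[x₁,x₂]`. -/
lemma decomp_I : IsStanleyDecomp (I2)
    (![(X 0 : MvPolynomial (Fin 2) K) ^ 2, X 0 * X 1])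
    (![{0}, Finset.univ]) := by
  set f : Fin 2 → Submodule K (MvPolynomial (Fin 2) K) := fun i =>
    stanleySpace (![(X 0 : MvPolynomial (Fin 2) K) ^ 2, X 0 * X 1] i) (![{0}, Finset.univ] i)
    with hf
  have hf0 : f 0 = stanleySpace ((X 0 : MvPolynomial (Fin 2) K) ^ 2) {0} := rfl
  have hf1 : f 1 = stanleySpace ((X 0 : MvPolynomial (Fin 2) K) * X 1) Finset.univ := rfl
  refine ⟨?_, ?_, ?_⟩
  · intro i
    fin_cases i
    · exact ⟨d1, x2_eq⟩
    · exact ⟨d2, xy_eq⟩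
  · apply indep_two
    rw [Submodule.disjoint_def]
    simp only [Matrix.cons_val_zero, Matrix.cons_val_one, Matrix.head_cons]
    intro p hp0 hp1
    rw [x2_eq] at hp0
    rw [xy_eq] at hp1
    rw [eq_zero_iff]
    intro c
    by_contra hc
    obtain ⟨e1, he1, hce1⟩ := coeff_stanley hp0 hc
    obtain ⟨e2, he2, hce2⟩ := coeff_stanley hp1 hc
    have h1 : c 1 = d1 1 + e1 1 := by rw [hce1]; rfl
    have h2 : c 1 = d2 1 + e2 1 := by rw [hce2]; rfl
    have he10 : e1 1 = 0 := by
      by_contra h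
      have : (1 : Fin 2) ∈ e1.support := Finsupp.mem_support_iff.2 h
      have := he1 this
      simp at this
    have hd11 : d1 1 = 0 := by simp [d1, Finsupp.single_apply]
    have hd21 : d2 1 = 1 := by simp [d2, Finsupp.single_apply]
    omega
  · apply le_antisymm
    · refine iSup_le fun i => ?_
      fin_cases i
      · exact stanleySpace_le x2_mem _
      · exact stanleySpace_le xy_mem _
    · intro p hp
      obtain ⟨a, b, hab⟩ := Ideal.mem_span_pair.1 (Submodule.restrictScalars_mem K _ _ |>.1 hp)
      rw [← hab]
      refine Submodule.add_mem _ ?_ ?_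
      · -- a * x² ∈ f 0 ⊔ f 1 ≤ ⨆
        have hmem : a * (X 0 : MvPolynomial (Fin 2) K) ^ 2 ∈
            stanleySpace ((X 0 : MvPolynomial (Fin 2) K) ^ 2) Finset.univ := by
          rw [stanleySpace_univ]
          exact Ideal.mem_span_singleton.2 (dvd_mul_left _ _)
        have hle : stanleySpace ((X 0 : MvPolynomial (Fin 2) K) ^ 2) Finset.univ ≤ ⨆ i, f i := by
          rw [stanleySpace, Submodule.span_le]
          rintro w ⟨e, -, rfl⟩
          by_cases h : e 1 = 0
          · refine (le_iSup f 0) ?_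
            rw [hf0]
            refine Submodule.subset_span ⟨e, ?_, rfl⟩
            intro j hj
            simp only [Finset.coe_singleton, Set.mem_singleton_iff]
            simp only [Finsupp.mem_support_iff, Finset.mem_coe] at hj
            fin_cases j
            · rfl
            · exact absurd h hj
          · refine (le_iSup f 1) ?_
            rw [hf1]
            refine Submodule.subset_span
              ⟨Finsupp.single 0 (e 0 + 1) + Finsupp.single 1 (e 1 - 1), by simp, ?_⟩
            rw [x2_eq, xy_eq, monomial_mul, monomial_mul, mul_one]
            refine congrArg (fun d => monomial d (1:K)) ?_
            ext t
            fin_cases t <;>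
              simp [d1, d2, Finsupp.single_apply] <;> omega
        exact hle hmem
      · refine (le_iSup f 1) ?_
        rw [hf1, stanleySpace_univ]
        exact Ideal.mem_span_singleton.2 (dvd_mul_left _ _)

end SdepthProof

namespace SdepthProof

variable {K : Type*} [Field K]

lemma indep_one {M : Type*} [AddCommMonoid M] [Module K M] (f : Fin 1 → Submodule K M) :
    iSupIndep f := by
  rw [iSupIndep_def]
  intro i
  have h : (⨆ j, ⨆ (_ : j ≠ i), f j) = ⊥ :=
    le_bot_iff.1 (iSup_le fun j => iSup_le fun hj => absurd (Subsingleton.elim j i) hj)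
  rw [h]
  exact disjoint_bot_right

lemma decomp_rad : IsStanleyDecomp (Ideal.span {(X 0 : MvPolynomial (Fin 2) K)})
    (fun _ : Fin 1 => X 0) (fun _ => Finset.univ) := by
  refine ⟨fun _ => ⟨Finsupp.single 0 1, X_eq 0⟩, indep_one _, ?_⟩
  rw [iSup_unique]
  exact stanleySpace_univ _

lemma exists_divisor {s : ℕ} {u : Fin s → MvPolynomial (Fin 2) K} {Z : Fin s → Finset (Fin 2)}
    (hmon : ∀ i, IsMonomial (u i))
    (hsup : (⨆ i, stanleySpace (u i) (Z i)) =
      Submodule.restrictScalars K (Ideal.span {(X 0 : MvPolynomial (Fin 2) K) ^ 2, X 0 * X 1}))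
    {p : MvPolynomial (Fin 2) K}
    (hp : p ∈ Ideal.span {(X 0 : MvPolynomial (Fin 2) K) ^ 2, X 0 * X 1})
    {c : Fin 2 →₀ ℕ} (hc : coeff c p ≠ 0) :
    ∃ (i : Fin s) (d e : Fin 2 →₀ ℕ), u i = monomial d 1 ∧ c = d + e := by
  have hp' : p ∈ ⨆ i, stanleySpace (u i) (Z i) := by rw [hsup]; exact hp
  obtain ⟨g, hg, hgsum⟩ := (Submodule.mem_iSup_iff_exists_finsupp _ _).1 hp'
  rw [Finsupp.sum] at hgsum
  have hsumc : coeff c p = ∑ i ∈ g.support, coeff c (g i) := by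
    rw [← hgsum, coeff_sum]
  rw [hsumc] at hc
  obtain ⟨i, -, hi⟩ := Finset.exists_ne_zero_of_sum_ne_zero hc
  obtain ⟨d, hd⟩ := hmon i
  obtain ⟨e, -, hce⟩ := coeff_stanley (by rw [← hd]; exact hg i) hi
  exact ⟨i, d, e, hd, hce⟩

lemma d2_ne_d1 : (d2 : Fin 2 →₀ ℕ) ≠ d1 := by
  intro hq
  have := DFunLike.congr_fun hq 1
  simp [d1, d2, Finsupp.single_apply] at this

lemma no_two {s : ℕ} {u : Fin s → MvPolynomial (Fin 2) K} {Z : Fin s → Finset (Fin 2)}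
    (hdec : IsStanleyDecomp (Ideal.span {(X 0 : MvPolynomial (Fin 2) K) ^ 2, X 0 * X 1}) u Z)
    (hZ : ∀ i, 2 ≤ (Z i).card) : False := by
  obtain ⟨hmon, hindep, hsup⟩ := hdec
  have hZu : ∀ i, Z i = Finset.univ := fun i =>
    (Finset.card_eq_iff_eq_univ _).1
      (le_antisymm (by simpa using Finset.card_le_univ (Z i)) (by simpa using hZ i))
  have humem : ∀ i, u i ∈ Ideal.span {(X 0 : MvPolynomial (Fin 2) K) ^ 2, X 0 * X 1} :=
    fun i => (Submodule.restrictScalars_mem K _ _).1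
      (hsup ▸ (le_iSup (fun i => stanleySpace (u i) (Z i)) i)
        (mem_stanleySpace_self (u i) (Z i)))
  -- find the index containing x²
  have hx2c : coeff d1 ((X 0 : MvPolynomial (Fin 2) K) ^ 2) ≠ 0 := by
    rw [x2_eq, coeff_monomial, if_pos rfl]
    exact one_ne_zero
  obtain ⟨i, d, e, hdi, hce⟩ := exists_divisor hmon hsup x2_mem hx2c
  have h0 : d 0 + e 0 = 2 := by
    have := DFunLike.congr_fun hce 0
    simpa [d1, Finsupp.single_apply] using this.symm
  have h1 : d 1 = 0 := by
    have := DFunLike.congr_fun hce 1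
    simp [d1, Finsupp.single_apply] at this
    omega
  have hd : d = d1 := by
    rcases (by omega : d 0 = 0 ∨ d 0 = 1 ∨ d 0 = 2) with h | h | h
    · exfalso
      apply one_not_mem (K := K)
      have hdz : d = 0 := by
        ext t
        rcases (by omega : t = 0 ∨ t = 1) with rfl | rfl
        · exact h
        · exact h1
      rw [hdz] at hdi
      simp only [monomial_zero', C_1] at hdi
      exact hdi ▸ humem i
    · exfalso
      apply X0_not_mem (K := K)
      have hdz : d = Finsupp.single 0 1 := by
        ext t
        rcases (by omega : t = 0 ∨ t = 1) with rfl | rfl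
        · simpa [Finsupp.single_apply] using h
        · simpa [Finsupp.single_apply] using h1
      rw [hdz, ← X_eq] at hdi
      exact hdi ▸ humem i
    · ext t
      rcases (by omega : t = 0 ∨ t = 1) with rfl | rfl
      · simpa [d1, Finsupp.single_apply] using h
      · simpa [d1, Finsupp.single_apply] using h1
  -- find the index containing xy
  have hxyc : coeff d2 ((X 0 : MvPolynomial (Fin 2) K) * X 1) ≠ 0 := by
    rw [xy_eq, coeff_monomial, if_pos rfl]
    exact one_ne_zero
  obtain ⟨j, d', e', hdj, hce'⟩ := exists_divisor hmon hsup xy_mem hxyc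
  have h0' : d' 0 + e' 0 = 1 := by
    have := DFunLike.congr_fun hce' 0
    simpa [d2, Finsupp.single_apply] using this.symm
  have h1' : d' 1 + e' 1 = 1 := by
    have := DFunLike.congr_fun hce' 1
    simpa [d2, Finsupp.single_apply] using this.symm
  have hd' : d' = d2 := by
    rcases (by omega : d' 0 = 0 ∨ d' 0 = 1) with ha | ha <;>
      rcases (by omega : d' 1 = 0 ∨ d' 1 = 1) with hb | hb
    · exfalso
      apply one_not_mem (K := K)
      have hdz : d' = 0 := by
        ext t
        rcases (by omega : t = 0 ∨ t = 1) with rfl | rfl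
        · exact ha
        · exact hb
      rw [hdz] at hdj
      simp only [monomial_zero', C_1] at hdj
      exact hdj ▸ humem j
    · exfalso
      apply X1_not_mem (K := K)
      have hdz : d' = Finsupp.single 1 1 := by
        ext t
        rcases (by omega : t = 0 ∨ t = 1) with rfl | rfl
        · simpa [Finsupp.single_apply] using ha
        · simpa [Finsupp.single_apply] using hb
      rw [hdz, ← X_eq] at hdj
      exact hdj ▸ humem j
    · exfalso
      apply X0_not_mem (K := K)
      have hdz : d' = Finsupp.single 0 1 := by
        ext t
        rcases (by omega : t = 0 ∨ t = 1) with rfl | rfl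
        · simpa [Finsupp.single_apply] using ha
        · simpa [Finsupp.single_apply] using hb
      rw [hdz, ← X_eq] at hdj
      exact hdj ▸ humem j
    · ext t
      rcases (by omega : t = 0 ∨ t = 1) with rfl | rfl
      · simpa [d2, Finsupp.single_apply] using ha
      · simpa [d2, Finsupp.single_apply] using hb
  have hne : j ≠ i := by
    rintro rfl
    rw [hdi, hd] at hdj
    have := congrArg (coeff d1) hdj
    rw [coeff_monomial, if_pos rfl, coeff_monomial, if_neg (hd' ▸ d2_ne_d1)] at this
    exact one_ne_zero this
  -- the monomial x²y lies in both spaces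
  set m : MvPolynomial (Fin 2) K := monomial (d1 + Finsupp.single 1 1) 1 with hm
  have hmi : m ∈ stanleySpace (u i) (Z i) := by
    rw [hdi, hd]
    refine Submodule.subset_span ⟨Finsupp.single 1 1, ?_, ?_⟩
    · rw [hZu i]; simp
    · rw [monomial_mul, mul_one]
  have hmj : m ∈ stanleySpace (u j) (Z j) := by
    rw [hdj, hd']
    refine Submodule.subset_span ⟨Finsupp.single 0 1, ?_, ?_⟩
    · rw [hZu j]; simp
    · rw [monomial_mul, mul_one, hm]
      refine congrArg (fun dd => monomial dd (1:K)) ?_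
      ext t
      rcases (by omega : t = 0 ∨ t = 1) with rfl | rfl <;>
        simp [d1, d2, Finsupp.single_apply]
  have hdisj := iSupIndep_def.1 hindep i
  have hmle : stanleySpace (u j) (Z j) ≤ ⨆ j', ⨆ (_ : j' ≠ i), stanleySpace (u j') (Z j') :=
    le_iSup_of_le j (le_iSup_of_le hne le_rfl)
  have hm0 : m = 0 := Submodule.disjoint_def.1 hdisj m hmi (hmle hmj)
  have : coeff (d1 + Finsupp.single 1 1) m = 0 := by rw [hm0]; simp
  rw [hm, coeff_monomial, if_pos rfl] at this
  exact one_ne_zero this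

end SdepthProof

/-- For `I = (x_1², x_1x_2) ⊆ K[x_1,x_2]`, `sdepth(I) = 1` while
`sdepth(√I) = 2`; in particular the inequality `sdepth(I) ≤ sdepth(√I)` can be strict. -/
theorem sdepth_example_strict :
    sdepth (Ideal.span {(X 0 : MvPolynomial (Fin 2) K) ^ 2, X 0 * X 1}) = 1 ∧
    sdepth (Ideal.span {(X 0 : MvPolynomial (Fin 2) K) ^ 2, X 0 * X 1}).radical = 2 ∧
    sdepth (Ideal.span {(X 0 : MvPolynomial (Fin 2) K) ^ 2, X 0 * X 1}) <
      sdepth (Ideal.span {(X 0 : MvPolynomial (Fin 2) K) ^ 2, X 0 * X 1}).radical := by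
  open SdepthProof in
  have h1 : sdepth (Ideal.span {(X 0 : MvPolynomial (Fin 2) K) ^ 2, X 0 * X 1}) = 1 := by
    unfold sdepth
    have mem1 : 1 ∈ { k | ∃ (s : ℕ) (u : Fin s → MvPolynomial (Fin 2) K)
        (Z : Fin s → Finset (Fin 2)),
        IsStanleyDecomp (Ideal.span {(X 0 : MvPolynomial (Fin 2) K) ^ 2, X 0 * X 1}) u Z ∧
        ∀ i, 1 ≤ (Z i).card } := by
      refine ⟨2, ![(X 0 : MvPolynomial (Fin 2) K) ^ 2, X 0 * X 1], ![{0}, Finset.univ],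
        decomp_I, ?_⟩
      intro i
      rcases (by omega : i = 0 ∨ i = 1) with rfl | rfl <;> simp
    have bound : ∀ k ∈ { k | ∃ (s : ℕ) (u : Fin s → MvPolynomial (Fin 2) K)
        (Z : Fin s → Finset (Fin 2)),
        IsStanleyDecomp (Ideal.span {(X 0 : MvPolynomial (Fin 2) K) ^ 2, X 0 * X 1}) u Z ∧
        ∀ i, k ≤ (Z i).card }, k ≤ 1 := by
      rintro k ⟨s, u, Z, hdec, hk⟩
      by_contra hk1
      push_neg at hk1
      exact no_two hdec fun i => le_trans hk1 (hk i)
    exact le_antisymm (csSup_le ⟨1, mem1⟩ bound) (le_csSup ⟨1, bound⟩ mem1)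
  have h2 : sdepth (Ideal.span {(X 0 : MvPolynomial (Fin 2) K) ^ 2, X 0 * X 1}).radical = 2 := by
    rw [radical_eq]
    unfold sdepth
    have mem2 : 2 ∈ { k | ∃ (s : ℕ) (u : Fin s → MvPolynomial (Fin 2) K)
        (Z : Fin s → Finset (Fin 2)),
        IsStanleyDecomp (Ideal.span {(X 0 : MvPolynomial (Fin 2) K)}) u Z ∧
        ∀ i, 2 ≤ (Z i).card } := by
      refine ⟨1, fun _ => X 0, fun _ => Finset.univ, decomp_rad, ?_⟩
      intro i
      simp
    have bound : ∀ k ∈ { k | ∃ (s : ℕ) (u : Fin s → MvPolynomial (Fin 2) K)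
        (Z : Fin s → Finset (Fin 2)),
        IsStanleyDecomp (Ideal.span {(X 0 : MvPolynomial (Fin 2) K)}) u Z ∧
        ∀ i, k ≤ (Z i).card }, k ≤ 2 := by
      rintro k ⟨s, u, Z, hdec, hk⟩
      refine k_le_two ?_ hdec hk
      rw [Ne, Ideal.span_singleton_eq_bot]
      exact X_ne_zero 0
    exact le_antisymm (csSup_le ⟨2, mem2⟩ bound) (le_csSup ⟨2, bound⟩ mem2)
  exact ⟨h1, h2, by rw [h1, h2]; omega⟩
end

section
/- Let Q and Q' be monomial primary ideals of S = K[x_1,…,x_n] with √Q = (x_1,…,x_t) and √Q' = (x_1,…,x_n), where 1 ≤ t ≤ n. Then sdepth(Q ∩ Q') ≤ n − ⌊t/2⌋. -/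
open MvPolynomial

variable {K : Type*} [Field K]

/-- Auxiliary: the polynomials with support inside `A` form a submodule. -/
def suppSubmodule {n : ℕ} (A : Set (Fin n →₀ ℕ)) : Submodule K (MvPolynomial (Fin n) K) where
  carrier := {p | ↑p.support ⊆ A}
  zero_mem' := by simp
  add_mem' := by
    classical
    intro p q hp hq x hx
    have hx2 : x ∈ (p + q).support := hx
    have hx' := MvPolynomial.support_add hx2
    rcases Finset.mem_union.mp hx' with h | h
    · exact hp h
    · exact hq h
  smul_mem' := by
    intro c p hp
    exact Set.Subset.trans (fun x hx => MvPolynomial.support_smul hx) hp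

lemma supp_subset_of_mem_span_monomials {n : ℕ} {A : Set (Fin n →₀ ℕ)}
    {p : MvPolynomial (Fin n) K}
    (hp : p ∈ Submodule.span K ((fun e => (monomial e (1 : K))) '' A)) :
    ↑p.support ⊆ A := by
  classical
  have hle : Submodule.span K ((fun e => (monomial e (1 : K))) '' A) ≤ suppSubmodule A := by
    rw [Submodule.span_le]
    rintro _ ⟨e, he, rfl⟩
    show ↑(monomial e (1 : K)).support ⊆ A
    rw [support_monomial]
    simp [he]
  exact hle hp

/-- If `Q, Q'` are monomial primary ideals with `√Q = (x_1,…,x_t)` and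
`√Q' = (x_1,…,x_n)`, `1 ≤ t ≤ n`, then `sdepth(Q ∩ Q') ≤ n − ⌊t/2⌋`. -/
theorem sdepth_inter_le_of_radical_subset {n t : ℕ} (ht1 : 1 ≤ t) (htn : t ≤ n)
    (Q Q' : Ideal (MvPolynomial (Fin n) K))
    (hQm : IsMonomialIdeal Q) (hQ'm : IsMonomialIdeal Q')
    (hQp : Q.IsPrimary) (hQ'p : Q'.IsPrimary)
    (hQr : Q.radical =
      Ideal.span ((fun i => (X i : MvPolynomial (Fin n) K)) '' {i | (i : ℕ) < t}))
    (hQ'r : Q'.radical = Ideal.span (Set.range (X : Fin n → MvPolynomial (Fin n) K))) :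
    sdepth (Q ⊓ Q') ≤ n - t / 2 := by
  classical
  refine csSup_le' ?_
  rintro k ⟨s, u, Z, ⟨hmon, hindep, hsup⟩, hk⟩
  -- 1 ∉ Q
  have h1Q : (1 : MvPolynomial (Fin n) K) ∉ Q := by
    intro h1
    have h1r : (1 : MvPolynomial (Fin n) K) ∈ Q.radical := Q.le_radical h1
    rw [hQr] at h1r
    have hle : Ideal.span ((fun i => (X i : MvPolynomial (Fin n) K)) '' {i | (i : ℕ) < t}) ≤
        RingHom.ker (constantCoeff : MvPolynomial (Fin n) K →+* K) := by
      rw [Ideal.span_le]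
      rintro _ ⟨i, -, rfl⟩
      simp [RingHom.mem_ker]
    have := hle h1r
    simp [RingHom.mem_ker] at this
  -- a uniform power N with X j ^ N ∈ Q ⊓ Q' for j < t
  have hpow : ∀ j : Fin n, ∃ m, ((j : ℕ) < t → (X j : MvPolynomial (Fin n) K) ^ m ∈ Q) ∧
      (X j : MvPolynomial (Fin n) K) ^ m ∈ Q' := by
    intro j
    have hj' : (X j : MvPolynomial (Fin n) K) ∈ Q'.radical := by
      rw [hQ'r]; exact Ideal.subset_span ⟨j, rfl⟩
    obtain ⟨m2, hm2⟩ := Ideal.mem_radical_iff.mp hj'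
    by_cases hj : (j : ℕ) < t
    · have hjQ : (X j : MvPolynomial (Fin n) K) ∈ Q.radical := by
        rw [hQr]; exact Ideal.subset_span ⟨j, hj, rfl⟩
      obtain ⟨m1, hm1⟩ := Ideal.mem_radical_iff.mp hjQ
      refine ⟨m1 + m2, fun _ => ?_, ?_⟩
      · rw [pow_add]; exact Ideal.mul_mem_right _ _ hm1
      · rw [pow_add]; exact Ideal.mul_mem_left _ _ hm2
    · exact ⟨m2, fun h => absurd h hj, hm2⟩
  choose m hm using hpow
  set N := Finset.univ.sup m with hNdef
  have hNQ : ∀ j : Fin n, (j : ℕ) < t →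
      (monomial (Finsupp.single j N) (1 : K) : MvPolynomial (Fin n) K) ∈ Q ⊓ Q' := by
    intro j hj
    rw [← X_pow_eq_monomial]
    have hmle : m j ≤ N := Finset.le_sup (Finset.mem_univ j)
    have hsplit : (X j : MvPolynomial (Fin n) K) ^ N =
        (X j) ^ (N - m j) * (X j) ^ (m j) := by
      rw [← pow_add]; congr 1; omega
    rw [hsplit]
    exact ⟨Ideal.mul_mem_left _ _ ((hm j).1 hj), Ideal.mul_mem_left _ _ (hm j).2⟩
  -- exponent vectors of the monomials u i
  choose dvec hd using hmon
  set Dset : Fin s → Set (Fin n →₀ ℕ) := fun i =>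
    {e | ∃ f : Fin n →₀ ℕ, ↑f.support ⊆ (Z i : Set (Fin n)) ∧ e = dvec i + f} with hDdef
  have hSS : ∀ i, stanleySpace (u i) (Z i) =
      Submodule.span K ((fun e => (monomial e (1 : K))) '' Dset i) := by
    intro i
    unfold stanleySpace
    congr 1
    ext w
    constructor
    · rintro ⟨d, hdZ, rfl⟩
      exact ⟨dvec i + d, ⟨d, hdZ, rfl⟩, by rw [hd i, monomial_mul, one_mul]⟩
    · rintro ⟨e, ⟨f, hf, rfl⟩, rfl⟩
      exact ⟨f, hf, by rw [hd i, monomial_mul, one_mul]⟩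
  -- membership lemmas
  have hmemD : ∀ i e, e ∈ Dset i →
      (monomial e (1 : K) : MvPolynomial (Fin n) K) ∈ Q ⊓ Q' := by
    intro i e he
    have h1 : (monomial e (1 : K) : MvPolynomial (Fin n) K) ∈ stanleySpace (u i) (Z i) := by
      rw [hSS i]; exact Submodule.subset_span ⟨e, he, rfl⟩
    have h2 : stanleySpace (u i) (Z i) ≤ Submodule.restrictScalars K (Q ⊓ Q') := by
      rw [← hsup]; exact le_iSup (fun i => stanleySpace (u i) (Z i)) i
    exact h2 h1
  have hext : ∀ e : Fin n →₀ ℕ,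
      (monomial e (1 : K) : MvPolynomial (Fin n) K) ∈ Q ⊓ Q' → ∃ i, e ∈ Dset i := by
    intro e he
    have h1 : (monomial e (1 : K) : MvPolynomial (Fin n) K) ∈
        (⨆ i, stanleySpace (u i) (Z i)) := by rw [hsup]; exact he
    have heq : (⨆ i, stanleySpace (u i) (Z i)) =
        Submodule.span K ((fun e => (monomial e (1 : K))) '' ⋃ i, Dset i) := by
      rw [Set.image_iUnion, Submodule.span_iUnion]
      exact iSup_congr hSS
    rw [heq] at h1
    have hsupp := supp_subset_of_mem_span_monomials h1
    have he' : e ∈ (monomial e (1 : K) : MvPolynomial (Fin n) K).support := by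
      rw [support_monomial]; simp
    have := hsupp he'
    simpa using this
  -- disjointness of the monomial sets
  have hdisj : ∀ i i', i ≠ i' → ∀ e, e ∈ Dset i → e ∈ Dset i' → False := by
    intro i i' hne e he he'
    have h1 : (monomial e (1 : K) : MvPolynomial (Fin n) K) ∈ stanleySpace (u i) (Z i) := by
      rw [hSS i]; exact Submodule.subset_span ⟨e, he, rfl⟩
    have h2 : (monomial e (1 : K) : MvPolynomial (Fin n) K) ∈
        ⨆ j, ⨆ (_ : j ≠ i), stanleySpace (u j) (Z j) := by
      have hmem : (monomial e (1 : K) : MvPolynomial (Fin n) K) ∈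
          stanleySpace (u i') (Z i') := by
        rw [hSS i']; exact Submodule.subset_span ⟨e, he', rfl⟩
      exact le_biSup (fun j => stanleySpace (u j) (Z j)) hne.symm hmem
    have h0 := Submodule.disjoint_def.mp (hindep i) _ h1 h2
    have : (1 : K) = 0 := by
      have := congrArg (fun p => MvPolynomial.coeff e p) h0
      simpa using this
    exact one_ne_zero this
  -- nonemptiness of Fin s
  have hj0 : (0 : ℕ) < n := lt_of_lt_of_le ht1 htn
  obtain ⟨i0, -⟩ := hext (Finsupp.single ⟨0, hj0⟩ N) (hNQ ⟨0, hj0⟩ (by show 0 < t; omega))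
  haveI : Nonempty (Fin s) := ⟨i0⟩
  -- choose the piece containing X j ^ N for j < t
  have hchoice : ∀ j : Fin n, ∃ (i : Fin s) (f : Fin n →₀ ℕ), (j : ℕ) < t →
      (↑f.support ⊆ (Z i : Set (Fin n)) ∧ Finsupp.single j N = dvec i + f) := by
    intro j
    by_cases hj : (j : ℕ) < t
    · obtain ⟨i, f, hf, he⟩ := hext (Finsupp.single j N) (hNQ j hj)
      exact ⟨i, f, fun _ => ⟨hf, he⟩⟩
    · exact ⟨Classical.arbitrary _, 0, fun h => absurd h hj⟩
  choose idx fvec hidx using hchoice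
  -- distinct j < t give distinct pieces
  have hkey : ∀ j j' : Fin n, (j : ℕ) < t → (j' : ℕ) < t → j ≠ j' → idx j ≠ idx j' := by
    intro j j' hj hj' hne heq
    obtain ⟨hfj, hej⟩ := hidx j hj
    obtain ⟨hfj', hej'⟩ := hidx j' hj'
    have hd0 : dvec (idx j) = 0 := by
      ext x
      have h1 : dvec (idx j) x ≤ Finsupp.single j N x := by
        rw [hej]; simp [Finsupp.add_apply]
      have h2 : dvec (idx j) x ≤ Finsupp.single j' N x := by
        rw [heq, hej']; simp [Finsupp.add_apply]
      rcases eq_or_ne x j with rfl | hx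
      · have hz : Finsupp.single j' N x = 0 := Finsupp.single_eq_of_ne' hne.symm
        simpa [hz] using h2
      · have hz : Finsupp.single j N x = 0 := Finsupp.single_eq_of_ne' hx.symm
        simpa [hz] using h1
    have h0mem : (0 : Fin n →₀ ℕ) ∈ Dset (idx j) := ⟨0, by simp, by rw [hd0]; simp⟩
    have h1I := (hmemD _ _ h0mem).1
    rw [monomial_zero', map_one] at h1I
    exact h1Q h1I
  -- the finset of relevant variables
  set T : Finset (Fin n) := Finset.univ.filter (fun j => (j : ℕ) < t) with hTdef
  have hTcard : T.card = t := by
    have himg : T = Finset.image (Fin.castLE htn) Finset.univ := by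
      ext x
      constructor
      · intro hx
        have hx' : (x : ℕ) < t := by simpa [hTdef] using hx
        exact Finset.mem_image.mpr ⟨⟨(x : ℕ), hx'⟩, Finset.mem_univ _, by ext; simp [Fin.castLE]⟩
      · intro hx
        obtain ⟨y, -, rfl⟩ := Finset.mem_image.mp hx
        simpa [hTdef, Fin.castLE] using y.2
    rw [himg, Finset.card_image_of_injective _ (Fin.castLE_injective htn),
      Finset.card_univ, Fintype.card_fin]
  set A : Fin n → Finset (Fin n) := fun j => (Z (idx j)) ∩ (T.erase j) with hAdef
  -- the double-counting set
  set sset : Finset (Fin n × Fin n) := T.biUnion (fun j => {j} ×ˢ A j) with hsdef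
  have hmemsset : ∀ p : Fin n × Fin n, p ∈ sset → p.1 ∈ T ∧ p.2 ∈ A p.1 := by
    intro p hp
    simp only [hsdef, Finset.mem_biUnion, Finset.mem_product, Finset.mem_singleton] at hp
    obtain ⟨j, hjT, hp1, hp2⟩ := hp
    subst hp1
    exact ⟨hjT, hp2⟩
  have hcard1 : sset.card = ∑ j ∈ T, (A j).card := by
    rw [hsdef, Finset.card_biUnion]
    · refine Finset.sum_congr rfl fun j _ => ?_
      rw [Finset.card_product, Finset.card_singleton, one_mul]
    · intro a _ b _ hab
      rw [Function.onFun, Finset.disjoint_left]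
      rintro p hp hp'
      simp only [Finset.mem_product, Finset.mem_singleton] at hp hp'
      exact hab (hp.1 ▸ hp'.1 ▸ rfl)
  -- the key injection into 2-element subsets of T
  have hcard2 : sset.card ≤ (T.powersetCard 2).card := by
    apply Finset.card_le_card_of_injOn (fun p => ({p.1, p.2} : Finset (Fin n)))
    · intro p hp
      obtain ⟨hp1, hp2⟩ := hmemsset p hp
      have hp2' : p.2 ∈ T.erase p.1 := (Finset.mem_inter.mp hp2).2
      simp only [Finset.mem_coe]
      rw [Finset.mem_powersetCard]
      constructor
      · intro x hx
        rcases Finset.mem_insert.mp hx with rfl | hx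
        · exact hp1
        · rw [Finset.mem_singleton] at hx
          exact hx ▸ Finset.mem_of_mem_erase hp2'
      · exact Finset.card_pair (Finset.ne_of_mem_erase hp2').symm
    · rintro ⟨a, b⟩ ha ⟨c, d⟩ hc heq
      obtain ⟨haT, hbA⟩ := hmemsset _ ha
      obtain ⟨hcT, hdA⟩ := hmemsset _ hc
      have hbZ : b ∈ Z (idx a) := (Finset.mem_inter.mp hbA).1
      have hbe : b ∈ T.erase a := (Finset.mem_inter.mp hbA).2
      have hdZ : d ∈ Z (idx c) := (Finset.mem_inter.mp hdA).1
      have hde : d ∈ T.erase c := (Finset.mem_inter.mp hdA).2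
      have hba : b ≠ a := Finset.ne_of_mem_erase hbe
      have hdc : d ≠ c := Finset.ne_of_mem_erase hde
      simp only at heq
      by_cases hac : a = c
      · subst hac
        have hbmem : b ∈ ({a, d} : Finset (Fin n)) := by
          rw [← heq]; simp
        rcases Finset.mem_insert.mp hbmem with h | h
        · exact absurd h hba
        · rw [Finset.mem_singleton] at h; simp [h]
      · -- a = d and c = b; derive a contradiction
        have had : a = d := by
          have : a ∈ ({c, d} : Finset (Fin n)) := by rw [← heq]; simp
          rcases Finset.mem_insert.mp this with h | h
          · exact absurd h hac
          · exact Finset.mem_singleton.mp h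
        have hcb : c = b := by
          have : c ∈ ({a, b} : Finset (Fin n)) := by rw [heq]; simp
          rcases Finset.mem_insert.mp this with h | h
          · exact absurd h.symm hac
          · exact Finset.mem_singleton.mp h
        exfalso
        have haT' : (a : ℕ) < t := by
          rw [hTdef] at haT; simpa using haT
        have hcT' : (c : ℕ) < t := by
          rw [hTdef] at hcT; simpa using hcT
        obtain ⟨hfa, hea⟩ := hidx a haT'
        obtain ⟨hfc, hec⟩ := hidx c hcT'
        have h1 : (Finsupp.single a N + Finsupp.single c N) ∈ Dset (idx a) := by
          refine ⟨fvec a + Finsupp.single c N, ?_, by rw [hea, add_assoc]⟩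
          intro x hx
          have hx2 : x ∈ (fvec a + Finsupp.single c N).support := hx
          have hx' := Finsupp.support_add hx2
          rcases Finset.mem_union.mp hx' with h | h
          · exact hfa h
          · have hxc : x = c := by simpa using Finsupp.support_single_subset h
            subst hxc
            exact Finset.mem_coe.mpr (hcb ▸ hbZ)
        have h2 : (Finsupp.single a N + Finsupp.single c N) ∈ Dset (idx c) := by
          refine ⟨fvec c + Finsupp.single a N, ?_, ?_⟩
          · intro x hx
            have hx2 : x ∈ (fvec c + Finsupp.single a N).support := hx
            have hx' := Finsupp.support_add hx2
            rcases Finset.mem_union.mp hx' with h | h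
            · exact hfc h
            · have hxa : x = a := by simpa using Finsupp.support_single_subset h
              subst hxa
              exact Finset.mem_coe.mpr (had ▸ hdZ)
          · rw [add_comm (Finsupp.single a N), hec, add_assoc]
        exact hdisj _ _ (hkey a c haT' hcT' hac) _ h1 h2
  have hcard3 : (T.powersetCard 2).card = t * (t - 1) / 2 := by
    rw [Finset.card_powersetCard, hTcard, Nat.choose_two_right]
  -- there is a piece with few relevant variables
  have hsmall : ∃ j ∈ T, (A j).card ≤ (t - 1) / 2 := by
    by_contra h
    push_neg at h
    have hsum : T.card • ((t - 1) / 2 + 1) ≤ ∑ j ∈ T, (A j).card :=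
      Finset.card_nsmul_le_sum T _ _ (fun j hj => h j hj)
    rw [hTcard, smul_eq_mul] at hsum
    have hch : ∑ j ∈ T, (A j).card ≤ t * (t - 1) / 2 := by
      rw [← hcard1]; exact hcard3 ▸ hcard2
    set q := (t - 1) / 2 with hq
    have h2q : t - 1 ≤ 2 * q + 1 := by omega
    have hmul : t * (t - 1) ≤ 2 * (t * q) + t := by
      calc t * (t - 1) ≤ t * (2 * q + 1) := Nat.mul_le_mul_left _ h2q
        _ = 2 * (t * q) + t := by ring
    have h3 : t * (t - 1) / 2 ≤ (2 * (t * q) + t) / 2 := Nat.div_le_div_right hmul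
    have h4 : t * (q + 1) = t * q + t := by ring
    rw [h4] at hsum
    have hS := le_trans hsum (le_trans hch h3)
    omega
  obtain ⟨j, hjT, hAj⟩ := hsmall
  -- final cardinality estimate
  have hZcard : (Z (idx j)).card ≤ (A j).card + 1 + (n - t) := by
    have hsplit : Z (idx j) ⊆ (Z (idx j) ∩ T) ∪ (Z (idx j) \ T) := by
      intro x hx
      by_cases hxT : x ∈ T
      · exact Finset.mem_union_left _ (Finset.mem_inter.mpr ⟨hx, hxT⟩)
      · exact Finset.mem_union_right _ (Finset.mem_sdiff.mpr ⟨hx, hxT⟩)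
    have hb1 : (Z (idx j) ∩ T).card ≤ (A j).card + 1 := by
      have hsub : Z (idx j) ∩ T ⊆ insert j (A j) := by
        intro x hx
        obtain ⟨hx1, hx2⟩ := Finset.mem_inter.mp hx
        by_cases hxj : x = j
        · subst hxj; exact Finset.mem_insert_self _ _
        · exact Finset.mem_insert_of_mem
            (Finset.mem_inter.mpr ⟨hx1, Finset.mem_erase.mpr ⟨hxj, hx2⟩⟩)
      calc (Z (idx j) ∩ T).card ≤ (insert j (A j)).card := Finset.card_le_card hsub
        _ ≤ (A j).card + 1 := Finset.card_insert_le _ _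
    have hb2 : (Z (idx j) \ T).card ≤ n - t := by
      have hsub : Z (idx j) \ T ⊆ Finset.univ \ T := by
        intro x hx
        exact Finset.mem_sdiff.mpr ⟨Finset.mem_univ _, (Finset.mem_sdiff.mp hx).2⟩
      calc (Z (idx j) \ T).card ≤ (Finset.univ \ T).card := Finset.card_le_card hsub
        _ = n - t := by
          rw [Finset.card_sdiff_of_subset (Finset.subset_univ _), Finset.card_univ,
            Fintype.card_fin, hTcard]
    calc (Z (idx j)).card ≤ ((Z (idx j) ∩ T) ∪ (Z (idx j) \ T)).card :=
        Finset.card_le_card hsplit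
      _ ≤ (Z (idx j) ∩ T).card + (Z (idx j) \ T).card := Finset.card_union_le _ _
      _ ≤ (A j).card + 1 + (n - t) := by omega
  have hkZ := hk (idx j)
  omega
end

section
/- Let Q and Q' be monomial primary ideals of S = K[x_1,…,x_n] with √Q = (x_1) and √Q' = (x_2,…,x_n), n ≥ 2. Then sdepth(Q ∩ Q') ≤ 1 + ⌈(n−1)/2⌉. -/
open MvPolynomial

variable {K : Type*} [Field K]

section Aux

variable {n : ℕ}

/-- A monomial in the span of a set of monomials lies in the set. -/
lemma monomial_mem_span {M : Set (MvPolynomial (Fin n) K)}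
    (hM : ∀ w ∈ M, ∃ d : Fin n →₀ ℕ, w = monomial d 1) {e : Fin n →₀ ℕ}
    (h : monomial e (1 : K) ∈ Submodule.span K M) : monomial e (1 : K) ∈ M := by
  classical
  obtain ⟨c, hc, hsum⟩ := Submodule.mem_span_set.mp h
  by_contra hnot
  have h1 : coeff e (monomial e (1 : K)) = 1 := by simp [coeff_monomial]
  rw [← hsum, Finsupp.sum, coeff_sum] at h1
  have hz : ∀ w ∈ c.support, coeff e ((c w) • w) = 0 := by
    intro w hw
    obtain ⟨d, rfl⟩ := hM w (hc hw)
    rw [coeff_smul, coeff_monomial]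
    rcases eq_or_ne d e with rfl | hne
    · exact absurd (hc hw) hnot
    · simp [hne]
  rw [Finset.sum_eq_zero hz] at h1
  exact one_ne_zero h1.symm

lemma stanleySpace_eq_span (D : Fin n →₀ ℕ) (Z : Finset (Fin n)) :
    stanleySpace (monomial D (1 : K)) Z =
      Submodule.span K {w | ∃ d' : Fin n →₀ ℕ, ↑d'.support ⊆ (Z : Set (Fin n)) ∧
        w = monomial (D + d') 1} := by
  unfold stanleySpace
  congr 1
  ext w
  constructor
  · rintro ⟨d', h1, rfl⟩; exact ⟨d', h1, by rw [monomial_mul, one_mul]⟩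
  · rintro ⟨d', h1, rfl⟩; exact ⟨d', h1, by rw [monomial_mul, one_mul]⟩

lemma mem_stanleySpace_iff {D : Fin n →₀ ℕ} {Z : Finset (Fin n)} {e : Fin n →₀ ℕ} :
    monomial e (1 : K) ∈ stanleySpace (monomial D (1 : K)) Z ↔
      ∃ d' : Fin n →₀ ℕ, ↑d'.support ⊆ (Z : Set (Fin n)) ∧ e = D + d' := by
  rw [stanleySpace_eq_span]
  constructor
  · intro h
    obtain ⟨d', h1, h2⟩ := monomial_mem_span
      (fun w hw => by obtain ⟨d', _, rfl⟩ := hw; exact ⟨_, rfl⟩) h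
    rcases (monomial_eq_monomial_iff _ _ _ _).mp h2 with ⟨he, _⟩ | ⟨h0, _⟩
    · exact ⟨d', h1, he⟩
    · exact absurd h0 one_ne_zero
  · rintro ⟨d', h1, rfl⟩
    exact Submodule.subset_span ⟨d', h1, rfl⟩

lemma mem_iSup_stanley {s : ℕ} {D : Fin s → (Fin n →₀ ℕ)} {Z : Fin s → Finset (Fin n)}
    {e : Fin n →₀ ℕ}
    (h : monomial e (1 : K) ∈ ⨆ i, stanleySpace (monomial (D i) (1 : K)) (Z i)) :
    ∃ i, monomial e (1 : K) ∈ stanleySpace (monomial (D i) (1 : K)) (Z i) := by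
  simp_rw [stanleySpace_eq_span] at h
  rw [← Submodule.span_iUnion] at h
  have hmem := monomial_mem_span (fun w hw => by
      obtain ⟨i, hi⟩ := Set.mem_iUnion.mp hw
      obtain ⟨d', _, rfl⟩ := hi
      exact ⟨_, rfl⟩) h
  obtain ⟨i, hi⟩ := Set.mem_iUnion.mp hmem
  exact ⟨i, (stanleySpace_eq_span (K := K) (D i) (Z i)) ▸ Submodule.subset_span hi⟩

end Aux

/-- If `Q, Q'` are monomial primary ideals with `√Q = (x_1)` and
`√Q' = (x_2,…,x_n)`, `n ≥ 2`, then `sdepth(Q ∩ Q') ≤ 1 + ⌈(n−1)/2⌉. -/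
theorem sdepth_inter_le_of_radicals_var_rest {n : ℕ} (hn : 2 ≤ n)
    (Q Q' : Ideal (MvPolynomial (Fin n) K))
    (hQm : IsMonomialIdeal Q) (hQ'm : IsMonomialIdeal Q')
    (hQp : Q.IsPrimary) (hQ'p : Q'.IsPrimary)
    (hQr : Q.radical =
      Ideal.span ((fun i => (X i : MvPolynomial (Fin n) K)) '' {i | (i : ℕ) < 1}))
    (hQ'r : Q'.radical =
      Ideal.span ((fun i => (X i : MvPolynomial (Fin n) K)) '' {i | 1 ≤ (i : ℕ)})) :
    sdepth (Q ⊓ Q') ≤ 1 + (n - 1 + 1) / 2 := by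
  classical
  haveI : NeZero n := ⟨by omega⟩
  -- 1 ∉ Q'
  have hQ'top : (1 : MvPolynomial (Fin n) K) ∉ Q' := fun h =>
    (Ideal.isPrimary_iff.mp hQ'p).1 ((Ideal.eq_top_iff_one _).mpr h)
  -- X 0 ∉ √Q'
  have hX0 : (X 0 : MvPolynomial (Fin n) K) ∉ Q'.radical := by
    rw [hQ'r]
    intro h
    obtain ⟨i, hi1, hi2⟩ := mem_ideal_span_X_image.mp h (Finsupp.single 0 1)
      (by simp [support_X])
    rw [Finsupp.single_apply] at hi2
    have h0i : (0 : Fin n) = i := by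
      by_contra hne; simp [hne] at hi2
    rw [← h0i] at hi1
    simp at hi1
  -- monomial ideals are closed upward (trivially, by multiplication)
  have hmono_mul : ∀ (J : Ideal (MvPolynomial (Fin n) K)) (x y : Fin n →₀ ℕ), x ≤ y →
      monomial x (1 : K) ∈ J → monomial y (1 : K) ∈ J := by
    intro J x y hxy hx
    have heq : monomial y (1 : K) = monomial x 1 * monomial (y - x) 1 := by
      rw [monomial_mul, one_mul, add_tsub_cancel_of_le hxy]
    rw [heq]
    exact Ideal.mul_mem_right _ _ hx
  -- stripping x1 from a monomial in Q'
  have hstrip : ∀ e : Fin n →₀ ℕ, monomial e (1 : K) ∈ Q' →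
      monomial (e.erase 0) (1 : K) ∈ Q' := by
    intro e he
    have hmul : monomial (e.erase 0) (1 : K) * (X 0 ^ (e 0)) = monomial e 1 := by
      rw [X_pow_eq_monomial, monomial_mul, one_mul, Finsupp.erase_add_single]
    rcases (Ideal.isPrimary_iff.mp hQ'p).2 (hmul ▸ he) with h | h
    · exact h
    · exfalso
      rcases Nat.eq_zero_or_pos (e 0) with h0 | h0
      · rw [h0, pow_zero] at h
        exact (Ideal.isPrime_radical hQ'p).ne_top ((Ideal.eq_top_iff_one _).mpr h)
      · exact hX0 ((Ideal.isPrime_radical hQ'p).mem_of_pow_mem _ h)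
  -- powers of variables in Q'
  have ht : ∀ j : Fin n, ∃ m : ℕ, j ≠ 0 → (X j : MvPolynomial (Fin n) K) ^ m ∈ Q' := by
    intro j
    by_cases hj : j = 0
    · exact ⟨0, fun h => absurd hj h⟩
    · have hXj : (X j : MvPolynomial (Fin n) K) ∈ Q'.radical := by
        rw [hQ'r]
        refine Ideal.subset_span ⟨j, ?_, rfl⟩
        have hv : (j : ℕ) ≠ 0 := fun h => hj (Fin.ext (by simp [h]))
        simpa using Nat.one_le_iff_ne_zero.mpr hv
      obtain ⟨m, hm⟩ := Ideal.mem_radical_iff.mp hXj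
      exact ⟨m, fun _ => hm⟩
  choose t ht' using ht
  set t' : ℕ := Finset.univ.sup t with ht'def
  -- all x1-free monomials of large degree are in Q'
  have hbound : ∀ e : Fin n →₀ ℕ, e 0 = 0 → monomial e (1 : K) ∉ Q' →
      (∑ l, e l) ≤ n * t' := by
    intro e he0 heQ
    by_contra hgt
    push_neg at hgt
    have hex : ∃ j : Fin n, t' < e j := by
      by_contra hall
      push_neg at hall
      have hle : (∑ l, e l) ≤ ∑ _l : Fin n, t' := Finset.sum_le_sum (fun l _ => hall l)
      simp only [Finset.sum_const, Finset.card_univ, Fintype.card_fin, smul_eq_mul] at hle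
      omega
    obtain ⟨j, hj⟩ := hex
    have hjne : j ≠ 0 := by
      intro h; rw [h, he0] at hj; omega
    have hXj := ht' j hjne
    have htj : t j ≤ t' := Finset.le_sup (Finset.mem_univ j)
    apply heQ
    refine hmono_mul Q' (Finsupp.single j (t j)) e ?_ ?_
    · intro l
      rw [Finsupp.single_apply]
      rcases eq_or_ne j l with rfl | hne
      · simp; omega
      · simp [hne]
    · rwa [← X_pow_eq_monomial]
  -- choose a "socle" monomial c
  set Dset : Set ℕ := {g | ∃ e : Fin n →₀ ℕ, e 0 = 0 ∧ monomial e (1 : K) ∉ Q' ∧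
    (∑ l, e l) = g} with hDset
  have hD0 : (0 : ℕ) ∈ Dset := ⟨0, by simp, by
    simpa [MvPolynomial.monomial_zero'] using hQ'top, by simp⟩
  have hDbdd : BddAbove Dset := ⟨n * t', fun g hg => by
    obtain ⟨e, h1, h2, h3⟩ := hg; exact h3 ▸ hbound e h1 h2⟩
  obtain ⟨c, hc0, hcQ, hcdeg⟩ := Nat.sSup_mem ⟨0, hD0⟩ hDbdd
  have hcmax : ∀ j : Fin n, j ≠ 0 → monomial (c + Finsupp.single j 1) (1 : K) ∈ Q' := by
    intro j hj
    by_contra h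
    have hmem : (∑ l, c l) + 1 ∈ Dset := by
      refine ⟨c + Finsupp.single j 1, ?_, h, ?_⟩
      · rw [Finsupp.add_apply, hc0, Finsupp.single_apply]
        simp [hj]
      · simp only [Finsupp.add_apply, Finset.sum_add_distrib]
        congr 1
        simp [Finsupp.single_apply]
    have hle := le_csSup hDbdd hmem
    rw [← hcdeg] at hle
    omega
  -- a power of x1 in Q
  have hX0Q : (X 0 : MvPolynomial (Fin n) K) ∈ Q.radical := by
    rw [hQr]
    exact Ideal.subset_span ⟨0, by simp, rfl⟩
  obtain ⟨a, haQ⟩ := Ideal.mem_radical_iff.mp hX0Q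
  have haQm : monomial (Finsupp.single 0 a) (1 : K) ∈ Q := by
    rwa [← X_pow_eq_monomial]
  -- now the main argument
  unfold sdepth
  apply csSup_le'
  rintro k ⟨s, u, Z, ⟨hmono, hindep, hsum⟩, hk⟩
  choose D hD using hmono
  simp only [hD] at hindep hsum
  have hspace_le : ∀ i, stanleySpace (monomial (D i) (1 : K)) (Z i) ≤
      Submodule.restrictScalars K (Q ⊓ Q') :=
    fun i => hsum ▸ le_iSup (fun i => stanleySpace (monomial (D i) (1 : K)) (Z i)) i
  have hself : ∀ i, monomial (D i) (1 : K) ∈ stanleySpace (monomial (D i) (1 : K)) (Z i) :=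
    fun i => mem_stanleySpace_iff.mpr ⟨0, by simp, by simp⟩
  have hI : ∀ e : Fin n →₀ ℕ, monomial e (1 : K) ∈ Q ⊓ Q' →
      ∃ i, monomial e (1 : K) ∈ stanleySpace (monomial (D i) (1 : K)) (Z i) := by
    intro e he
    have hmem : monomial e (1 : K) ∈ ⨆ i, stanleySpace (monomial (D i) (1 : K)) (Z i) := by
      rw [hsum]
      exact (Submodule.restrictScalars_mem _ _ _).mpr he
    exact mem_iSup_stanley hmem
  have huniq : ∀ (e : Fin n →₀ ℕ) (i i' : Fin s),
      monomial e (1 : K) ∈ stanleySpace (monomial (D i) (1 : K)) (Z i) →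
      monomial e (1 : K) ∈ stanleySpace (monomial (D i') (1 : K)) (Z i') → i = i' := by
    intro e i i' hi hi'
    by_contra hne
    have hd := hindep i
    have h2 : monomial e (1 : K) ∈
        ⨆ j, ⨆ (_ : j ≠ i), stanleySpace (monomial (D j) (1 : K)) (Z j) :=
      (le_iSup₂ (f := fun j (_ : j ≠ i) => stanleySpace (monomial (D j) (1 : K)) (Z j))
        i' (Ne.symm hne)) hi'
    have h0 := Submodule.disjoint_def.mp hd _ hi h2
    rw [monomial_eq_zero] at h0
    exact one_ne_zero h0
  -- base exponent
  set b : Fin n →₀ ℕ := Finsupp.single 0 a + c with hb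
  have hwj : ∀ j : Fin n, j ≠ 0 → monomial (b + Finsupp.single j 1) (1 : K) ∈ Q ⊓ Q' := by
    intro j hj
    refine Submodule.mem_inf.mpr ⟨?_, ?_⟩
    · refine hmono_mul Q (Finsupp.single 0 a) _ ?_ haQm
      rw [hb, add_assoc]
      exact le_self_add
    · refine hmono_mul Q' (c + Finsupp.single j 1) _ ?_ (hcmax j hj)
      rw [hb, add_assoc]
      exact le_add_self
  have hmain : ∀ j : Fin n, j ≠ 0 → ∃ (i : Fin s) (f : Fin n →₀ ℕ),
      ↑f.support ⊆ (Z i : Set (Fin n)) ∧ b + Finsupp.single j 1 = D i + f := by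
    intro j hj
    obtain ⟨i, hi⟩ := hI _ (hwj j hj)
    obtain ⟨d', h1, h2⟩ := mem_stanleySpace_iff.mp hi
    exact ⟨i, d', h1, h2⟩
  choose idx f hsupp heq using hmain
  -- Claim A : triples
  have htriple : ∀ (j : Fin n) (hj : j ≠ 0) (z : Fin n), z ∈ Z (idx j hj) →
      monomial (b + Finsupp.single j 1 + Finsupp.single z 1) (1 : K) ∈
        stanleySpace (monomial (D (idx j hj)) (1 : K)) (Z (idx j hj)) := by
    intro j hj z hz
    refine mem_stanleySpace_iff.mpr ⟨f j hj + Finsupp.single z 1, ?_, ?_⟩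
    · intro x hx
      rcases Finset.mem_union.mp (Finsupp.support_add hx) with hx1 | hx1
      · exact hsupp j hj hx1
      · have hxz : x = z := Finset.mem_singleton.mp (Finsupp.support_single_subset hx1)
        rw [hxz]; exact hz
    · rw [heq j hj, add_assoc]
  -- Claim B : collisions are impossible
  have hcollide : ∀ (j : Fin n) (hj : j ≠ 0) (j' : Fin n) (hj' : j' ≠ 0), j ≠ j' →
      j' ∈ Z (idx j hj) → j ∈ Z (idx j' hj') → False := by
    intro j hj j' hj' hne hz hz'
    have h1 := htriple j hj j' hz
    have h2 := htriple j' hj' j hz'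
    have hexp : b + Finsupp.single j' 1 + Finsupp.single j 1
        = b + Finsupp.single j 1 + Finsupp.single j' 1 :=
      add_right_comm b (Finsupp.single j' 1) (Finsupp.single j 1)
    rw [hexp] at h2
    have hii := huniq _ _ _ h1 h2
    have heq1 := heq j hj
    have heq2 := heq j' hj'
    rw [← hii] at heq2
    -- (D (idx j hj)).erase 0 ≤ c
    have hdle : (D (idx j hj)).erase 0 ≤ c := by
      intro l
      rcases eq_or_ne l 0 with rfl | hl
      · simp [Finsupp.erase_same]
      · rw [Finsupp.erase_ne hl]
        have hbl : b l = c l := by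
          rw [hb, Finsupp.add_apply, Finsupp.single_apply]
          simp [Ne.symm hl]
        rcases eq_or_ne j' l with hj'l | hj'l
        · have e1 := DFunLike.congr_fun heq1 l
          simp only [Finsupp.add_apply, Finsupp.single_apply] at e1
          rw [if_neg (fun h : j = l => hne (h.trans hj'l.symm))] at e1
          omega
        · have e2 := DFunLike.congr_fun heq2 l
          simp only [Finsupp.add_apply, Finsupp.single_apply] at e2
          rw [if_neg hj'l] at e2
          omega
    have hDiQ' : monomial (D (idx j hj)) (1 : K) ∈ Q' := by
      have hmem := hspace_le (idx j hj) (hself (idx j hj))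
      exact (Submodule.mem_inf.mp ((Submodule.restrictScalars_mem _ _ _).mp hmem)).2
    exact hcQ (hmono_mul Q' _ _ hdle (hstrip _ hDiQ'))
  -- the counting argument
  set R : Finset (Fin n) := Finset.univ.erase 0 with hR
  set G : Fin n → Finset (Finset (Fin n)) := fun j =>
    if hj : j ≠ 0 then ((Z (idx j hj)).erase j).image (fun z => ({j, z} : Finset (Fin n)))
    else ∅ with hG
  have hGcard : ∀ j ∈ R, k - 1 ≤ (G j).card := by
    intro j hjR
    have hj : j ≠ 0 := Finset.ne_of_mem_erase hjR
    rw [hG]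
    simp only [dif_pos hj]
    rw [Finset.card_image_of_injOn ?_]
    · have h1 := hk (idx j hj)
      have h2 := Finset.pred_card_le_card_erase (s := Z (idx j hj)) (a := j)
      omega
    · intro z1 h1 z2 h2 hpair
      have hpair' : ({j, z1} : Finset (Fin n)) = {j, z2} := hpair
      have hz1 : z1 ∈ ({j, z2} : Finset (Fin n)) := by rw [← hpair']; simp
      rcases Finset.mem_insert.mp hz1 with h | h
      · exact absurd h (Finset.ne_of_mem_erase h1)
      · exact Finset.mem_singleton.mp h
  have hdisj : ∀ j1 ∈ R, ∀ j2 ∈ R, j1 ≠ j2 → Disjoint (G j1) (G j2) := by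
    intro j1 h1 j2 h2 hne
    have hj1 : j1 ≠ 0 := Finset.ne_of_mem_erase h1
    have hj2 : j2 ≠ 0 := Finset.ne_of_mem_erase h2
    rw [Finset.disjoint_left]
    intro p hp1 hp2
    rw [hG] at hp1 hp2
    simp only [dif_pos hj1] at hp1
    simp only [dif_pos hj2] at hp2
    obtain ⟨z1, hz1, hpe1⟩ := Finset.mem_image.mp hp1
    obtain ⟨z2, hz2, hpe2⟩ := Finset.mem_image.mp hp2
    have hj2mem : j2 ∈ ({j1, z1} : Finset (Fin n)) := by
      rw [hpe1, ← hpe2]; simp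
    have hj1mem : j1 ∈ ({j2, z2} : Finset (Fin n)) := by
      rw [hpe2, ← hpe1]; simp
    have hj2z1 : j2 = z1 := by
      rcases Finset.mem_insert.mp hj2mem with h | h
      · exact absurd h (Ne.symm hne)
      · exact Finset.mem_singleton.mp h
    have hj1z2 : j1 = z2 := by
      rcases Finset.mem_insert.mp hj1mem with h | h
      · exact absurd h hne
      · exact Finset.mem_singleton.mp h
    exact hcollide j1 hj1 j2 hj2 hne
      (hj2z1 ▸ Finset.mem_of_mem_erase hz1)
      (hj1z2 ▸ Finset.mem_of_mem_erase hz2)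
  have hcard : ∑ j ∈ R, (G j).card ≤ ((Finset.univ : Finset (Fin n)).powersetCard 2).card := by
    rw [← Finset.card_biUnion hdisj]
    apply Finset.card_le_card
    intro p hp
    obtain ⟨j, hjR, hpG⟩ := Finset.mem_biUnion.mp hp
    have hj : j ≠ 0 := Finset.ne_of_mem_erase hjR
    rw [hG] at hpG
    simp only [dif_pos hj] at hpG
    obtain ⟨z, hz, hpe⟩ := Finset.mem_image.mp hpG
    rw [Finset.mem_powersetCard]
    refine ⟨Finset.subset_univ _, ?_⟩
    rw [← hpe]
    rw [Finset.card_insert_of_notMem (by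
      simp only [Finset.mem_singleton]
      exact fun h => (Finset.ne_of_mem_erase hz) h.symm)]
    simp
  have hsumlb : R.card * (k - 1) ≤ ∑ j ∈ R, (G j).card := by
    calc R.card * (k - 1) = ∑ _j ∈ R, (k - 1) := by rw [Finset.sum_const, smul_eq_mul]
    _ ≤ ∑ j ∈ R, (G j).card := Finset.sum_le_sum hGcard
  have hRcard : R.card = n - 1 := by
    rw [hR, Finset.card_erase_of_mem (Finset.mem_univ _), Finset.card_univ, Fintype.card_fin]
  have hpcard : ((Finset.univ : Finset (Fin n)).powersetCard 2).card = n * (n - 1) / 2 := by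
    rw [Finset.card_powersetCard, Finset.card_univ, Fintype.card_fin, Nat.choose_two_right]
  have hfin : (n - 1) * (k - 1) ≤ n * (n - 1) / 2 := by
    rw [hRcard] at hsumlb
    rw [hpcard] at hcard
    exact le_trans hsumlb hcard
  -- conclude
  have h2q : n * (n - 1) / 2 * 2 ≤ n * (n - 1) := Nat.div_mul_le_self _ _
  have hmul : (n - 1) * (k - 1) * 2 ≤ n * (n - 1) := le_trans (by omega) h2q
  have hmul2 : (n - 1) * ((k - 1) * 2) ≤ (n - 1) * n := by
    rw [← mul_assoc]
    rw [mul_comm n (n - 1)] at hmul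
    exact hmul
  have hfinal : (k - 1) * 2 ≤ n := Nat.le_of_mul_le_mul_left hmul2 (by omega)
  omega
end

section
/- Let Q and Q' be monomial primary ideals of S = K[x_1,…,x_n] with √Q = (x_1,…,x_t) and √Q' = (x_{t+1},…,x_n), where t ≥ 2 and n ≥ 4. Then sdepth(Q ∩ Q') ≤ (n+2)/2, i.e. 2·sdepth(Q ∩ Q') ≤ n + 2. -/
open MvPolynomial

variable {K : Type*} [Field K]

section AuxLemmas

lemma monomial_mem_span_monomials {K : Type*} [Field K] {n : ℕ}
    {E : Set (Fin n →₀ ℕ)} {f : Fin n →₀ ℕ}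
    (h : (monomial f (1:K) : MvPolynomial (Fin n) K) ∈
      Submodule.span K ((fun g => (monomial g (1:K) : MvPolynomial (Fin n) K)) '' E)) :
    f ∈ E := by
  classical
  by_contra hf
  have hker : Submodule.span K ((fun g => (monomial g (1:K) : MvPolynomial (Fin n) K)) '' E) ≤
      LinearMap.ker (lcoeff K f) := by
    rw [Submodule.span_le]
    rintro x ⟨g, hg, rfl⟩
    simp only [SetLike.mem_coe, LinearMap.mem_ker, lcoeff_apply, coeff_monomial]
    exact if_neg fun (hgf : g = f) => hf (hgf ▸ hg)
  have h2 := hker h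
  simp only [LinearMap.mem_ker, lcoeff_apply, coeff_monomial, if_pos rfl] at h2
  exact one_ne_zero h2

lemma two_mul_choose_two : ∀ m : ℕ, 2 * m.choose 2 = m * (m - 1)
  | 0 => rfl
  | (m+1) => by
    rw [Nat.choose_succ_succ, Nat.mul_add, two_mul_choose_two m, Nat.choose_one_right,
      Nat.add_sub_cancel]
    cases m with
    | zero => rfl
    | succ j => simp only [Nat.add_sub_cancel]; ring

lemma six_mul_choose_three : ∀ m : ℕ, 6 * m.choose 3 = m * (m - 1) * (m - 2)
  | 0 => rfl
  | (m+1) => by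
    rw [Nat.choose_succ_succ (k := 2), Nat.mul_add, six_mul_choose_three m]
    have h2 := two_mul_choose_two m
    have key : 2 * (6 * m.choose 2 + m * (m-1) * (m-2)) = 2 * ((m+1) * (m+1-1) * (m+1-2)) := by
      cases m with
      | zero => rfl
      | succ j =>
        cases j with
        | zero => rfl
        | succ i =>
          simp only [Nat.add_sub_cancel] at h2 ⊢
          have : (i + 1 + 1 + 1 - 2) = i + 1 := by omega
          rw [this]
          calc 2 * (6 * (i+1+1).choose 2 + (i + 1 + 1) * (i + 1) * i)
              = 6 * (2 * (i+1+1).choose 2) + 2 * ((i + 1 + 1) * (i + 1) * i) := by ring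
            _ = 6 * ((i+1+1) * (i+1)) + 2 * ((i + 1 + 1) * (i + 1) * i) := by rw [h2]
            _ = 2 * ((i + 1 + 1 + 1) * (i + 1 + 1) * (i + 1)) := by ring
    omega

lemma cube_identity {a b : ℕ} (ha : 2 ≤ a) (hb : 1 ≤ b) :
    (a+b) * ((a+b) - 1) * ((a+b) - 2)
      = a * (a-1) * (a-2) + b * (b-1) * (b-2) + 3 * (a * b * ((a+b) - 2)) := by
  rcases Nat.lt_or_ge b 2 with hb2 | hb2
  · have hb1 : b = 1 := by omega
    subst hb1
    zify [show (1:ℕ) ≤ a + 1 by omega, show (2:ℕ) ≤ a + 1 by omega, show (1:ℕ) ≤ a by omega,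
      show (2:ℕ) ≤ a by omega]
    ring
  · zify [show (1:ℕ) ≤ a + b by omega, show (2:ℕ) ≤ a + b by omega, show (1:ℕ) ≤ a by omega,
      show (2:ℕ) ≤ a by omega, show (1:ℕ) ≤ b by omega, show (2:ℕ) ≤ b by omega]
    ring

lemma two_mul_sSup_le {S : Set ℕ} {m : ℕ} (h : ∀ k ∈ S, 2 * k ≤ m) : 2 * sSup S ≤ m := by
  by_cases hbdd : BddAbove S
  · rcases Set.eq_empty_or_nonempty S with he | hne
    · rw [he, csSup_empty]
      simp
    · exact h _ (Nat.sSup_mem hne hbdd)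
  · rw [csSup_of_not_bddAbove hbdd, csSup_empty]
    simp

/-- The set of exponents of the Stanley space with bottom exponent `d` and variable set `Zi`. -/
def ESet {n : ℕ} (d : Fin n →₀ ℕ) (Zi : Finset (Fin n)) : Set (Fin n →₀ ℕ) :=
  {g | ∃ e : Fin n →₀ ℕ, ↑e.support ⊆ (Zi : Set (Fin n)) ∧ g = d + e}

lemma mem_ESet {n : ℕ} {d g : Fin n →₀ ℕ} {Zi : Finset (Fin n)} :
    g ∈ ESet d Zi ↔ ∃ e : Fin n →₀ ℕ, ↑e.support ⊆ (Zi : Set (Fin n)) ∧ g = d + e := Iff.rfl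

lemma ESet_le {n : ℕ} {d g : Fin n →₀ ℕ} {Zi : Finset (Fin n)} (h : g ∈ ESet d Zi) : d ≤ g := by
  obtain ⟨e, -, rfl⟩ := h
  exact self_le_add_right d e

lemma ESet_add_single {n : ℕ} {d g : Fin n →₀ ℕ} {Zi : Finset (Fin n)} {c : Fin n}
    (h : g ∈ ESet d Zi) (hc : c ∈ Zi) : g + Finsupp.single c 1 ∈ ESet d Zi := by
  obtain ⟨e, he, rfl⟩ := h
  refine ⟨e + Finsupp.single c 1, ?_, by rw [add_assoc]⟩
  intro j hj
  rcases Finset.mem_union.mp (Finsupp.support_add hj) with h' | h'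
  · exact he h'
  · have hj' : j = c := Finset.mem_singleton.mp (Finsupp.support_single_subset h')
    subst hj'
    exact Finset.mem_coe.mpr hc

lemma exists_maximal_nonmem {K : Type*} [Field K] {n : ℕ} (Q : Ideal (MvPolynomial (Fin n) K))
    (hQne : Q ≠ ⊤) (pr : Fin n → Prop)
    (hc : ∀ j : Fin n, ∃ c : ℕ, pr j → (monomial (Finsupp.single j c) (1:K)) ∈ Q) :
    ∃ w : Fin n →₀ ℕ, (∀ j ∈ w.support, pr j) ∧ (monomial w (1:K)) ∉ Q ∧
      ∀ a : Fin n, pr a → (monomial (w + Finsupp.single a 1) (1:K)) ∈ Q := by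
  classical
  choose c hcQ using hc
  set D : Set ℕ := {m | ∃ d : Fin n →₀ ℕ, (∀ j ∈ d.support, pr j) ∧
    (monomial d (1:K)) ∉ Q ∧ d.sum (fun _ e => e) = m} with hD
  have hne : D.Nonempty := by
    refine ⟨0, 0, by simp, ?_, by simp⟩
    rw [monomial_zero', C_1]
    exact (Ideal.ne_top_iff_one Q).mp hQne
  have hmem_of_large : ∀ (d : Fin n →₀ ℕ) (j : Fin n), pr j → c j ≤ d j →
      (monomial d (1:K)) ∈ Q := by
    intro d j hj hle
    have hsingle : Finsupp.single j (c j) ≤ d := Finsupp.single_le_iff.mpr hle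
    have heq : (monomial (Finsupp.single j (c j)) (1:K)) *
        monomial (d - Finsupp.single j (c j)) 1 = monomial d 1 := by
      rw [monomial_mul, one_mul, add_tsub_cancel_of_le hsingle]
    exact heq ▸ Ideal.mul_mem_right _ _ (hcQ j hj)
  have hbdd : BddAbove D := by
    refine ⟨∑ j : Fin n, c j, ?_⟩
    rintro m ⟨d, hdsupp, hdQ, rfl⟩
    have hpt : ∀ j : Fin n, d j ≤ c j := by
      intro j
      by_cases hj : pr j
      · by_contra hlt
        push_neg at hlt
        exact hdQ (hmem_of_large d j hj (le_of_lt hlt))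
      · have h0 : d j = 0 := by
          by_contra h0
          exact hj (hdsupp j (Finsupp.mem_support_iff.mpr h0))
        omega
    calc d.sum (fun _ e => e) = ∑ j : Fin n, d j := Finsupp.sum_fintype _ _ (fun _ => rfl)
      _ ≤ ∑ j : Fin n, c j := Finset.sum_le_sum (fun j _ => hpt j)
  obtain ⟨d, hdsupp, hdQ, hdsum⟩ := Nat.sSup_mem hne hbdd
  refine ⟨d, hdsupp, hdQ, ?_⟩
  intro a ha
  by_contra hmem
  have hsupp' : ∀ j ∈ (d + Finsupp.single a 1).support, pr j := by
    intro j hj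
    rcases Finset.mem_union.mp (Finsupp.support_add hj) with h' | h'
    · exact hdsupp j h'
    · have hj' : j = a := Finset.mem_singleton.mp (Finsupp.support_single_subset h')
      subst hj'
      exact ha
  have hin : (d + Finsupp.single a 1).sum (fun _ e => e) ∈ D :=
    ⟨d + Finsupp.single a 1, hsupp', hmem, rfl⟩
  have hle := le_csSup hbdd hin
  rw [Finsupp.sum_add_index' (fun _ => rfl) (fun _ _ _ => rfl),
    Finsupp.sum_single_index rfl, hdsum] at hle
  omega

end AuxLemmas

/-- If `Q, Q'` are monomial primary ideals with `√Q = (x_1,…,x_t)` and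
`√Q' = (x_{t+1},…,x_n)`, `t ≥ 2`, `n ≥ 4`, then `sdepth(Q ∩ Q') ≤ (n+2)/2`,
i.e. `2·sdepth(Q ∩ Q') ≤ n + 2`. -/
theorem sdepth_inter_le_of_disjoint_radicals {n t : ℕ} (ht : 2 ≤ t) (hn : 4 ≤ n)
    (Q Q' : Ideal (MvPolynomial (Fin n) K))
    (hQm : IsMonomialIdeal Q) (hQ'm : IsMonomialIdeal Q')
    (hQp : Q.IsPrimary) (hQ'p : Q'.IsPrimary)
    (hQr : Q.radical =
      Ideal.span ((fun i => (X i : MvPolynomial (Fin n) K)) '' {i | (i : ℕ) < t}))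
    (hQ'r : Q'.radical =
      Ideal.span ((fun i => (X i : MvPolynomial (Fin n) K)) '' {i | t ≤ (i : ℕ)})) :
    2 * sdepth (Q ⊓ Q') ≤ n + 2 := by
  classical
  rcases lt_or_ge t n with htn | htn
  · -- main case : t < n
    unfold sdepth
    apply two_mul_sSup_le
    rintro k ⟨s, u, Z, ⟨hu, hind, hsup⟩, hk⟩
    obtain ⟨hQne, hQmul⟩ := Ideal.isPrimary_iff.mp hQp
    obtain ⟨hQ'ne, hQ'mul⟩ := Ideal.isPrimary_iff.mp hQ'p
    -- monomials supported outside the radical's variables are not in the radical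
    have hselfsupp : ∀ g : Fin n →₀ ℕ, g ∈ (monomial g (1:K)).support := by
      intro g
      rw [MvPolynomial.mem_support_iff, coeff_monomial, if_pos rfl]
      exact one_ne_zero
    have hnotradQ : ∀ g : Fin n →₀ ℕ, (∀ j ∈ g.support, ¬ ((j:ℕ) < t)) →
        (monomial g (1:K)) ∉ Q.radical := by
      intro g hg hmem
      rw [hQr] at hmem
      obtain ⟨i, hi, hine⟩ := mem_ideal_span_X_image.mp hmem g (hselfsupp g)
      exact hg i (Finsupp.mem_support_iff.mpr hine) hi
    have hnotradQ' : ∀ g : Fin n →₀ ℕ, (∀ j ∈ g.support, (j:ℕ) < t) →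
        (monomial g (1:K)) ∉ Q'.radical := by
      intro g hg hmem
      rw [hQ'r] at hmem
      obtain ⟨i, hi, hine⟩ := mem_ideal_span_X_image.mp hmem g (hselfsupp g)
      exact absurd hi (not_le.mpr (hg i (Finsupp.mem_support_iff.mpr hine)))
    -- primary splitting
    have hsplitQ : ∀ g h : Fin n →₀ ℕ, (∀ j ∈ h.support, ¬((j:ℕ) < t)) →
        (monomial (g + h) (1:K)) ∈ Q → (monomial g (1:K)) ∈ Q := by
      intro g h hh hmem
      have hprod : (monomial g (1:K)) * monomial h 1 ∈ Q := by
        rw [monomial_mul, one_mul]; exact hmem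
      rcases hQmul hprod with h1 | h1
      · exact h1
      · exact absurd h1 (hnotradQ h hh)
    have hsplitQ' : ∀ g h : Fin n →₀ ℕ, (∀ j ∈ h.support, (j:ℕ) < t) →
        (monomial (g + h) (1:K)) ∈ Q' → (monomial g (1:K)) ∈ Q' := by
      intro g h hh hmem
      have hprod : (monomial g (1:K)) * monomial h 1 ∈ Q' := by
        rw [monomial_mul, one_mul]; exact hmem
      rcases hQ'mul hprod with h1 | h1
      · exact h1
      · exact absurd h1 (hnotradQ' h hh)
    -- existence of the shifting monomials w1 and w2
    obtain ⟨w1, hw1supp, hw1Q, hw1max⟩ := exists_maximal_nonmem Q hQne (fun j => (j:ℕ) < t) (by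
      intro j
      by_cases hj : (j:ℕ) < t
      · have hX : (X j : MvPolynomial (Fin n) K) ∈ Q.radical := by
          rw [hQr]; exact Ideal.subset_span ⟨j, hj, rfl⟩
        obtain ⟨c, hc⟩ := Ideal.mem_radical_iff.mp hX
        exact ⟨c, fun _ => by rwa [X_pow_eq_monomial] at hc⟩
      · exact ⟨0, fun h => absurd h hj⟩)
    obtain ⟨w2, hw2supp, hw2Q, hw2max⟩ := exists_maximal_nonmem Q' hQ'ne (fun j => ¬((j:ℕ) < t)) (by
      intro j
      by_cases hj : (j:ℕ) < t
      · exact ⟨0, fun h => absurd hj h⟩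
      · have hX : (X j : MvPolynomial (Fin n) K) ∈ Q'.radical := by
          rw [hQ'r]; exact Ideal.subset_span ⟨j, not_lt.mp hj, rfl⟩
        obtain ⟨c, hc⟩ := Ideal.mem_radical_iff.mp hX
        exact ⟨c, fun _ => by rwa [X_pow_eq_monomial] at hc⟩)
    -- key membership and non-membership facts
    have hwQ : (monomial (w1 + w2) (1:K)) ∉ Q ⊓ Q' := by
      intro hmem
      exact hw1Q (hsplitQ w1 w2 hw2supp (Submodule.mem_inf.mp hmem).1)
    have hwaQ' : ∀ a : Fin n, (a:ℕ) < t →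
        (monomial (w1 + w2 + Finsupp.single a 1) (1:K)) ∉ Q ⊓ Q' := by
      intro a ha hmem
      have heq : w1 + w2 + Finsupp.single a 1 = w2 + (w1 + Finsupp.single a 1) := by
        rw [add_comm w1 w2, add_assoc]
      rw [heq] at hmem
      refine hw2Q (hsplitQ' w2 (w1 + Finsupp.single a 1) ?_ (Submodule.mem_inf.mp hmem).2)
      intro j hj
      rcases Finset.mem_union.mp (Finsupp.support_add hj) with h' | h'
      · exact hw1supp j h'
      · have hj' : j = a := Finset.mem_singleton.mp (Finsupp.support_single_subset h')
        subst hj'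
        exact ha
    have hwbQ : ∀ b : Fin n, ¬((b:ℕ) < t) →
        (monomial (w1 + w2 + Finsupp.single b 1) (1:K)) ∉ Q ⊓ Q' := by
      intro b hb hmem
      have heq : w1 + w2 + Finsupp.single b 1 = w1 + (w2 + Finsupp.single b 1) := by
        rw [add_assoc]
      rw [heq] at hmem
      refine hw1Q (hsplitQ w1 (w2 + Finsupp.single b 1) ?_ (Submodule.mem_inf.mp hmem).1)
      intro j hj
      rcases Finset.mem_union.mp (Finsupp.support_add hj) with h' | h'
      · exact hw2supp j h'
      · have hj' : j = b := Finset.mem_singleton.mp (Finsupp.support_single_subset h')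
        subst hj'
        exact hb
    have hvI : ∀ a b : Fin n, (a:ℕ) < t → ¬((b:ℕ) < t) →
        (monomial (w1 + w2 + Finsupp.single a 1 + Finsupp.single b 1) (1:K)) ∈ Q ⊓ Q' := by
      intro a b ha hb
      have heq : (monomial (w1 + Finsupp.single a 1) (1:K)) *
          monomial (w2 + Finsupp.single b 1) 1 =
          monomial (w1 + w2 + Finsupp.single a 1 + Finsupp.single b 1) 1 := by
        rw [monomial_mul, one_mul]
        congr 1
        abel_nf
      refine Submodule.mem_inf.mpr ⟨?_, ?_⟩
      · exact heq ▸ Ideal.mul_mem_right _ _ (hw1max a ha)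
      · exact heq ▸ Ideal.mul_mem_left _ _ (hw2max b hb)
    -- decomposition machinery
    choose dd hdd using hu
    have hspace : ∀ i, stanleySpace (u i) (Z i)
        = Submodule.span K ((fun g => (monomial g (1:K) : MvPolynomial (Fin n) K)) ''
            ESet (dd i) (Z i)) := by
      intro i
      unfold stanleySpace
      congr 1
      ext p
      constructor
      · rintro ⟨e, he, rfl⟩
        exact ⟨dd i + e, ⟨e, he, rfl⟩, by rw [hdd i, monomial_mul, one_mul]⟩
      · rintro ⟨g, ⟨e, he, rfl⟩, rfl⟩
        exact ⟨e, he, by rw [hdd i, monomial_mul, one_mul]⟩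
    have hIeq : Submodule.span K ((fun g => (monomial g (1:K) : MvPolynomial (Fin n) K)) ''
        ⋃ i, ESet (dd i) (Z i)) = Submodule.restrictScalars K (Q ⊓ Q') := by
      rw [Set.image_iUnion, Submodule.span_iUnion, ← hsup]
      exact iSup_congr fun i => (hspace i).symm
    have hmemE : ∀ g : Fin n →₀ ℕ, (monomial g (1:K)) ∈ Q ⊓ Q' → ∃ i, g ∈ ESet (dd i) (Z i) := by
      intro g hg
      have hmem : (monomial g (1:K)) ∈ Submodule.span K
          ((fun g => (monomial g (1:K) : MvPolynomial (Fin n) K)) '' ⋃ i, ESet (dd i) (Z i)) := by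
        rw [hIeq]; exact hg
      exact Set.mem_iUnion.mp (monomial_mem_span_monomials hmem)
    have hEmem : ∀ (i : Fin s) (g : Fin n →₀ ℕ), g ∈ ESet (dd i) (Z i) →
        (monomial g (1:K)) ∈ Q ⊓ Q' := by
      intro i g hg
      have hmem : (monomial g (1:K)) ∈ Submodule.span K
          ((fun g => (monomial g (1:K) : MvPolynomial (Fin n) K)) '' ⋃ i, ESet (dd i) (Z i)) :=
        Submodule.subset_span ⟨g, Set.mem_iUnion.mpr ⟨i, hg⟩, rfl⟩
      rw [hIeq] at hmem
      exact hmem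
    have hEuniq : ∀ (i j : Fin s) (g : Fin n →₀ ℕ), g ∈ ESet (dd i) (Z i) →
        g ∈ ESet (dd j) (Z j) → i = j := by
      intro i j g hi hj
      by_contra hij
      have h1 : (monomial g (1:K)) ∈ stanleySpace (u i) (Z i) := by
        rw [hspace i]; exact Submodule.subset_span ⟨g, hi, rfl⟩
      have h2 : (monomial g (1:K)) ∈ ⨆ (j') (_ : j' ≠ i), stanleySpace (u j') (Z j') := by
        have hj2 : (monomial g (1:K)) ∈ stanleySpace (u j) (Z j) := by
          rw [hspace j]; exact Submodule.subset_span ⟨g, hj, rfl⟩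
        exact (le_iSup₂ (f := fun (j' : Fin s) (_ : j' ≠ i) => stanleySpace (u j') (Z j')) j
          (fun h => hij h.symm)) hj2
      have hz := Submodule.disjoint_def.mp (hind i) _ h1 h2
      exact one_ne_zero (MvPolynomial.monomial_eq_zero.mp hz)
    have hdiv : ∀ (i : Fin s) (f : Fin n →₀ ℕ), dd i ≤ f → (monomial f (1:K)) ∈ Q ⊓ Q' := by
      intro i f hle
      have heq : monomial (dd i) (1:K) * monomial (f - dd i) 1 = monomial f 1 := by
        rw [monomial_mul, one_mul, add_tsub_cancel_of_le hle]
      exact heq ▸ Ideal.mul_mem_right _ _ (hEmem i (dd i) ⟨0, by simp, by simp⟩)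
    -- the combinatorial counting
    set Low : Finset (Fin n) := Finset.univ.filter (fun i : Fin n => (i:ℕ) < t) with hLowdef
    set High : Finset (Fin n) := Finset.univ.filter (fun i : Fin n => ¬ (i:ℕ) < t) with hHighdef
    have hLowcard : Low.card = t := by
      have himg : Low = Finset.map ⟨Fin.castLE (le_of_lt htn),
          Fin.castLE_injective (le_of_lt htn)⟩ Finset.univ := by
        rw [hLowdef]
        ext i
        simp only [Finset.mem_filter, Finset.mem_univ, true_and, Finset.mem_map,
          Function.Embedding.coeFn_mk]
        constructor
        · intro hi
          exact ⟨⟨(i:ℕ), hi⟩, Fin.ext rfl⟩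
        · rintro ⟨j, rfl⟩
          simpa using j.isLt
      rw [himg, Finset.card_map, Finset.card_univ, Fintype.card_fin]
    have hHighcard : High.card = n - t := by
      have hsum := Finset.card_filter_add_card_filter_not
        (s := (Finset.univ : Finset (Fin n))) (p := fun i => (i:ℕ) < t)
      rw [Finset.card_univ, Fintype.card_fin] at hsum
      rw [← hLowdef, ← hHighdef] at hsum
      omega
    set P : Finset (Fin n × Fin n) := Low ×ˢ High with hPdef
    have hmemP : ∀ p : Fin n × Fin n, p ∈ P → ((p.1:ℕ) < t ∧ ¬((p.2:ℕ) < t)) := by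
      intro p hp
      rw [hPdef, Finset.mem_product, hLowdef, hHighdef] at hp
      obtain ⟨h1, h2⟩ := hp
      exact ⟨(Finset.mem_filter.mp h1).2, (Finset.mem_filter.mp h2).2⟩
    have hPcard : P.card = t * (n - t) := by
      rw [hPdef, Finset.card_product, hLowcard, hHighcard]
    have hι0 : ∀ p : Fin n × Fin n, ∃ i : Fin s,
        p ∈ P → (w1 + w2 + Finsupp.single p.1 1 + Finsupp.single p.2 1) ∈ ESet (dd i) (Z i) := by
      have hsne : Nonempty (Fin s) := by
        have h0t : (0:ℕ) < t := by omega
        have h0n : (0:ℕ) < n := by omega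
        obtain ⟨i, -⟩ := hmemE _ (hvI (⟨0, h0n⟩ : Fin n) (⟨t, htn⟩ : Fin n) h0t (by simp))
        exact ⟨i⟩
      intro p
      by_cases hp : p ∈ P
      · obtain ⟨hp1, hp2⟩ := hmemP p hp
        obtain ⟨i, hi⟩ := hmemE _ (hvI p.1 p.2 hp1 hp2)
        exact ⟨i, fun _ => hi⟩
      · exact ⟨Classical.arbitrary _, fun h => absurd h hp⟩
    choose ι hι using hι0
    set T : Finset (Finset (Fin n)) := (Finset.powersetCard 3 Finset.univ).filter
      (fun S => (∃ x ∈ S, (x:ℕ) < t) ∧ (∃ x ∈ S, ¬ (x:ℕ) < t)) with hTdef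
    set G : Fin n × Fin n → Finset (Finset (Fin n)) :=
      fun p => ((Z (ι p)) \ {p.1, p.2}).image (fun c => insert c {p.1, p.2}) with hGdef
    have hGsum : ∀ p ∈ P, ∀ S ∈ G p,
        (w1 + w2 + ∑ j ∈ S, Finsupp.single j 1) ∈ ESet (dd (ι p)) (Z (ι p)) := by
      intro p hp S hS
      obtain ⟨hp1, hp2⟩ := hmemP p hp
      simp only [hGdef] at hS
      obtain ⟨c, hc, rfl⟩ := Finset.mem_image.mp hS
      obtain ⟨hcZ, hcnot⟩ := Finset.mem_sdiff.mp hc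
      have hab : p.1 ≠ p.2 := fun h => hp2 (h ▸ hp1)
      have hsum : ∑ j ∈ insert c {p.1, p.2}, Finsupp.single j (1:ℕ) =
          Finsupp.single c 1 + (Finsupp.single p.1 1 + Finsupp.single p.2 1) := by
        rw [Finset.sum_insert hcnot, Finset.sum_pair hab]
      rw [hsum]
      have heq : w1 + w2 + (Finsupp.single c 1 + (Finsupp.single p.1 1 + Finsupp.single p.2 1))
          = (w1 + w2 + Finsupp.single p.1 1 + Finsupp.single p.2 1) + Finsupp.single c 1 := by
        abel
      rw [heq]
      exact ESet_add_single (hι p hp) hcZ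
    have hGT : ∀ p ∈ P, G p ⊆ T := by
      intro p hp S hS
      obtain ⟨hp1, hp2⟩ := hmemP p hp
      simp only [hGdef] at hS
      obtain ⟨c, hc, rfl⟩ := Finset.mem_image.mp hS
      obtain ⟨hcZ, hcnot⟩ := Finset.mem_sdiff.mp hc
      have hab : p.1 ≠ p.2 := fun h => hp2 (h ▸ hp1)
      rw [hTdef]
      refine Finset.mem_filter.mpr ⟨Finset.mem_powersetCard.mpr ⟨Finset.subset_univ _, ?_⟩,
        ⟨p.1, ?_, hp1⟩, ⟨p.2, ?_, hp2⟩⟩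
      · rw [Finset.card_insert_of_notMem hcnot, Finset.card_pair hab]
      · simp
      · simp
    have hGcard : ∀ p ∈ P, k - 2 ≤ (G p).card := by
      intro p hp
      have hinj : Set.InjOn (fun c => insert c ({p.1, p.2} : Finset (Fin n)))
          ↑(Z (ι p) \ ({p.1, p.2} : Finset (Fin n))) := by
        intro c hc c' hc' hcc
        have hc2 := (Finset.mem_sdiff.mp (Finset.mem_coe.mp hc)).2
        have hcc' : insert c ({p.1, p.2} : Finset (Fin n)) = insert c' {p.1, p.2} := hcc
        have hcm : c ∈ insert c' ({p.1, p.2} : Finset (Fin n)) := by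
          rw [← hcc']; exact Finset.mem_insert_self c _
        rcases Finset.mem_insert.mp hcm with h | h
        · exact h
        · exact absurd h hc2
      simp only [hGdef]
      calc k - 2 ≤ (Z (ι p)).card - 2 := by have := hk (ι p); omega
        _ ≤ (Z (ι p)).card - ({p.1, p.2} : Finset (Fin n)).card := by
            have h2 : ({p.1, p.2} : Finset (Fin n)).card ≤ 2 :=
              le_trans (Finset.card_insert_le _ _) (by simp)
            omega
        _ ≤ (Z (ι p) \ {p.1, p.2}).card := Finset.le_card_sdiff _ _
        _ = ((Z (ι p) \ {p.1, p.2}).image (fun c => insert c {p.1, p.2})).card :=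
            (Finset.card_image_of_injOn hinj).symm
    have hpoint : ∀ (x : Fin n →₀ ℕ) (a b a' b' : Fin n), (a:ℕ) < t → ¬((b:ℕ) < t) →
        (a':ℕ) < t → ¬((b':ℕ) < t) →
        x ≤ w1 + w2 + Finsupp.single a 1 + Finsupp.single b 1 →
        x ≤ w1 + w2 + Finsupp.single a' 1 + Finsupp.single b' 1 →
        (a = a' → b ≠ b' → x ≤ w1 + w2 + Finsupp.single a 1) ∧
        (a ≠ a' → b = b' → x ≤ w1 + w2 + Finsupp.single b 1) ∧
        (a ≠ a' → b ≠ b' → x ≤ w1 + w2) := by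
      intro x a b a' b' ha hb ha' hb' h1 h2
      rw [Finsupp.le_def] at h1 h2
      refine ⟨?_, ?_, ?_⟩
      · intro hA hB
        have hAv : (a:ℕ) = (a':ℕ) := congrArg Fin.val hA
        have hBv : (b:ℕ) ≠ (b':ℕ) := fun h => hB (Fin.ext h)
        rw [Finsupp.le_def]
        intro j
        have h1j := h1 j
        have h2j := h2 j
        simp only [Finsupp.add_apply, Finsupp.single_apply, Fin.ext_iff] at h1j h2j ⊢
        split_ifs at h1j h2j ⊢ <;> omega
      · intro hA hB
        have hAv : (a:ℕ) ≠ (a':ℕ) := fun h => hA (Fin.ext h)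
        have hBv : (b:ℕ) = (b':ℕ) := congrArg Fin.val hB
        rw [Finsupp.le_def]
        intro j
        have h1j := h1 j
        have h2j := h2 j
        simp only [Finsupp.add_apply, Finsupp.single_apply, Fin.ext_iff] at h1j h2j ⊢
        split_ifs at h1j h2j ⊢ <;> omega
      · intro hA hB
        have hAv : (a:ℕ) ≠ (a':ℕ) := fun h => hA (Fin.ext h)
        have hBv : (b:ℕ) ≠ (b':ℕ) := fun h => hB (Fin.ext h)
        rw [Finsupp.le_def]
        intro j
        have h1j := h1 j
        have h2j := h2 j
        simp only [Finsupp.add_apply, Finsupp.single_apply, Fin.ext_iff] at h1j h2j ⊢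
        split_ifs at h1j h2j ⊢ <;> omega
    have hGdisj : ∀ p ∈ P, ∀ q ∈ P, p ≠ q → Disjoint (G p) (G q) := by
      intro p hp q hq hpq
      rw [Finset.disjoint_left]
      intro S hSp hSq
      obtain ⟨hp1, hp2⟩ := hmemP p hp
      obtain ⟨hq1, hq2⟩ := hmemP q hq
      have hieq : ι p = ι q := hEuniq _ _ _ (hGsum p hp S hSp) (hGsum q hq S hSq)
      have h1 : dd (ι p) ≤ w1 + w2 + Finsupp.single p.1 1 + Finsupp.single p.2 1 :=
        ESet_le (hι p hp)
      have h2 : dd (ι p) ≤ w1 + w2 + Finsupp.single q.1 1 + Finsupp.single q.2 1 := by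
        rw [hieq]; exact ESet_le (hι q hq)
      obtain ⟨hc1, hc2, hc3⟩ := hpoint (dd (ι p)) p.1 p.2 q.1 q.2 hp1 hp2 hq1 hq2 h1 h2
      rcases eq_or_ne p.1 q.1 with he1 | he1
      · rcases eq_or_ne p.2 q.2 with he2 | he2
        · exact hpq (Prod.ext he1 he2)
        · exact hwaQ' p.1 hp1 (hdiv _ _ (hc1 he1 he2))
      · rcases eq_or_ne p.2 q.2 with he2 | he2
        · exact hwbQ p.2 hp2 (hdiv _ _ (hc2 he1 he2))
        · exact hwQ (hdiv _ _ (hc3 he1 he2))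
    have hTcard6 : 6 * T.card = 3 * (t * (n - t) * (n - 2)) := by
      have hdisjLH : Disjoint (Finset.powersetCard 3 Low) (Finset.powersetCard 3 High) := by
        rw [Finset.disjoint_left]
        intro S hS1 hS2
        obtain ⟨hsub1, hcard⟩ := Finset.mem_powersetCard.mp hS1
        obtain ⟨hsub2, -⟩ := Finset.mem_powersetCard.mp hS2
        have hSne : S.Nonempty := Finset.card_pos.mp (by omega)
        obtain ⟨x, hx⟩ := hSne
        have hx1 := hsub1 hx
        have hx2 := hsub2 hx
        rw [hLowdef, Finset.mem_filter] at hx1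
        rw [hHighdef, Finset.mem_filter] at hx2
        exact hx2.2 hx1.2
      have hcompl : (Finset.powersetCard 3 (Finset.univ : Finset (Fin n))).filter
          (fun S : Finset (Fin n) => ¬((∃ x ∈ S, (x:ℕ) < t) ∧ (∃ x ∈ S, ¬ (x:ℕ) < t))) =
          Finset.powersetCard 3 Low ∪ Finset.powersetCard 3 High := by
        ext S
        simp only [Finset.mem_filter, Finset.mem_powersetCard, Finset.mem_union]
        constructor
        · rintro ⟨⟨-, hcard⟩, hnp⟩
          by_cases hl : ∀ x ∈ S, (x:ℕ) < t
          · left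
            refine ⟨fun x hx => ?_, hcard⟩
            rw [hLowdef, Finset.mem_filter]
            exact ⟨Finset.mem_univ _, hl x hx⟩
          · push_neg at hl
            obtain ⟨x0, hx0S, hx0⟩ := hl
            right
            refine ⟨fun x hx => ?_, hcard⟩
            rw [hHighdef, Finset.mem_filter]
            refine ⟨Finset.mem_univ _, ?_⟩
            intro hxlt
            exact hnp ⟨⟨x, hx, hxlt⟩, ⟨x0, hx0S, not_lt.mpr hx0⟩⟩
        · rintro (⟨hsub, hcard⟩ | ⟨hsub, hcard⟩)
          · refine ⟨⟨Finset.subset_univ _, hcard⟩, ?_⟩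
            rintro ⟨-, ⟨x, hxS, hx⟩⟩
            have hxm := hsub hxS
            rw [hLowdef, Finset.mem_filter] at hxm
            exact hx hxm.2
          · refine ⟨⟨Finset.subset_univ _, hcard⟩, ?_⟩
            rintro ⟨⟨x, hxS, hx⟩, -⟩
            have hxm := hsub hxS
            rw [hHighdef, Finset.mem_filter] at hxm
            exact hxm.2 hx
      have hsplitcard := Finset.card_filter_add_card_filter_not
        (s := Finset.powersetCard 3 (Finset.univ : Finset (Fin n)))
        (p := fun S : Finset (Fin n) => (∃ x ∈ S, (x:ℕ) < t) ∧ (∃ x ∈ S, ¬ (x:ℕ) < t))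
      rw [hcompl, Finset.card_union_of_disjoint hdisjLH, ← hTdef,
        Finset.card_powersetCard, Finset.card_powersetCard, Finset.card_powersetCard,
        Finset.card_univ, Fintype.card_fin, hLowcard, hHighcard] at hsplitcard
      have e6 : 6 * T.card + (6 * Nat.choose t 3 + 6 * Nat.choose (n-t) 3)
          = 6 * Nat.choose n 3 := by
        rw [← hsplitcard]; ring
      rw [six_mul_choose_three t, six_mul_choose_three (n-t), six_mul_choose_three n] at e6
      have hid : n * (n-1) * (n-2) = t*(t-1)*(t-2) + (n-t)*(n-t-1)*(n-t-2)
          + 3 * (t * (n-t) * (n - 2)) := by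
        have hci := cube_identity (a := t) (b := n - t) ht (by omega)
        rw [show t + (n - t) = n by omega] at hci
        exact hci
      linarith [e6, hid]
    have hsum1 : P.card * (k - 2) ≤ T.card := by
      calc P.card * (k-2) = ∑ _p ∈ P, (k-2) := by rw [Finset.sum_const, smul_eq_mul]
        _ ≤ ∑ p ∈ P, (G p).card := Finset.sum_le_sum hGcard
        _ = (P.biUnion G).card := (Finset.card_biUnion hGdisj).symm
        _ ≤ T.card := Finset.card_le_card (Finset.biUnion_subset.mpr hGT)
    have hfinal : (t*(n-t)) * (6*(k-2)) ≤ (t*(n-t)) * (3*(n-2)) := by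
      calc (t*(n-t)) * (6*(k-2)) = 6 * (P.card * (k-2)) := by rw [hPcard]; ring
        _ ≤ 6 * T.card := Nat.mul_le_mul le_rfl hsum1
        _ = 3 * (t*(n-t)*(n-2)) := hTcard6
        _ = (t*(n-t)) * (3*(n-2)) := by ring
    have hpos : 0 < t * (n - t) := Nat.mul_pos (by omega) (by omega)
    have hkb := Nat.le_of_mul_le_mul_left hfinal hpos
    omega

  · -- degenerate case : n ≤ t, so Q' = ⊥ and Q ⊓ Q' = ⊥
    have hQ'rad : Q'.radical = ⊥ := by
      rw [hQ'r]
      have hempty : {i : Fin n | t ≤ (i : ℕ)} = ∅ := by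
        ext i
        simp only [Set.mem_setOf_eq, Set.mem_empty_iff_false, iff_false, not_le]
        exact lt_of_lt_of_le i.isLt htn
      rw [hempty, Set.image_empty, Ideal.span_empty]
    have hQ'bot : Q' = ⊥ := le_bot_iff.mp (hQ'rad ▸ Ideal.le_radical)
    have hIbot : Q ⊓ Q' = ⊥ := by rw [hQ'bot, inf_bot_eq]
    have hall : ∀ k : ℕ, k ∈ {k : ℕ | ∃ (s : ℕ) (u : Fin s → MvPolynomial (Fin n) K)
        (Z : Fin s → Finset (Fin n)), IsStanleyDecomp (Q ⊓ Q') u Z ∧ ∀ i, k ≤ (Z i).card} := by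
      intro k
      refine ⟨0, Fin.elim0, Fin.elim0, ⟨fun i => i.elim0, fun i => i.elim0, ?_⟩, fun i => i.elim0⟩
      rw [iSup_of_empty, hIbot]
      simp
    have hnb : ¬ BddAbove {k : ℕ | ∃ (s : ℕ) (u : Fin s → MvPolynomial (Fin n) K)
        (Z : Fin s → Finset (Fin n)), IsStanleyDecomp (Q ⊓ Q') u Z ∧ ∀ i, k ≤ (Z i).card} := by
      rintro ⟨m, hm⟩
      exact absurd (hm (hall (m+1))) (by omega)
    unfold sdepth
    rw [csSup_of_not_bddAbove hnb, csSup_empty]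
    simp
end

section
/- Let S = K[x_1,x_2,x_3,x_4]. Then sdepth((x_1,x_2) ∩ (x_3,x_4)) = 3; in particular (x_1,x_2) ∩ (x_3,x_4) = x_1x_3K[x_1,x_3,x_4] ⊕ x_1x_4K[x_1,x_2,x_4] ⊕ x_2x_3K[x_1,x_2,x_3] ⊕ x_2x_4K[x_2,x_3,x_4] ⊕ x_1x_2x_3x_4K[x_1,x_2,x_3,x_4] is a Stanley decomposition. -/
open MvPolynomial

variable {K : Type*} [Field K]

/-! ### Auxiliary machinery -/

/-- The submodule of polynomials whose support lies in `A`. -/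
def suppMod {n : ℕ} (A : Set (Fin n →₀ ℕ)) : Submodule K (MvPolynomial (Fin n) K) where
  carrier := {p | ∀ c ∈ p.support, c ∈ A}
  add_mem' := by
    classical
    intro p q hp hq c hc
    rcases Finset.mem_union.mp (MvPolynomial.support_add hc) with h | h
    · exact hp c h
    · exact hq c h
  zero_mem' := by simp
  smul_mem' := fun a p hp c hc => hp c (MvPolynomial.support_smul hc)

lemma mem_suppMod {n : ℕ} {A : Set (Fin n →₀ ℕ)} {p : MvPolynomial (Fin n) K} :
    p ∈ suppMod A ↔ ∀ c ∈ p.support, c ∈ A := Iff.rfl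

lemma suppMod_mono {n : ℕ} {A B : Set (Fin n →₀ ℕ)} (h : A ⊆ B) :
    suppMod (K := K) A ≤ suppMod B := fun _ hp c hc => h (hp c hc)

lemma monomial_mem_suppMod {n : ℕ} {A : Set (Fin n →₀ ℕ)} {c : Fin n →₀ ℕ} {a : K} (ha : a ≠ 0) :
    (monomial c a ∈ suppMod (K := K) A) ↔ c ∈ A := by
  classical
  rw [mem_suppMod]
  simp [MvPolynomial.support_monomial, ha]

lemma span_monomial_image {n : ℕ} (A : Set (Fin n →₀ ℕ)) :
    Submodule.span K ((fun c => monomial c (1 : K)) '' A) = suppMod A := by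
  classical
  apply le_antisymm
  · rw [Submodule.span_le]
    rintro w ⟨c, hc, rfl⟩
    exact (monomial_mem_suppMod one_ne_zero).mpr hc
  · intro p hp
    rw [← MvPolynomial.support_sum_monomial_coeff p]
    refine Submodule.sum_mem _ fun v hv => ?_
    have h1 : monomial v (MvPolynomial.coeff v p)
        = (MvPolynomial.coeff v p) • monomial v (1 : K) := by
      rw [MvPolynomial.smul_monomial, smul_eq_mul, mul_one]
    rw [h1]
    exact Submodule.smul_mem _ _ (Submodule.subset_span ⟨v, hp v hv, rfl⟩)

lemma disjoint_suppMod {n : ℕ} {A B : Set (Fin n →₀ ℕ)} (h : ∀ c, c ∈ A → c ∈ B → False) :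
    Disjoint (suppMod (K := K) A) (suppMod B) := by
  rw [Submodule.disjoint_def]
  intro p hA hB
  rw [← MvPolynomial.support_eq_empty, Finset.eq_empty_iff_forall_notMem]
  exact fun c hc => h c (hA c hc) (hB c hc)

lemma iSup_suppMod {n : ℕ} {ι : Sort*} (A : ι → Set (Fin n →₀ ℕ)) :
    (⨆ i, suppMod (K := K) (A i)) = suppMod (⋃ i, A i) := by
  classical
  apply le_antisymm
  · exact iSup_le fun i => suppMod_mono (Set.subset_iUnion A i)
  · intro p hp
    rw [← MvPolynomial.support_sum_monomial_coeff p]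
    refine Submodule.sum_mem _ fun v hv => ?_
    obtain ⟨i, hi⟩ := Set.mem_iUnion.mp (hp v hv)
    refine le_iSup (fun i => suppMod (K := K) (A i)) i ?_
    rw [mem_suppMod]
    intro c hc
    rw [MvPolynomial.support_monomial] at hc
    rcases Finset.mem_singleton.mp
      (by simpa [MvPolynomial.mem_support_iff.mp hv] using hc) with rfl
    exact hi

lemma suppMod_eq_iff {n : ℕ} {A B : Set (Fin n →₀ ℕ)}
    (h : suppMod (K := K) A = suppMod B) (c : Fin n →₀ ℕ) : c ∈ A ↔ c ∈ B := by
  rw [← monomial_mem_suppMod (a := (1 : K)) one_ne_zero, h,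
    monomial_mem_suppMod one_ne_zero]

lemma X_eq {n : ℕ} (i : Fin n) :
    (X i : MvPolynomial (Fin n) K) = monomial (Finsupp.single i 1) 1 := rfl

lemma stanleySpace_eq {n : ℕ} (e : Fin n →₀ ℕ) (Z : Finset (Fin n)) :
    stanleySpace (K := K) (monomial e 1) Z =
      suppMod {c | e ≤ c ∧ ∀ i, i ∉ Z → c i = e i} := by
  rw [stanleySpace, ← span_monomial_image]
  congr 1
  ext w
  simp only [Set.mem_setOf_eq, Set.mem_image]
  constructor
  · rintro ⟨d, hd, rfl⟩
    refine ⟨e + d, ⟨le_self_add, fun i hi => ?_⟩, by rw [MvPolynomial.monomial_mul, one_mul]⟩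
    have h0 : d i = 0 := by
      by_contra h
      exact hi (hd (Finset.mem_coe.mpr (Finsupp.mem_support_iff.mpr h)))
    simp [h0]
  · rintro ⟨c, ⟨hle, hz⟩, rfl⟩
    refine ⟨c - e, ?_, by rw [MvPolynomial.monomial_mul, one_mul, add_tsub_cancel_of_le hle]⟩
    intro i hi
    simp only [Finset.mem_coe, Finsupp.mem_support_iff, Finsupp.tsub_apply] at hi
    by_contra hiZ
    exact hi (by rw [hz i hiZ]; omega)

/-- The coefficient-set describing the ideal `(x₀,x₁) ∩ (x₂,x₃)`. -/
def QS : Set (Fin 4 →₀ ℕ) := {c | (1 ≤ c 0 ∨ 1 ≤ c 1) ∧ (1 ≤ c 2 ∨ 1 ≤ c 3)}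

lemma ideal_eq : Submodule.restrictScalars K
      (Ideal.span {(X 0 : MvPolynomial (Fin 4) K), X 1} ⊓ Ideal.span {X 2, X 3}) =
    suppMod QS := by
  have h1 : ({(X 0 : MvPolynomial (Fin 4) K), X 1} : Set _) =
      (fun s => monomial s (1 : K)) '' {Finsupp.single 0 1, Finsupp.single 1 1} := by
    rw [Set.image_pair, ← X_eq, ← X_eq]
  have h2 : ({(X 2 : MvPolynomial (Fin 4) K), X 3} : Set _) =
      (fun s => monomial s (1 : K)) '' {Finsupp.single 2 1, Finsupp.single 3 1} := by
    rw [Set.image_pair, ← X_eq, ← X_eq]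
  ext p
  rw [Submodule.restrictScalars_mem, Submodule.mem_inf, h1, h2,
    mem_ideal_span_monomial_image, mem_ideal_span_monomial_image]
  constructor
  · rintro ⟨ha, hb⟩ c hc
    obtain ⟨s, hs, hsle⟩ := ha c hc
    obtain ⟨t, ht, htle⟩ := hb c hc
    constructor
    · rcases hs with rfl | hs
      · exact Or.inl (Finsupp.single_le_iff.mp hsle)
      · rw [Set.mem_singleton_iff] at hs; subst hs
        exact Or.inr (Finsupp.single_le_iff.mp hsle)
    · rcases ht with rfl | ht
      · exact Or.inl (Finsupp.single_le_iff.mp htle)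
      · rw [Set.mem_singleton_iff] at ht; subst ht
        exact Or.inr (Finsupp.single_le_iff.mp htle)
  · intro h
    constructor <;> intro c hc
    · rcases (h c hc).1 with h0 | h0
      · exact ⟨Finsupp.single 0 1, by simp, Finsupp.single_le_iff.mpr h0⟩
      · exact ⟨Finsupp.single 1 1, by simp, Finsupp.single_le_iff.mpr h0⟩
    · rcases (h c hc).2 with h0 | h0
      · exact ⟨Finsupp.single 2 1, by simp, Finsupp.single_le_iff.mpr h0⟩
      · exact ⟨Finsupp.single 3 1, by simp, Finsupp.single_le_iff.mpr h0⟩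

lemma le4 {f g : Fin 4 →₀ ℕ} : f ≤ g ↔ f 0 ≤ g 0 ∧ f 1 ≤ g 1 ∧ f 2 ≤ g 2 ∧ f 3 ≤ g 3 := by
  rw [Finsupp.le_def]
  exact ⟨fun h => ⟨h 0, h 1, h 2, h 3⟩, by rintro ⟨h0, h1, h2, h3⟩ i; fin_cases i <;> assumption⟩

lemma eq4 {f g : Fin 4 →₀ ℕ} : f = g ↔ f 0 = g 0 ∧ f 1 = g 1 ∧ f 2 = g 2 ∧ f 3 = g 3 := by
  constructor
  · rintro rfl; exact ⟨rfl, rfl, rfl, rfl⟩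
  · rintro ⟨h0, h1, h2, h3⟩; ext i; fin_cases i <;> assumption

lemma pair_apply (a b i : Fin 4) :
    (Finsupp.single a 1 + Finsupp.single b 1 : Fin 4 →₀ ℕ) i =
      (if a = i then 1 else 0) + (if b = i then 1 else 0) := by
  simp [Finsupp.single_apply]

lemma quad_apply (i : Fin 4) :
    (Finsupp.single 0 1 + Finsupp.single 1 1 + Finsupp.single 2 1 + Finsupp.single 3 1 :
        Fin 4 →₀ ℕ) i =
      (if (0 : Fin 4) = i then 1 else 0) + (if (1 : Fin 4) = i then 1 else 0) +
      (if (2 : Fin 4) = i then 1 else 0) + (if (3 : Fin 4) = i then 1 else 0) := by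
  simp [Finsupp.single_apply]

/-- The five coefficient sets of the Stanley decomposition. -/
def SP : Fin 5 → Set (Fin 4 →₀ ℕ) :=
![{c | 1 ≤ c 0 ∧ c 1 = 0 ∧ 1 ≤ c 2},
  {c | 1 ≤ c 0 ∧ c 2 = 0 ∧ 1 ≤ c 3},
  {c | 1 ≤ c 1 ∧ 1 ≤ c 2 ∧ c 3 = 0},
  {c | c 0 = 0 ∧ 1 ≤ c 1 ∧ 1 ≤ c 3},
  {c | 1 ≤ c 0 ∧ 1 ≤ c 1 ∧ 1 ≤ c 2 ∧ 1 ≤ c 3}]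

lemma set0 : {c : Fin 4 →₀ ℕ | (Finsupp.single 0 1 + Finsupp.single 2 1 : Fin 4 →₀ ℕ) ≤ c ∧
    ∀ i, i ∉ ({0, 2, 3} : Finset (Fin 4)) →
      c i = (Finsupp.single 0 1 + Finsupp.single 2 1 : Fin 4 →₀ ℕ) i} = SP 0 := by
  ext c
  simp only [Set.mem_setOf_eq, le4, pair_apply, SP, Matrix.cons_val_zero]
  constructor
  · rintro ⟨⟨a0, a1, a2, a3⟩, hz⟩
    have h1 := hz 1 (by decide)
    simp at h1 a0 a2
    exact ⟨a0, h1, a2⟩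
  · rintro ⟨h0, h1, h2⟩
    constructor
    · exact ⟨by simpa using h0, by simp [h1], by simpa using h2, by simp⟩
    · intro i hi
      fin_cases i <;> simp_all

lemma set1 : {c : Fin 4 →₀ ℕ | (Finsupp.single 0 1 + Finsupp.single 3 1 : Fin 4 →₀ ℕ) ≤ c ∧
    ∀ i, i ∉ ({0, 1, 3} : Finset (Fin 4)) →
      c i = (Finsupp.single 0 1 + Finsupp.single 3 1 : Fin 4 →₀ ℕ) i} = SP 1 := by
  ext c
  simp only [Set.mem_setOf_eq, le4, pair_apply, SP, Matrix.cons_val_one, Matrix.head_cons]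
  constructor
  · rintro ⟨⟨a0, a1, a2, a3⟩, hz⟩
    have h1 := hz 2 (by decide)
    simp at h1 a0 a3
    exact ⟨a0, h1, a3⟩
  · rintro ⟨h0, h1, h2⟩
    constructor
    · exact ⟨by simpa using h0, by simp, by simp [h1], by simpa using h2⟩
    · intro i hi
      fin_cases i <;> simp_all

lemma set2 : {c : Fin 4 →₀ ℕ | (Finsupp.single 1 1 + Finsupp.single 2 1 : Fin 4 →₀ ℕ) ≤ c ∧
    ∀ i, i ∉ ({0, 1, 2} : Finset (Fin 4)) →
      c i = (Finsupp.single 1 1 + Finsupp.single 2 1 : Fin 4 →₀ ℕ) i} = SP 2 := by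
  ext c
  simp only [Set.mem_setOf_eq, le4, pair_apply, SP, Matrix.cons_val_two, Matrix.tail_cons,
    Matrix.head_cons]
  constructor
  · rintro ⟨⟨a0, a1, a2, a3⟩, hz⟩
    have h1 := hz 3 (by decide)
    simp at h1 a1 a2
    exact ⟨a1, a2, h1⟩
  · rintro ⟨h0, h1, h2⟩
    constructor
    · exact ⟨by simp, by simpa using h0, by simpa using h1, by simp [h2]⟩
    · intro i hi
      fin_cases i <;> simp_all

lemma set3 : {c : Fin 4 →₀ ℕ | (Finsupp.single 1 1 + Finsupp.single 3 1 : Fin 4 →₀ ℕ) ≤ c ∧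
    ∀ i, i ∉ ({1, 2, 3} : Finset (Fin 4)) →
      c i = (Finsupp.single 1 1 + Finsupp.single 3 1 : Fin 4 →₀ ℕ) i} = SP 3 := by
  ext c
  simp only [Set.mem_setOf_eq, le4, pair_apply, SP, Matrix.cons_val_three, Matrix.tail_cons,
    Matrix.head_cons]
  constructor
  · rintro ⟨⟨a0, a1, a2, a3⟩, hz⟩
    have h1 := hz 0 (by decide)
    simp at h1 a1 a3
    exact ⟨h1, a1, a3⟩
  · rintro ⟨h0, h1, h2⟩
    constructor
    · exact ⟨by simp [h0], by simpa using h1, by simp, by simpa using h2⟩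
    · intro i hi
      fin_cases i <;> simp_all

lemma set4 : {c : Fin 4 →₀ ℕ |
    (Finsupp.single 0 1 + Finsupp.single 1 1 + Finsupp.single 2 1 + Finsupp.single 3 1 :
      Fin 4 →₀ ℕ) ≤ c ∧
    ∀ i, i ∉ ({0, 1, 2, 3} : Finset (Fin 4)) →
      c i = (Finsupp.single 0 1 + Finsupp.single 1 1 + Finsupp.single 2 1 + Finsupp.single 3 1 :
        Fin 4 →₀ ℕ) i} = SP 4 := by
  ext c
  simp only [Set.mem_setOf_eq, le4, quad_apply, SP, Matrix.cons_val_four, Matrix.tail_cons,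
    Matrix.head_cons]
  constructor
  · rintro ⟨⟨a0, a1, a2, a3⟩, _⟩
    exact ⟨by simpa using a0, by simpa using a1, by simpa using a2, by simpa using a3⟩
  · rintro ⟨h0, h1, h2, h3⟩
    constructor
    · exact ⟨by simpa using h0, by simpa using h1, by simpa using h2, by simpa using h3⟩
    · intro i hi
      fin_cases i <;> simp_all

lemma cover (c : Fin 4 →₀ ℕ) : (∃ i : Fin 5, c ∈ SP i) ↔ c ∈ QS := by
  have h5 : (∃ i : Fin 5, c ∈ SP i) ↔
      (c ∈ SP 0 ∨ c ∈ SP 1 ∨ c ∈ SP 2 ∨ c ∈ SP 3 ∨ c ∈ SP 4) := by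
    constructor
    · rintro ⟨i, hi⟩; fin_cases i <;> tauto
    · rintro (h | h | h | h | h) <;>
        [exact ⟨0, h⟩; exact ⟨1, h⟩; exact ⟨2, h⟩; exact ⟨3, h⟩; exact ⟨4, h⟩]
  rw [h5]
  simp only [SP, QS, Matrix.cons_val_zero, Matrix.cons_val_one, Matrix.head_cons,
    Set.mem_setOf_eq, Matrix.cons_val_two, Matrix.tail_cons, Matrix.cons_val_three,
    Matrix.cons_val_four]
  omega

lemma pairwise_disj (i j : Fin 5) (hij : i ≠ j) (c : Fin 4 →₀ ℕ)
    (hi : c ∈ SP i) (hj : c ∈ SP j) : False := by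
  fin_cases i <;> fin_cases j <;>
    first
      | exact hij rfl
      | (simp [SP] at hi hj; omega)

lemma u0_eq : (X 0 * X 2 : MvPolynomial (Fin 4) K) =
    monomial (Finsupp.single 0 1 + Finsupp.single 2 1) 1 := by
  rw [X_eq, X_eq, MvPolynomial.monomial_mul, one_mul]

lemma u1_eq : (X 0 * X 3 : MvPolynomial (Fin 4) K) =
    monomial (Finsupp.single 0 1 + Finsupp.single 3 1) 1 := by
  rw [X_eq, X_eq, MvPolynomial.monomial_mul, one_mul]

lemma u2_eq : (X 1 * X 2 : MvPolynomial (Fin 4) K) =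
    monomial (Finsupp.single 1 1 + Finsupp.single 2 1) 1 := by
  rw [X_eq, X_eq, MvPolynomial.monomial_mul, one_mul]

lemma u3_eq : (X 1 * X 3 : MvPolynomial (Fin 4) K) =
    monomial (Finsupp.single 1 1 + Finsupp.single 3 1) 1 := by
  rw [X_eq, X_eq, MvPolynomial.monomial_mul, one_mul]

lemma u4_eq : (X 0 * X 1 * X 2 * X 3 : MvPolynomial (Fin 4) K) =
    monomial (Finsupp.single 0 1 + Finsupp.single 1 1 + Finsupp.single 2 1 +
      Finsupp.single 3 1) 1 := by
  rw [X_eq, X_eq, X_eq, X_eq, MvPolynomial.monomial_mul, MvPolynomial.monomial_mul,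
    MvPolynomial.monomial_mul, one_mul, one_mul, one_mul]

lemma sp_eq0 : stanleySpace (K := K) (X 0 * X 2) ({0, 2, 3} : Finset (Fin 4)) = suppMod (SP 0) := by
  rw [u0_eq, stanleySpace_eq, set0]

lemma sp_eq1 : stanleySpace (K := K) (X 0 * X 3) ({0, 1, 3} : Finset (Fin 4)) = suppMod (SP 1) := by
  rw [u1_eq, stanleySpace_eq, set1]

lemma sp_eq2 : stanleySpace (K := K) (X 1 * X 2) ({0, 1, 2} : Finset (Fin 4)) = suppMod (SP 2) := by
  rw [u2_eq, stanleySpace_eq, set2]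

lemma sp_eq3 : stanleySpace (K := K) (X 1 * X 3) ({1, 2, 3} : Finset (Fin 4)) = suppMod (SP 3) := by
  rw [u3_eq, stanleySpace_eq, set3]

lemma sp_eq4 : stanleySpace (K := K) (X 0 * X 1 * X 2 * X 3) ({0, 1, 2, 3} : Finset (Fin 4)) =
    suppMod (SP 4) := by
  rw [u4_eq, stanleySpace_eq, set4]

lemma hfun_eq : (fun i => stanleySpace (K := K)
      ((![X 0 * X 2, X 0 * X 3, X 1 * X 2, X 1 * X 3, X 0 * X 1 * X 2 * X 3] :
        Fin 5 → MvPolynomial (Fin 4) K) i)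
      ((![{0, 2, 3}, {0, 1, 3}, {0, 1, 2}, {1, 2, 3}, {0, 1, 2, 3}] :
        Fin 5 → Finset (Fin 4)) i)) = fun i => suppMod (SP i) := by
  funext i
  fin_cases i
  · exact sp_eq0
  · exact sp_eq1
  · exact sp_eq2
  · exact sp_eq3
  · exact sp_eq4

lemma main_decomp :
    IsStanleyDecomp (Ideal.span {(X 0 : MvPolynomial (Fin 4) K), X 1} ⊓ Ideal.span {X 2, X 3})
      ![X 0 * X 2, X 0 * X 3, X 1 * X 2, X 1 * X 3, X 0 * X 1 * X 2 * X 3]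
      ![{0, 2, 3}, {0, 1, 3}, {0, 1, 2}, {1, 2, 3}, {0, 1, 2, 3}] := by
  refine ⟨?_, ?_, ?_⟩
  · intro i
    fin_cases i
    · exact ⟨_, u0_eq⟩
    · exact ⟨_, u1_eq⟩
    · exact ⟨_, u2_eq⟩
    · exact ⟨_, u3_eq⟩
    · exact ⟨_, u4_eq⟩
  · rw [hfun_eq]
    intro i
    have hle : (⨆ j, ⨆ _ : j ≠ i, suppMod (K := K) (SP j)) ≤
        suppMod {c | ∃ j, j ≠ i ∧ c ∈ SP j} :=
      iSup₂_le fun j hj => suppMod_mono fun c hc => ⟨j, hj, hc⟩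
    exact (disjoint_suppMod fun c hci h => by
      obtain ⟨j, hj, hcj⟩ := h
      exact pairwise_disj j i hj c hcj hci).mono_right hle
  · rw [hfun_eq, iSup_suppMod, ideal_eq]
    congr 1
    ext c
    rw [Set.mem_iUnion, cover c]

lemma bound_three (k : ℕ)
    (hk : k ∈ { k | ∃ (s : ℕ) (u : Fin s → MvPolynomial (Fin 4) K)
      (Z : Fin s → Finset (Fin 4)),
      IsStanleyDecomp (Ideal.span {(X 0 : MvPolynomial (Fin 4) K), X 1} ⊓ Ideal.span {X 2, X 3})
        u Z ∧ ∀ i, k ≤ (Z i).card }) : k ≤ 3 := by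
  obtain ⟨s, u, Z, ⟨hmon, hindep, hsup⟩, hcard⟩ := hk
  by_contra hk3
  push_neg at hk3
  have hZ : ∀ i, Z i = Finset.univ := by
    intro i
    refine Finset.eq_univ_of_card _ (le_antisymm (by simpa using Finset.card_le_univ (Z i)) ?_)
    calc (4 : ℕ) ≤ k := by omega
      _ ≤ (Z i).card := hcard i
  choose E hE using hmon
  have hsp : (fun i => stanleySpace (u i) (Z i)) =
      fun i => suppMod (K := K) {c | E i ≤ c} := by
    funext i
    rw [hE i, hZ i, stanleySpace_eq]
    congr 1
    ext c
    simp
  have h2 : suppMod (K := K) (⋃ i, {c | E i ≤ c}) = suppMod QS := by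
    rw [← iSup_suppMod]
    calc (⨆ i, suppMod (K := K) {c | E i ≤ c})
        = ⨆ i, stanleySpace (u i) (Z i) := by rw [hsp]
      _ = Submodule.restrictScalars K _ := hsup
      _ = suppMod QS := ideal_eq
  have key : ∀ c, (∃ i, E i ≤ c) ↔ c ∈ QS := fun c => by
    have := suppMod_eq_iff h2 c
    simpa [Set.mem_iUnion] using this
  have hEQ : ∀ i, E i ∈ QS := fun i => (key (E i)).mp ⟨i, le_rfl⟩
  have g13Q : (Finsupp.single 0 1 + Finsupp.single 2 1 : Fin 4 →₀ ℕ) ∈ QS := by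
    constructor
    · left; simp [pair_apply]
    · left; simp [pair_apply]
  have g24Q : (Finsupp.single 1 1 + Finsupp.single 3 1 : Fin 4 →₀ ℕ) ∈ QS := by
    constructor
    · right; simp [pair_apply]
    · right; simp [pair_apply]
  obtain ⟨i, hi⟩ := (key _).mpr g13Q
  obtain ⟨j, hj⟩ := (key _).mpr g24Q
  have hEi : E i = Finsupp.single 0 1 + Finsupp.single 2 1 := by
    obtain ⟨q1, q2⟩ := hEQ i
    rw [le4] at hi
    simp only [pair_apply] at hi
    simp at hi
    rw [eq4]
    refine ⟨?_, ?_, ?_, ?_⟩ <;> simp [pair_apply] <;> omega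
  have hEj : E j = Finsupp.single 1 1 + Finsupp.single 3 1 := by
    obtain ⟨q1, q2⟩ := hEQ j
    rw [le4] at hj
    simp only [pair_apply] at hj
    simp at hj
    rw [eq4]
    refine ⟨?_, ?_, ?_, ?_⟩ <;> simp [pair_apply] <;> omega
  have hij : j ≠ i := by
    intro h
    subst h
    have : (Finsupp.single 0 1 + Finsupp.single 2 1 : Fin 4 →₀ ℕ) =
        Finsupp.single 1 1 + Finsupp.single 3 1 := hEi.symm.trans hEj
    have h0 := DFunLike.congr_fun this 0
    simp [pair_apply] at h0
  -- the all-ones exponent lies in both Stanley spaces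
  set w : Fin 4 →₀ ℕ := Finsupp.single 0 1 + Finsupp.single 2 1 +
    (Finsupp.single 1 1 + Finsupp.single 3 1) with hw
  have hwc : w 0 = 1 ∧ w 1 = 1 ∧ w 2 = 1 ∧ w 3 = 1 := by
    refine ⟨?_, ?_, ?_, ?_⟩ <;> simp [hw, Finsupp.add_apply, pair_apply]
  obtain ⟨hwc0, hwc1, hwc2, hwc3⟩ := hwc
  have hwi : monomial w (1 : K) ∈ suppMod {c | E i ≤ c} := by
    refine (monomial_mem_suppMod one_ne_zero).mpr ?_
    rw [Set.mem_setOf_eq, hEi, le4, hwc0, hwc1, hwc2, hwc3]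
    simp [pair_apply]
  have hwj : monomial w (1 : K) ∈ suppMod {c | E j ≤ c} := by
    refine (monomial_mem_suppMod one_ne_zero).mpr ?_
    rw [Set.mem_setOf_eq, hEj, le4, hwc0, hwc1, hwc2, hwc3]
    simp [pair_apply]
  rw [hsp] at hindep
  have hd := hindep i
  have hsub : suppMod (K := K) {c | E j ≤ c} ≤
      ⨆ k, ⨆ _ : k ≠ i, suppMod (K := K) {c | E k ≤ c} :=
    le_iSup₂ (f := fun k (_ : k ≠ i) => suppMod (K := K) {c | E k ≤ c}) j hij
  have h0 : monomial w (1 : K) = 0 :=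
    Submodule.disjoint_def.mp hd _ hwi (hsub hwj)
  exact one_ne_zero (MvPolynomial.monomial_eq_zero.mp h0)

/-- In `S = K[x_1,x_2,x_3,x_4]`, `sdepth((x_1,x_2) ∩ (x_3,x_4)) = 3`; in
particular `(x_1,x_2) ∩ (x_3,x_4) = x_1x_3K[x_1,x_3,x_4] ⊕ x_1x_4K[x_1,x_2,x_4] ⊕
x_2x_3K[x_1,x_2,x_3] ⊕ x_2x_4K[x_2,x_3,x_4] ⊕ x_1x_2x_3x_4K[x_1,x_2,x_3,x_4]`
is a Stanley decomposition. -/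
theorem sdepth_inter_two_two_eq_three :
    sdepth (Ideal.span {(X 0 : MvPolynomial (Fin 4) K), X 1} ⊓ Ideal.span {X 2, X 3}) = 3 ∧
    IsStanleyDecomp (Ideal.span {(X 0 : MvPolynomial (Fin 4) K), X 1} ⊓ Ideal.span {X 2, X 3})
      ![X 0 * X 2, X 0 * X 3, X 1 * X 2, X 1 * X 3, X 0 * X 1 * X 2 * X 3]
      ![{0, 2, 3}, {0, 1, 3}, {0, 1, 2}, {1, 2, 3}, {0, 1, 2, 3}] := by
  have hmem3 : (3 : ℕ) ∈ { k | ∃ (s : ℕ) (u : Fin s → MvPolynomial (Fin 4) K)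
      (Z : Fin s → Finset (Fin 4)),
      IsStanleyDecomp (Ideal.span {(X 0 : MvPolynomial (Fin 4) K), X 1} ⊓ Ideal.span {X 2, X 3})
        u Z ∧ ∀ i, 3 ≤ (Z i).card } :=
    ⟨5, _, _, main_decomp, by intro i; fin_cases i <;> decide⟩
  refine ⟨?_, main_decomp⟩
  rw [sdepth]
  exact le_antisymm (csSup_le ⟨3, hmem3⟩ fun k hk => bound_three k hk)
    (le_csSup ⟨3, fun k hk => bound_three k hk⟩ hmem3)
end
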